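/- arXiv:1701.06954 — 8 statements merged into one kernel-verified Lean document; each statement's English description precedes it below -/
import Mathlib

section
/- For a finite permutation group G on a set of size n, F_G(2) ≥ (n+1)·|G|, with equality if and only if G is transitive on the set of i-element subsets of Ω for every 0 ≤ i ≤ n. -/
open Polynomial

open scoped Classical

noncomputable section

/-- The number of cycles (including fixed points) of a permutation `g` on `Ω`. -/
def cycleCount {Ω : Type*} [Fintype Ω] (g : Equiv.Perm Ω) : ℕ :=
  Nat.card (MulAction.orbitRel.Quotient (Subgroup.zpowers g) Ω)

/-- The cycle polynomial `F_G(x) = ∑_{g ∈ G} x^{c(g)}`. -/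
def cyclePoly {Ω : Type*} [Fintype Ω] (G : Subgroup (Equiv.Perm Ω)) : Polynomial ℤ :=
  ∑ g : G, (X : Polynomial ℤ) ^ cycleCount (g : Equiv.Perm Ω)

open scoped Pointwise

section Aux

variable {Ω : Type*} [Fintype Ω]

/-- The number of subsets fixed by a permutation is `2 ^ cycleCount g`. -/
lemma card_fixedBy_eq (g : Equiv.Perm Ω) :
    Fintype.card (MulAction.fixedBy (Finset Ω) g) = 2 ^ cycleCount g := by
  set H := Subgroup.zpowers g
  set Q := MulAction.orbitRel.Quotient H Ω
  let π : Ω → Q := Quotient.mk''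
  have hπ : ∀ (h : Equiv.Perm Ω), h ∈ H → ∀ x : Ω, π (h • x) = π x := by
    intro h hm x
    exact Quotient.sound' ⟨⟨h, hm⟩, rfl⟩
  have key : ∀ s : Finset Ω, g • s = s → ∀ x y : Ω, y ∈ s → π x = π y → x ∈ s := by
    intro s hs x y hy hxy
    have hst : H ≤ MulAction.stabilizer (Equiv.Perm Ω) s :=
      Subgroup.zpowers_le.mpr hs
    obtain ⟨h, hh⟩ : x ∈ MulAction.orbit H y := Quotient.exact' hxy
    have h1 : (h : Equiv.Perm Ω) • s = s := hst h.2
    have h2 : (h : Equiv.Perm Ω) • y ∈ (h : Equiv.Perm Ω) • s :=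
      Finset.smul_mem_smul_finset hy
    rw [h1] at h2
    have h3 : (h : Equiv.Perm Ω) • y = x := hh
    rwa [h3] at h2
  let e : MulAction.fixedBy (Finset Ω) g ≃ Finset Q :=
    { toFun := fun s => (s : Finset Ω).image π
      invFun := fun A => ⟨Finset.univ.filter (fun x => π x ∈ A), by
        simp only [MulAction.mem_fixedBy]
        ext x
        simp only [Finset.mem_smul_finset, Finset.mem_filter, Finset.mem_univ, true_and]
        constructor
        · rintro ⟨y, hy, rfl⟩
          rw [hπ g (Subgroup.mem_zpowers g)]; exact hy
        · intro hx
          refine ⟨g⁻¹ • x, ?_, by simp⟩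
          rwa [hπ g⁻¹ (Subgroup.inv_mem _ (Subgroup.mem_zpowers g)) x]⟩
      left_inv := by
        rintro ⟨s, hs⟩
        ext x
        simp only [Finset.mem_filter, Finset.mem_univ, true_and, Finset.mem_image]
        constructor
        · rintro ⟨y, hy, hxy⟩; exact key s hs x y hy hxy.symm
        · intro hx; exact ⟨x, hx, rfl⟩
      right_inv := by
        intro A
        ext q
        simp only [Finset.mem_image, Finset.mem_filter, Finset.mem_univ, true_and]
        constructor
        · rintro ⟨y, hy, rfl⟩; exact hy
        · intro hq
          obtain ⟨x, rfl⟩ := Quotient.exists_rep q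
          exact ⟨x, hq, rfl⟩ }
  rw [Fintype.card_congr e, Fintype.card_finset, cycleCount, Nat.card_eq_fintype_card]

end Aux

theorem cyclePoly_eval_two {Ω : Type*} [Fintype Ω] (G : Subgroup (Equiv.Perm Ω)) :
    ((Fintype.card Ω + 1 : ℤ) * Fintype.card G ≤ (cyclePoly G).eval 2) ∧
    ((cyclePoly G).eval 2 = (Fintype.card Ω + 1 : ℤ) * Fintype.card G ↔
      ∀ s t : Finset Ω, s.card = t.card →
        ∃ g ∈ G, s.image (g : Equiv.Perm Ω) = t) := by
  classical
  set n := Fintype.card Ω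
  -- the orbit space of G acting on subsets
  set QF := MulAction.orbitRel.Quotient G (Finset Ω) with hQF
  -- evaluate the polynomial via Burnside
  have heval : (cyclePoly G).eval 2 = ((Fintype.card QF * Fintype.card G : ℕ) : ℤ) := by
    have hb := MulAction.sum_card_fixedBy_eq_card_orbits_mul_card_group G (Finset Ω)
    rw [cyclePoly]
    simp only [eval_finset_sum, eval_pow, eval_X]
    have : ∀ g : G, (2 : ℤ) ^ cycleCount (g : Equiv.Perm Ω)
        = ((Fintype.card (MulAction.fixedBy (Finset Ω) g) : ℕ) : ℤ) := by
      intro g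
      have hfix : MulAction.fixedBy (Finset Ω) g
          = MulAction.fixedBy (Finset Ω) (g : Equiv.Perm Ω) := rfl
      rw [Fintype.card_congr (Equiv.setCongr hfix), card_fixedBy_eq]
      push_cast
      ring
    rw [Finset.sum_congr rfl (fun g _ => this g)]
    rw [← Nat.cast_sum]
    exact_mod_cast congrArg (Nat.cast : ℕ → ℤ) hb
  -- the cardinality map on orbits
  have hcard_le : ∀ s : Finset Ω, s.card ≤ n := fun s => Finset.card_le_univ s
  have hinv : ∀ (s t : Finset Ω), (MulAction.orbitRel G (Finset Ω)).r s t → s.card = t.card := by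
    rintro s t ⟨g, rfl⟩
    show (g • t).card = t.card
    rw [Finset.smul_finset_def]
    exact Finset.card_image_of_injective _ (MulAction.injective _)
  let c : QF → Fin (n + 1) :=
    Quotient.lift (fun s : Finset Ω => (⟨s.card, Nat.lt_succ_of_le (hcard_le s)⟩ : Fin (n + 1)))
      (fun s t h => Fin.ext (hinv s t h))
  have hsurj : Function.Surjective c := by
    rintro ⟨i, hi⟩
    obtain ⟨s, -, hs⟩ := Finset.exists_subset_card_eq (s := (Finset.univ : Finset Ω))
      (by simpa using Nat.lt_succ_iff.mp hi)
    exact ⟨Quotient.mk'' s, Fin.ext hs⟩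
  have hle : n + 1 ≤ Fintype.card QF := by
    simpa using Fintype.card_le_of_surjective c hsurj
  -- the orbit condition
  have horb : ∀ s t : Finset Ω,
      ((Quotient.mk'' s : QF) = Quotient.mk'' t ↔ ∃ g ∈ G, s.image (g : Equiv.Perm Ω) = t) := by
    intro s t
    constructor
    · intro h
      obtain ⟨g, hg⟩ := Quotient.exact' h
      have hg' : g • t = s := hg
      refine ⟨(↑g)⁻¹, Subgroup.inv_mem _ g.2, ?_⟩
      have h2 : g⁻¹ • s = t := by rw [← hg', inv_smul_smul]
      calc s.image ⇑(↑g : Equiv.Perm Ω)⁻¹ = g⁻¹ • s := rfl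
        _ = t := h2
    · rintro ⟨g, hg, hst⟩
      refine Quotient.sound' ⟨(⟨g, hg⟩ : G)⁻¹, ?_⟩
      have h1 : (⟨g, hg⟩ : G) • s = t := hst
      show (⟨g, hg⟩ : G)⁻¹ • t = s
      rw [← h1, inv_smul_smul]
  have hGpos : 0 < Fintype.card G := Fintype.card_pos
  constructor
  · rw [heval]
    have : (n + 1) * Fintype.card G ≤ Fintype.card QF * Fintype.card G :=
      Nat.mul_le_mul_right _ hle
    exact_mod_cast this
  · rw [heval]
    have hcast : (((Fintype.card QF * Fintype.card G : ℕ)) : ℤ)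
        = ((n : ℤ) + 1) * Fintype.card G ↔ Fintype.card QF = n + 1 := by
      constructor
      · intro h
        have : (Fintype.card QF : ℤ) * Fintype.card G = ((n : ℤ) + 1) * Fintype.card G := by
          push_cast at h ⊢; linarith
        have := mul_right_cancel₀ (by exact_mod_cast hGpos.ne') this
        exact_mod_cast this
      · intro h; rw [h]; push_cast; ring
    rw [hcast]
    constructor
    · intro hcards s t hst
      have hbij : Function.Bijective c :=
        (Fintype.bijective_iff_surjective_and_card c).mpr ⟨hsurj, by simp [hcards]⟩
      have hc : c (Quotient.mk'' s) = c (Quotient.mk'' t) := Fin.ext hst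
      exact (horb s t).mp (hbij.1 hc)
    · intro hcond
      have hinj : Function.Injective c := by
        intro q1 q2 h
        obtain ⟨s, rfl⟩ := Quotient.exists_rep q1
        obtain ⟨t, rfl⟩ := Quotient.exists_rep q2
        have hst : s.card = t.card := congrArg Fin.val h
        exact (horb s t).mpr (hcond s t hst)
      have := Fintype.card_of_bijective ⟨hinj, hsurj⟩
      simpa using this
end
end

section
/- Let G be a finite permutation group of degree n containing odd permutations, and let N be its index-2 subgroup of even permutations. Then for any positive integer a, 0 ≤ (-1)^n F_G(-a) < F_G(a), with equality on the left if and only if G and N have the same number of orbits on colourings of Ω with a colours. -/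
open Polynomial

open scoped Classical

noncomputable section

attribute [local instance] arrowAction

namespace CycleAux

open Equiv MulAction

variable {Ω : Type*} [Fintype Ω] [DecidableEq Ω]

lemma orbitRel_zpowers_iff (g : Equiv.Perm Ω) (x y : Ω) :
    MulAction.orbitRel (Subgroup.zpowers g) Ω x y ↔ g.SameCycle y x := by
  rw [MulAction.orbitRel_apply]
  constructor
  · rintro ⟨⟨u, k, rfl⟩, rfl⟩
    exact ⟨k, rfl⟩
  · rintro ⟨k, rfl⟩
    exact ⟨⟨g ^ k, k, rfl⟩, rfl⟩

/-- The map from the orbit quotient of `zpowers g` to fixed points plus cycles. -/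
def toSum (g : Equiv.Perm Ω) :
    MulAction.orbitRel.Quotient (Subgroup.zpowers g) Ω →
      (Function.fixedPoints ⇑g) ⊕ {c // c ∈ g.cycleFactorsFinset} :=
  Quotient.lift
    (fun x => if h : g x = x then Sum.inl ⟨x, h⟩
      else Sum.inr ⟨g.cycleOf x,
        Equiv.Perm.cycleOf_mem_cycleFactorsFinset_iff.2 (Equiv.Perm.mem_support.2 h)⟩)
    (by
      intro x y hxy
      have hs : g.SameCycle y x := (orbitRel_zpowers_iff g x y).1 hxy
      obtain ⟨k, hk⟩ := hs
      by_cases hy : g y = y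
      · have hx : (g ^ k) y = y := Equiv.Perm.zpow_apply_eq_self_of_apply_eq_self hy k
        rw [← hk, hx]
      · have hx : ¬ g x = x := by
          intro hfix
          have h1 : (g ^ (-k)) x = x := Equiv.Perm.zpow_apply_eq_self_of_apply_eq_self hfix (-k)
          have h2 : (g ^ (-k)) x = y := by
            rw [← hk, ← Equiv.Perm.mul_apply, ← zpow_add]
            simp
          have hxy' : y = x := by rw [← h2, h1]
          exact hy (by rw [hxy']; exact hfix)
        rw [dif_neg hx, dif_neg hy]
        congr 1
        exact Subtype.ext ((Equiv.Perm.SameCycle.cycleOf_eq ⟨k, hk⟩).symm))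

lemma toSum_bijective (g : Equiv.Perm Ω) : Function.Bijective (toSum g) := by
  constructor
  · intro q1 q2
    refine Quotient.inductionOn₂ q1 q2 ?_
    intro x y h
    unfold toSum at h
    rw [Quotient.lift_mk, Quotient.lift_mk] at h
    split_ifs at h with h1 h2 h2
    · apply Quotient.sound
      have : x = y := congrArg Subtype.val (Sum.inl.inj h)
      rw [this]
    · have hcyc : g.cycleOf x = g.cycleOf y := congrArg Subtype.val (Sum.inr.inj h)
      have hy : y ∈ (g.cycleOf x).support := by
        rw [hcyc, Equiv.Perm.mem_support_cycleOf_iff]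
        exact ⟨Equiv.Perm.SameCycle.refl _ _, Equiv.Perm.mem_support.2 h2⟩
      have hsc : g.SameCycle x y := ((Equiv.Perm.mem_support_cycleOf_iff).1 hy).1
      exact Quotient.sound ((orbitRel_zpowers_iff g x y).2 hsc.symm)
  · rintro (⟨x, hx⟩ | ⟨c, hc⟩)
    · refine ⟨Quotient.mk _ x, ?_⟩
      unfold toSum
      rw [Quotient.lift_mk]
      exact dif_pos hx
    · have hc' := (Equiv.Perm.mem_cycleFactorsFinset_iff.1 hc)
      obtain ⟨x, hx1, hx2⟩ := hc'.1
      have hxc : x ∈ c.support := Equiv.Perm.mem_support.2 hx1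
      have hgx : g x ≠ x := by
        rw [← hc'.2 x hxc]
        exact hx1
      refine ⟨Quotient.mk _ x, ?_⟩
      unfold toSum
      rw [Quotient.lift_mk]
      rw [dif_neg hgx]
      congr 1
      exact Subtype.ext (Equiv.Perm.cycle_is_cycleOf hxc hc).symm

lemma cycleCount_eq (g : Equiv.Perm Ω) :
    cycleCount g = (Fintype.card Ω - g.cycleType.sum) + Multiset.card g.cycleType := by
  unfold cycleCount
  rw [Nat.card_congr (Equiv.ofBijective _ (toSum_bijective g)), Nat.card_sum]
  congr 1
  · rw [Nat.card_eq_fintype_card, Equiv.Perm.card_fixedPoints]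
  · rw [Nat.card_eq_fintype_card, Fintype.card_coe, Equiv.Perm.cycleType,
      Multiset.card_map]
    rfl

lemma sign_eq_pow (g : Equiv.Perm Ω) :
    Equiv.Perm.sign g = (-1 : ℤˣ) ^ (Fintype.card Ω + cycleCount g) := by
  rw [Equiv.Perm.sign_of_cycleType, cycleCount_eq]
  have hle : g.cycleType.sum ≤ Fintype.card Ω := by
    rw [Equiv.Perm.sum_cycleType]
    exact g.support.card_le_univ
  obtain ⟨m, hm⟩ := Nat.exists_eq_add_of_le hle
  rw [show Fintype.card Ω + ((Fintype.card Ω - g.cycleType.sum) + Multiset.card g.cycleType)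
      = (g.cycleType.sum + Multiset.card g.cycleType) + 2 * m by omega]
  simp [pow_add, pow_mul]

lemma apply_zpow {β : Type*} (g : Equiv.Perm Ω) (f : Ω → β) (hf : ∀ x, f (g x) = f x)
    (k : ℤ) : ∀ x, f ((g ^ k) x) = f x := by
  have hinv : ∀ x, f (g⁻¹ x) = f x := by
    intro x
    conv_rhs => rw [← (show g (g⁻¹ x) = x from g.apply_symm_apply x)]
    rw [hf]
  induction k using Int.induction_on with
  | zero => simp
  | succ n ih =>
      intro x
      rw [zpow_add_one, Equiv.Perm.mul_apply, ih, hf]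
  | pred n ih =>
      intro x
      rw [zpow_sub_one, Equiv.Perm.mul_apply, ih, hinv]

lemma card_fixed_colourings (g : Equiv.Perm Ω) (a : ℕ) :
    Nat.card {f : Ω → Fin a // ∀ x, f (g x) = f x} = a ^ cycleCount g := by
  have e : {f : Ω → Fin a // ∀ x, f (g x) = f x} ≃
      (MulAction.orbitRel.Quotient (Subgroup.zpowers g) Ω → Fin a) :=
  { toFun := fun f => Quotient.lift f.1 (by
      intro x y hxy
      obtain ⟨k, hk⟩ := (orbitRel_zpowers_iff g x y).1 hxy
      rw [← hk]
      exact apply_zpow g f.1 f.2 k y)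
    invFun := fun h => ⟨fun x => h (Quotient.mk _ x), fun x =>
      congrArg h (Quotient.sound ((orbitRel_zpowers_iff g (g x) x).2 ⟨1, by simp⟩))⟩
    left_inv := fun f => Subtype.ext (funext fun x => rfl)
    right_inv := fun h => funext fun q => Quotient.inductionOn q (fun x => rfl) }
  rw [Nat.card_congr e, Nat.card_fun]
  simp [cycleCount]

lemma fixedBy_card (H : Subgroup (Equiv.Perm Ω)) (a : ℕ) (g : H) :
    Nat.card (MulAction.fixedBy (Ω → Fin a) g) = a ^ cycleCount (g : Equiv.Perm Ω) := by
  rw [← card_fixed_colourings (g : Equiv.Perm Ω) a]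
  apply Nat.card_congr
  apply Equiv.subtypeEquivRight
  intro f
  have hsmul : ∀ (y : Ω), (g • f) y = f ((g : Equiv.Perm Ω)⁻¹ y) := fun y => rfl
  show g • f = f ↔ _
  constructor
  · intro hf x
    have := congrFun hf ((g : Equiv.Perm Ω) x)
    rw [hsmul, (show (g : Equiv.Perm Ω)⁻¹ ((g : Equiv.Perm Ω) x) = x from (g : Equiv.Perm Ω).symm_apply_apply x)] at this
    exact this.symm
  · intro hf
    funext y
    rw [hsmul]
    have := hf ((g : Equiv.Perm Ω)⁻¹ y)
    rw [(show (g : Equiv.Perm Ω) ((g : Equiv.Perm Ω)⁻¹ y) = y from (g : Equiv.Perm Ω).apply_symm_apply y)] at this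
    exact this.symm

lemma burnside (H : Subgroup (Equiv.Perm Ω)) (a : ℕ) :
    (∑ g : H, a ^ cycleCount (g : Equiv.Perm Ω)) =
      Nat.card (MulAction.orbitRel.Quotient H (Ω → Fin a)) * Nat.card H := by
  have hb := MulAction.sum_card_fixedBy_eq_card_orbits_mul_card_group (G := H) (X := Ω → Fin a)
  have key : ∀ g : H, a ^ cycleCount (g : Equiv.Perm Ω) =
      Fintype.card (MulAction.fixedBy (Ω → Fin a) g) := fun g => by
    rw [← fixedBy_card H a g, Nat.card_eq_fintype_card]
  rw [Finset.sum_congr rfl (fun g _ => key g), hb, Nat.card_eq_fintype_card,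
    Nat.card_eq_fintype_card]

lemma card_quot_le {H K : Subgroup (Equiv.Perm Ω)} (hHK : H ≤ K) (a : ℕ) :
    Nat.card (MulAction.orbitRel.Quotient K (Ω → Fin a)) ≤
      Nat.card (MulAction.orbitRel.Quotient H (Ω → Fin a)) := by
  have resp : ∀ f f' : Ω → Fin a, MulAction.orbitRel H (Ω → Fin a) f f' →
      (Quotient.mk _ f : MulAction.orbitRel.Quotient K (Ω → Fin a)) = Quotient.mk _ f' := by
    intro f f' hf
    obtain ⟨u, rfl⟩ := hf
    apply Quotient.sound
    exact ⟨⟨(u : Equiv.Perm Ω), hHK u.2⟩, rfl⟩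
  apply Nat.card_le_card_of_surjective (Quotient.lift _ resp)
  intro q
  refine Quotient.inductionOn q (fun f => ⟨Quotient.mk _ f, rfl⟩)

/-- Equivalence between even elements of `G` and `G ⊓ alternatingGroup Ω`. -/
def evenEquiv (G : Subgroup (Equiv.Perm Ω)) :
    {g : G // (g : Equiv.Perm Ω) ∈ alternatingGroup Ω} ≃
      (G ⊓ alternatingGroup Ω : Subgroup (Equiv.Perm Ω)) where
  toFun x := ⟨(x.1 : Equiv.Perm Ω), Subgroup.mem_inf.2 ⟨x.1.2, x.2⟩⟩
  invFun h := ⟨⟨(h : Equiv.Perm Ω), (Subgroup.mem_inf.1 h.2).1⟩, (Subgroup.mem_inf.1 h.2).2⟩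
  left_inv _ := rfl
  right_inv _ := rfl

lemma sum_even (G : Subgroup (Equiv.Perm Ω)) (a : ℕ) :
    (∑ g : G, if (g : Equiv.Perm Ω) ∈ alternatingGroup Ω then
        a ^ cycleCount (g : Equiv.Perm Ω) else 0)
      = ∑ h : (G ⊓ alternatingGroup Ω : Subgroup (Equiv.Perm Ω)),
          a ^ cycleCount (h : Equiv.Perm Ω) := by
  rw [← Finset.sum_filter]
  rw [Finset.sum_subtype (p := fun g : G => (g : Equiv.Perm Ω) ∈ alternatingGroup Ω)
      (Finset.univ.filter
      (fun g : G => (g : Equiv.Perm Ω) ∈ alternatingGroup Ω)) (fun x => by simp [Equiv.Perm.mem_alternatingGroup])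
      (fun g : G => a ^ cycleCount (g : Equiv.Perm Ω))]
  exact Fintype.sum_equiv (evenEquiv G) _ _ (fun x => rfl)

lemma card_two_mul (G : Subgroup (Equiv.Perm Ω)) (g₀ : Equiv.Perm Ω) (hg₀G : g₀ ∈ G)
    (hg₀s : Equiv.Perm.sign g₀ = -1) :
    Nat.card G = 2 * Nat.card (G ⊓ alternatingGroup Ω : Subgroup (Equiv.Perm Ω)) := by
  set φ : G →* ℤˣ := Equiv.Perm.sign.comp G.subtype with hφ
  have hsurj : Function.Surjective φ := by
    intro u
    rcases Int.units_eq_one_or u with rfl | rfl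
    · exact ⟨1, map_one φ⟩
    · exact ⟨⟨g₀, hg₀G⟩, hg₀s⟩
  have h1 : Nat.card G = Nat.card (G ⧸ φ.ker) * Nat.card φ.ker :=
    Subgroup.card_eq_card_quotient_mul_card_subgroup φ.ker
  have h2 : Nat.card (G ⧸ φ.ker) = 2 := by
    rw [Nat.card_congr (QuotientGroup.quotientKerEquivRange φ).toEquiv,
      MonoidHom.range_eq_top.2 hsurj, Subgroup.card_top, Nat.card_eq_fintype_card,
      Fintype.card_units_int]
  have h3 : Nat.card φ.ker = Nat.card (G ⊓ alternatingGroup Ω : Subgroup (Equiv.Perm Ω)) := by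
    apply Nat.card_congr
    refine Equiv.trans (Equiv.subtypeEquivRight (q := fun g : G =>
      (g : Equiv.Perm Ω) ∈ alternatingGroup Ω) ?_) (evenEquiv G)
    intro g
    show φ g = 1 ↔ (g : Equiv.Perm Ω) ∈ alternatingGroup Ω
    rw [Equiv.Perm.mem_alternatingGroup]
    exact Iff.rfl
  rw [h1, h2, h3]

end CycleAux

theorem cyclePoly_neg_eval_of_odd {Ω : Type*} [Fintype Ω] [DecidableEq Ω]
    (G : Subgroup (Equiv.Perm Ω))
    (h : ∃ g ∈ G, Equiv.Perm.sign g = -1)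
    (N : Subgroup (Equiv.Perm Ω)) (hN : N = G ⊓ alternatingGroup Ω)
    (a : ℕ) (ha : 0 < a) :
    (0 ≤ (-1) ^ (Fintype.card Ω) * (cyclePoly G).eval (-(a : ℤ))) ∧
    ((-1) ^ (Fintype.card Ω) * (cyclePoly G).eval (-(a : ℤ)) < (cyclePoly G).eval (a : ℤ)) ∧
    ((-1) ^ (Fintype.card Ω) * (cyclePoly G).eval (-(a : ℤ)) = 0 ↔
      Nat.card (MulAction.orbitRel.Quotient G (Ω → Fin a)) =
        Nat.card (MulAction.orbitRel.Quotient N (Ω → Fin a))) := by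
  obtain ⟨g₀, hg₀G, hg₀s⟩ := h
  subst hN
  set n := Fintype.card Ω with hn
  have heval : ∀ x : ℤ, (cyclePoly G).eval x = ∑ g : G, x ^ cycleCount (g : Equiv.Perm Ω) := by
    intro x
    simp only [cyclePoly, eval_finset_sum, eval_pow, eval_X]
    refine Finset.sum_nbij' (fun g => g) (fun g => g) ?_ ?_ ?_ ?_ ?_ <;>
      simp [Finset.mem_univ]
  have hterm : ∀ g : G, (-1:ℤ) ^ n * (-(a:ℤ)) ^ cycleCount (g : Equiv.Perm Ω)
      = 2 * (if (g : Equiv.Perm Ω) ∈ alternatingGroup Ω then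
          (a:ℤ) ^ cycleCount (g : Equiv.Perm Ω) else 0)
        - (a:ℤ) ^ cycleCount (g : Equiv.Perm Ω) := by
    intro g
    have hs : ((Equiv.Perm.sign (g : Equiv.Perm Ω) : ℤˣ) : ℤ)
        = (-1:ℤ) ^ (n + cycleCount (g : Equiv.Perm Ω)) := by
      rw [CycleAux.sign_eq_pow]
      push_cast
      rfl
    have hrw : (-1:ℤ)^n * (-(a:ℤ))^cycleCount (g : Equiv.Perm Ω)
        = ((Equiv.Perm.sign (g : Equiv.Perm Ω) : ℤˣ) : ℤ)
          * (a:ℤ)^cycleCount (g : Equiv.Perm Ω) := by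
      rw [hs, show (-(a:ℤ)) = (-1) * a by ring, mul_pow, pow_add]
      ring
    rw [hrw]
    by_cases hg : (g : Equiv.Perm Ω) ∈ alternatingGroup Ω
    · rw [if_pos hg, Equiv.Perm.mem_alternatingGroup.1 hg]
      push_cast
      ring
    · have hsg : Equiv.Perm.sign (g : Equiv.Perm Ω) = -1 := by
        rcases Int.units_eq_one_or (Equiv.Perm.sign (g : Equiv.Perm Ω)) with h1 | h1
        · exact absurd (Equiv.Perm.mem_alternatingGroup.2 h1) hg
        · exact h1
      rw [if_neg hg, hsg]
      push_cast
      ring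
  have hT : (-1:ℤ) ^ n * (cyclePoly G).eval (-(a:ℤ))
      = 2 * ((∑ h : (G ⊓ alternatingGroup Ω : Subgroup (Equiv.Perm Ω)),
          a ^ cycleCount (h : Equiv.Perm Ω) : ℕ) : ℤ)
        - ((∑ g : G, a ^ cycleCount (g : Equiv.Perm Ω) : ℕ) : ℤ) := by
    rw [heval, Finset.mul_sum]
    rw [Finset.sum_congr rfl (fun g _ => hterm g)]
    rw [Finset.sum_sub_distrib, ← Finset.mul_sum]
    congr 1
    · congr 1
      rw [← CycleAux.sum_even G a]
      push_cast
      refine Finset.sum_congr rfl fun g _ => ?_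
      split_ifs <;> simp
    · push_cast
      rfl
  have hevala : (cyclePoly G).eval (a:ℤ)
      = ((∑ g : G, a ^ cycleCount (g : Equiv.Perm Ω) : ℕ) : ℤ) := by
    rw [heval]
    push_cast
    rfl
  set oG := Nat.card (MulAction.orbitRel.Quotient G (Ω → Fin a)) with hoG
  set oN := Nat.card (MulAction.orbitRel.Quotient
      (G ⊓ alternatingGroup Ω : Subgroup (Equiv.Perm Ω)) (Ω → Fin a)) with hoN
  set m := Nat.card (G ⊓ alternatingGroup Ω : Subgroup (Equiv.Perm Ω)) with hm
  have hbG := CycleAux.burnside G a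
  have hbN := CycleAux.burnside (G ⊓ alternatingGroup Ω) a
  have hcard := CycleAux.card_two_mul G g₀ hg₀G hg₀s
  have hmono : oG ≤ oN := CycleAux.card_quot_le inf_le_left a
  have hmpos : 0 < m := Nat.card_pos
  have hTval : (-1:ℤ)^n * (cyclePoly G).eval (-(a:ℤ)) = 2 * (m:ℤ) * ((oN:ℤ) - (oG:ℤ)) := by
    rw [hT, hbN, hbG, hcard]
    push_cast
    ring
  have hlt : (∑ h : (G ⊓ alternatingGroup Ω : Subgroup (Equiv.Perm Ω)),
      a ^ cycleCount (h : Equiv.Perm Ω))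
        < (∑ g : G, a ^ cycleCount (g : Equiv.Perm Ω)) := by
    rw [← CycleAux.sum_even G a]
    apply Finset.sum_lt_sum
    · intro g _
      split_ifs
      · exact le_refl _
      · exact Nat.zero_le _
    · refine ⟨⟨g₀, hg₀G⟩, Finset.mem_univ _, ?_⟩
      have hodd : ¬ (((⟨g₀, hg₀G⟩ : G) : Equiv.Perm Ω) ∈ alternatingGroup Ω) := by
        rw [Equiv.Perm.mem_alternatingGroup]
        show ¬ Equiv.Perm.sign g₀ = 1
        rw [hg₀s]
        decide
      rw [if_neg hodd]
      exact pow_pos ha _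
  refine ⟨?_, ?_, ?_⟩
  · rw [hTval]
    have hc : (oG:ℤ) ≤ oN := Nat.cast_le.mpr hmono
    exact mul_nonneg (by positivity) (by linarith)
  · rw [hT, hevala]
    have : ((∑ h : (G ⊓ alternatingGroup Ω : Subgroup (Equiv.Perm Ω)),
        a ^ cycleCount (h : Equiv.Perm Ω) : ℕ) : ℤ)
          < ((∑ g : G, a ^ cycleCount (g : Equiv.Perm Ω) : ℕ) : ℤ) :=
      Nat.cast_lt.mpr hlt
    linarith
  · rw [hTval]
    constructor
    · intro h0
      have hm0 : (0:ℤ) < (m:ℤ) := Int.natCast_pos.mpr hmpos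
      have h2m : (2 * (m:ℤ)) ≠ 0 := by linarith
      have hz := (mul_eq_zero.1 h0).resolve_left h2m
      have heq : (oN:ℤ) = (oG:ℤ) := by linarith [sub_eq_zero.1 hz]
      exact (Nat.cast_inj.mp heq).symm
    · intro h0
      have heq : (oG:ℤ) = (oN:ℤ) := Nat.cast_inj.mpr h0
      rw [heq]
      ring
end
end

section
/- Let G be a finite permutation group containing odd permutations. If F_G(-a) = 0 for a positive integer a ≥ 2, then F_G(-(a-1)) = 0. Consequently the set of negative integer roots of F_G is {-1, -2, …, -a} for some a ≥ 1. -/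
open Polynomial

open scoped Classical

noncomputable section

attribute [local instance] arrowAction

set_option linter.unusedSectionVars false
set_option linter.unusedVariables false

section Gen

open MulAction

variable {G₀ : Type*} [Group G₀] {X : Type*} [MulAction G₀ X] {H K : Subgroup G₀}

lemma CPaux.orbit_mono (hHK : H ≤ K) {x y : X} (hxy : x ∈ MulAction.orbit H y) :
    x ∈ MulAction.orbit K y := by
  obtain ⟨⟨h, hm⟩, rfl⟩ := hxy
  exact ⟨⟨h, hHK hm⟩, rfl⟩

/-- The natural surjection between orbit quotients for nested subgroups. -/
def CPaux.orbMap (hHK : H ≤ K) :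
    MulAction.orbitRel.Quotient H X → MulAction.orbitRel.Quotient K X :=
  Quotient.map' id (fun x y hxy => CPaux.orbit_mono hHK hxy)

lemma CPaux.orbMap_mk (hHK : H ≤ K) (x : X) :
    CPaux.orbMap (X := X) hHK (Quotient.mk'' x) = Quotient.mk'' x := rfl

lemma CPaux.orbMap_surjective (hHK : H ≤ K) :
    Function.Surjective (CPaux.orbMap (X := X) hHK) := by
  intro q
  induction q using Quotient.ind with
  | _ x => exact ⟨Quotient.mk'' x, rfl⟩

lemma CPaux.orbit_of_card_eq [Finite X] (hHK : H ≤ K)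
    (hc : Nat.card (MulAction.orbitRel.Quotient H X)
        = Nat.card (MulAction.orbitRel.Quotient K X))
    {x y : X} (hxy : x ∈ MulAction.orbit K y) : x ∈ MulAction.orbit H y := by
  have hbij : Function.Bijective (CPaux.orbMap (X := X) hHK) :=
    (Nat.bijective_iff_surjective_and_card _).mpr ⟨CPaux.orbMap_surjective hHK, hc⟩
  have h1 : (Quotient.mk'' x : MulAction.orbitRel.Quotient K X) = Quotient.mk'' y :=
    Quotient.sound' hxy
  have h2 : (Quotient.mk'' x : MulAction.orbitRel.Quotient H X) = Quotient.mk'' y :=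
    hbij.1 (by rw [CPaux.orbMap_mk, CPaux.orbMap_mk, h1])
  exact Quotient.exact' h2

lemma CPaux.card_eq_of_orbit (hHK : H ≤ K)
    (h : ∀ x y : X, x ∈ MulAction.orbit K y → x ∈ MulAction.orbit H y) :
    Nat.card (MulAction.orbitRel.Quotient H X)
      = Nat.card (MulAction.orbitRel.Quotient K X) := by
  have hrel : MulAction.orbitRel H X = MulAction.orbitRel K X :=
    Setoid.ext fun x y => ⟨fun hx => CPaux.orbit_mono hHK hx, fun hx => h x y hx⟩
  exact congrArg Nat.card (congrArg Quotient hrel)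

end Gen

namespace CPaux

open MulAction Equiv.Perm

variable {Ω : Type*} [Fintype Ω]

lemma smul_fun_apply (σ : Equiv.Perm Ω) {Y : Type*} (f : Ω → Y) (x : Ω) :
    (σ • f) x = f (σ⁻¹ • x) := rfl

lemma fixed_apply {g : Equiv.Perm Ω} {Y : Type*} {f : Ω → Y} (hf : g • f = f)
    {h : Equiv.Perm Ω} (hh : h ∈ Subgroup.zpowers g) (x : Ω) : f (h • x) = f x := by
  have hg : g ∈ stabilizer (Equiv.Perm Ω) f := hf
  have h1 : h⁻¹ ∈ stabilizer (Equiv.Perm Ω) f :=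
    (stabilizer (Equiv.Perm Ω) f).inv_mem ((Subgroup.zpowers_le.mpr hg) hh)
  have h2 : h⁻¹ • f = f := h1
  conv_rhs => rw [← h2]
  rw [smul_fun_apply, inv_inv]

/-- Colourings fixed by `g` are exactly colourings of the cycles of `g`. -/
def fixedColourEquiv (g : Equiv.Perm Ω) (a : ℕ) :
    MulAction.fixedBy (Ω → Fin a) g ≃
      (orbitRel.Quotient (Subgroup.zpowers g) Ω → Fin a) where
  toFun f := Quotient.lift (f : Ω → Fin a) (by
    rintro x y ⟨h, rfl⟩
    exact fixed_apply f.2 h.2 y)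
  invFun F := ⟨F ∘ Quotient.mk'', by
    funext x
    show F (Quotient.mk'' (g⁻¹ • x)) = F (Quotient.mk'' x)
    refine congrArg F (Quotient.sound ⟨⟨g⁻¹, Subgroup.inv_mem _ (Subgroup.mem_zpowers g)⟩, rfl⟩)⟩
  left_inv f := rfl
  right_inv F := by
    funext q
    induction q using Quotient.ind
    rfl

lemma card_fixedBy_colour (g : Equiv.Perm Ω) (a : ℕ) :
    Nat.card (MulAction.fixedBy (Ω → Fin a) g) = a ^ cycleCount g := by
  rw [Nat.card_congr (fixedColourEquiv g a), Nat.card_fun, Nat.card_eq_fintype_card (α := Fin a),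
    Fintype.card_fin, cycleCount]

lemma burnside (H : Subgroup (Equiv.Perm Ω)) (a : ℕ) :
    ∑ h : H, a ^ cycleCount (h : Equiv.Perm Ω)
      = Nat.card (MulAction.orbitRel.Quotient H (Ω → Fin a)) * Nat.card H := by
  have key := MulAction.sum_card_fixedBy_eq_card_orbits_mul_card_group (G := H) (X := Ω → Fin a)
  rw [Nat.card_eq_fintype_card, Nat.card_eq_fintype_card]
  rw [show Fintype.card (MulAction.orbitRel.Quotient H (Ω → Fin a))
        = Fintype.card (Quotient (orbitRel H (Ω → Fin a))) from rfl, ← key]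
  refine Finset.sum_congr rfl fun h _ => ?_
  have e : MulAction.fixedBy (Ω → Fin a) h = MulAction.fixedBy (Ω → Fin a) (h : Equiv.Perm Ω) := rfl
  rw [← Nat.card_eq_fintype_card, e, card_fixedBy_colour]

lemma mem_orbit_zpowers_iff {g : Equiv.Perm Ω} {x y : Ω} :
    x ∈ MulAction.orbit (Subgroup.zpowers g) y ↔ g.SameCycle y x := by
  constructor
  · rintro ⟨⟨h, hm⟩, rfl⟩
    obtain ⟨k, rfl⟩ := Subgroup.mem_zpowers_iff.mp hm
    exact ⟨k, rfl⟩
  · rintro ⟨k, rfl⟩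
    exact ⟨⟨g ^ k, Subgroup.zpow_mem _ (Subgroup.mem_zpowers g) k⟩, rfl⟩

lemma cycleCount_eq (g : Equiv.Perm Ω) :
    cycleCount g = (Fintype.card Ω - g.support.card) + Multiset.card g.cycleType := by
  set Q := MulAction.orbitRel.Quotient (Subgroup.zpowers g) Ω with hQ
  set P : Q → Prop := Quotient.lift (fun x => x ∈ g.support) (by
    intro x y hxy
    have : g.SameCycle y x := mem_orbit_zpowers_iff.mp hxy
    exact propext this.symm.mem_support_iff) with hP
  have hPmk : ∀ x : Ω, P ⟦x⟧ = (x ∈ g.support) := fun _ => rfl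
  set Φ : Q → Equiv.Perm Ω := Quotient.lift (fun x => g.cycleOf x) (by
    intro x y hxy
    exact ((mem_orbit_zpowers_iff.mp hxy).cycleOf_eq).symm) with hΦ
  have e1 : {q : Q // P q} ≃ {c : Equiv.Perm Ω // c ∈ g.cycleFactorsFinset} := by
    refine Equiv.ofBijective (fun q => ⟨Φ q.1, ?_⟩) ⟨?_, ?_⟩
    · obtain ⟨q, hq⟩ := q
      induction q using Quotient.ind with
      | _ x => exact cycleOf_mem_cycleFactorsFinset_iff.mpr hq
    · rintro ⟨q1, h1⟩ ⟨q2, h2⟩ heq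
      simp only [Subtype.mk.injEq] at heq ⊢
      induction q1 using Quotient.ind with
      | _ x =>
      induction q2 using Quotient.ind with
      | _ y =>
      have hx : x ∈ g.support := h1
      have hy : y ∈ g.support := h2
      have hcy : g.cycleOf x = g.cycleOf y := heq
      have : y ∈ (g.cycleOf x).support := by
        rw [hcy, mem_support_cycleOf_iff]
        exact ⟨Equiv.Perm.SameCycle.refl _ _, hy⟩
      have hs : g.SameCycle x y := (mem_support_cycleOf_iff.mp this).1
      exact Quotient.sound (mem_orbit_zpowers_iff.mpr hs.symm)
    · rintro ⟨c, hc⟩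
      obtain ⟨x, hx⟩ := (mem_cycleFactorsFinset_iff.mp hc).1.nonempty_support
      have hxg : x ∈ g.support := mem_support.mpr (by
        rw [← (mem_cycleFactorsFinset_iff.mp hc).2 x hx]
        exact mem_support.mp hx)
      exact ⟨⟨⟦x⟧, hxg⟩, Subtype.ext (cycle_is_cycleOf hx hc).symm⟩
  have e2 : {q : Q // ¬ P q} ≃ {x : Ω // x ∉ g.support} := by
    refine (Equiv.ofBijective (fun x : {x : Ω // x ∉ g.support} =>
      (⟨⟦x.1⟧, by rw [hPmk]; exact x.2⟩ : {q : Q // ¬ P q})) ⟨?_, ?_⟩).symm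
    · rintro ⟨x, hx⟩ ⟨y, hy⟩ heq
      simp only [Subtype.mk.injEq] at heq ⊢
      have : g.SameCycle y x := mem_orbit_zpowers_iff.mp (Quotient.exact heq)
      obtain ⟨k, hk⟩ := this
      rw [← hk, zpow_apply_eq_self_of_apply_eq_self (Equiv.Perm.notMem_support.mp hy)]
    · rintro ⟨q, hq⟩
      induction q using Quotient.ind with
      | _ x => exact ⟨⟨x, hq⟩, rfl⟩
  have hcard : Fintype.card Q = Multiset.card g.cycleType + (Fintype.card Ω - g.support.card) := by
    rw [← Fintype.card_congr (Equiv.sumCompl P), Fintype.card_sum,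
      Fintype.card_congr e1, Fintype.card_congr e2, Fintype.card_subtype_compl,
      cycleType_def, Multiset.card_map, Fintype.card_coe, Fintype.card_coe, Finset.card_def]
  rw [cycleCount, Nat.card_eq_fintype_card, hcard, Nat.add_comm]

lemma neg_one_pow_cycleCount (g : Equiv.Perm Ω) :
    ((-1 : ℤˣ) ^ cycleCount g) = (-1) ^ (Fintype.card Ω) * Equiv.Perm.sign g := by
  have hs : g.support.card ≤ Fintype.card Ω := Finset.card_le_univ _
  have hkey : cycleCount g + (g.cycleType.sum + Multiset.card g.cycleType)
      = Fintype.card Ω + 2 * Multiset.card g.cycleType := by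
    rw [cycleCount_eq, sum_cycleType]
    omega
  have h2 : ((-1 : ℤˣ) ^ (2 * Multiset.card g.cycleType)) = 1 := by
    rw [pow_mul]; norm_num
  have h3 : (-1 : ℤˣ) ^ cycleCount g * (-1) ^ (g.cycleType.sum + Multiset.card g.cycleType)
      = (-1) ^ (Fintype.card Ω) := by
    rw [← pow_add, hkey, pow_add, h2, mul_one]
  rw [← h3, ← sign_of_cycleType, mul_assoc, Int.units_mul_self, mul_one]

lemma sum_subgroup_eq_filter (H : Subgroup (Equiv.Perm Ω)) (F : Equiv.Perm Ω → ℤ) :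
    ∑ g : H, F ↑g = ∑ g ∈ Finset.univ.filter (· ∈ H), F g :=
  (Finset.sum_subtype _ (by simp) F).symm

lemma filter_inf_alt (G : Subgroup (Equiv.Perm Ω)) :
    Finset.univ.filter (· ∈ alternatingGroup Ω ⊓ G)
      = (Finset.univ.filter (· ∈ G)).filter (fun g => Equiv.Perm.sign g = 1) := by
  ext g
  simp only [Finset.mem_filter, Finset.mem_univ, true_and, Subgroup.mem_inf,
    Equiv.Perm.mem_alternatingGroup]
  tauto

lemma sum_sign_split (G : Subgroup (Equiv.Perm Ω)) (F : Equiv.Perm Ω → ℤ) :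
    ∑ g : G, (((Equiv.Perm.sign (g : Equiv.Perm Ω)) : ℤ) + 1) * F ↑g
      = 2 * ∑ g : (alternatingGroup Ω ⊓ G : Subgroup (Equiv.Perm Ω)), F ↑g := by
  rw [sum_subgroup_eq_filter G (fun g => ((Equiv.Perm.sign g : ℤ) + 1) * F g),
    sum_subgroup_eq_filter (alternatingGroup Ω ⊓ G) F, filter_inf_alt]
  conv_rhs => rw [Finset.sum_filter]
  rw [Finset.mul_sum]
  refine Finset.sum_congr rfl fun g _ => ?_
  rcases Int.units_eq_one_or (Equiv.Perm.sign g) with hg | hg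
  · rw [if_pos hg, hg]; norm_num
  · rw [if_neg (by rw [hg]; decide), hg]; norm_num

lemma card_two_mul (G : Subgroup (Equiv.Perm Ω)) (h : ∃ g ∈ G, Equiv.Perm.sign g = -1) :
    Nat.card G = 2 * Nat.card (alternatingGroup Ω ⊓ G : Subgroup (Equiv.Perm Ω)) := by
  obtain ⟨g₀, hg₀G, hg₀⟩ := h
  rw [Nat.card_eq_fintype_card, Nat.card_eq_fintype_card, Fintype.card_subtype,
    Fintype.card_subtype, filter_inf_alt]
  set A := Finset.univ.filter (· ∈ G) with hA
  have hsplit := Finset.card_filter_add_card_filter_not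
    (s := A) (p := fun g => Equiv.Perm.sign g = 1)
  have hbij : (A.filter (fun g => Equiv.Perm.sign g = 1)).card
      = (A.filter (fun g => ¬ Equiv.Perm.sign g = 1)).card := by
    refine Finset.card_bij' (fun g _ => g₀ * g) (fun g _ => g₀⁻¹ * g) ?_ ?_ ?_ ?_
    · intro g hg
      simp only [hA, Finset.mem_filter, Finset.mem_univ, true_and] at hg ⊢
      refine ⟨G.mul_mem hg₀G hg.1, ?_⟩
      rw [map_mul, hg₀, hg.2]
      decide
    · intro g hg
      simp only [hA, Finset.mem_filter, Finset.mem_univ, true_and] at hg ⊢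
      refine ⟨G.mul_mem (G.inv_mem hg₀G) hg.1, ?_⟩
      rcases Int.units_eq_one_or (Equiv.Perm.sign g) with h1 | h1
      · exact absurd h1 hg.2
      · rw [map_mul, map_inv, hg₀, h1]; decide
    · intro g _; simp [← mul_assoc]
    · intro g _; simp [← mul_assoc]
  omega

/-- The number of orbits of `H` on `a`-colourings of `Ω`. -/
def orbCount (H : Subgroup (Equiv.Perm Ω)) (a : ℕ) : ℕ :=
  Nat.card (MulAction.orbitRel.Quotient H (Ω → Fin a))

lemma eval_cyclePoly (G : Subgroup (Equiv.Perm Ω)) (t : ℤ) :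
    (cyclePoly G).eval t = ∑ g : G, t ^ cycleCount (g : Equiv.Perm Ω) := by
  rw [cyclePoly, eval_finset_sum]
  exact Finset.sum_congr rfl fun g _ => by rw [eval_pow, eval_X]

lemma burnside' (H : Subgroup (Equiv.Perm Ω)) (a : ℕ) :
    ∑ h : H, ((a : ℤ)) ^ cycleCount (h : Equiv.Perm Ω)
      = (orbCount H a : ℤ) * Nat.card H := by
  have h2 := congrArg (fun n : ℕ => (n : ℤ)) (burnside H a)
  push_cast at h2
  exact h2

lemma master (G : Subgroup (Equiv.Perm Ω)) (a : ℕ) :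
    (-1 : ℤ) ^ (Fintype.card Ω) * (cyclePoly G).eval (-(a : ℤ))
      = 2 * ((orbCount (alternatingGroup Ω ⊓ G) a : ℤ)
            * Nat.card (alternatingGroup Ω ⊓ G : Subgroup (Equiv.Perm Ω)))
        - (orbCount G a : ℤ) * Nat.card G := by
  have hterm : ∀ g : G, (-1 : ℤ) ^ (Fintype.card Ω) * (-(a : ℤ)) ^ cycleCount (g : Equiv.Perm Ω)
      = (((Equiv.Perm.sign (g : Equiv.Perm Ω)) : ℤ)) * (a : ℤ) ^ cycleCount (g : Equiv.Perm Ω) := by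
    intro g
    have hu := neg_one_pow_cycleCount (g : Equiv.Perm Ω)
    have hz := congrArg (Units.val : ℤˣ → ℤ) hu
    simp only [Units.val_mul, Units.val_pow_eq_pow_val, Units.val_neg, Units.val_one] at hz
    have h1 : (-(a:ℤ)) ^ cycleCount (g : Equiv.Perm Ω)
        = (-1) ^ cycleCount (g : Equiv.Perm Ω) * (a:ℤ) ^ cycleCount (g : Equiv.Perm Ω) :=
      neg_pow _ _
    rw [h1, hz, ← mul_assoc, ← mul_assoc, ← pow_add, ← two_mul, pow_mul]
    norm_num
  calc (-1 : ℤ) ^ (Fintype.card Ω) * (cyclePoly G).eval (-(a : ℤ))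
      = ∑ g : G, (((Equiv.Perm.sign (g : Equiv.Perm Ω)) : ℤ)) * (a:ℤ) ^ cycleCount (g : Equiv.Perm Ω) := by
        rw [eval_cyclePoly, Finset.mul_sum]
        exact Finset.sum_congr rfl fun g _ => hterm g
    _ = (∑ g : G, (((Equiv.Perm.sign (g : Equiv.Perm Ω)) : ℤ) + 1) * (a:ℤ) ^ cycleCount (g : Equiv.Perm Ω))
        - ∑ g : G, (a:ℤ) ^ cycleCount (g : Equiv.Perm Ω) := by
        rw [← Finset.sum_sub_distrib]
        exact Finset.sum_congr rfl fun g _ => by ring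
    _ = 2 * ((orbCount (alternatingGroup Ω ⊓ G) a : ℤ)
            * Nat.card (alternatingGroup Ω ⊓ G : Subgroup (Equiv.Perm Ω)))
        - (orbCount G a : ℤ) * Nat.card G := by
        rw [sum_sign_split G (fun g => (a:ℤ) ^ cycleCount g), burnside', burnside']

lemma eval_zero_iff (G : Subgroup (Equiv.Perm Ω)) (h : ∃ g ∈ G, Equiv.Perm.sign g = -1)
    (a : ℕ) : (cyclePoly G).eval (-(a : ℤ)) = 0 ↔
      orbCount (alternatingGroup Ω ⊓ G) a = orbCount G a := by
  have hm := master G a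
  have hcard := card_two_mul G h
  have hNpos : 0 < Nat.card (alternatingGroup Ω ⊓ G : Subgroup (Equiv.Perm Ω)) :=
    Nat.card_pos
  constructor
  · intro h0
    rw [h0, mul_zero] at hm
    have hz : ((orbCount (alternatingGroup Ω ⊓ G) a : ℤ) - (orbCount G a : ℤ))
        * (2 * (Nat.card (alternatingGroup Ω ⊓ G : Subgroup (Equiv.Perm Ω)) : ℤ)) = 0 := by
      rw [hcard] at hm
      push_cast at hm ⊢
      linarith
    rcases mul_eq_zero.mp hz with h1 | h1
    · exact_mod_cast sub_eq_zero.mp h1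
    · exfalso
      have : (0:ℤ) < 2 * (Nat.card (alternatingGroup Ω ⊓ G : Subgroup (Equiv.Perm Ω)) : ℤ) := by
        positivity
      omega
  · intro he
    have hz : (-1 : ℤ) ^ (Fintype.card Ω) * (cyclePoly G).eval (-(a : ℤ)) = 0 := by
      rw [hm, hcard, he]
      push_cast
      ring
    rcases mul_eq_zero.mp hz with h1 | h1
    · exact absurd h1 (pow_ne_zero _ (by norm_num))
    · exact h1

lemma orbit_step {b a : ℕ} (hba : b ≤ a) {H K : Subgroup (Equiv.Perm Ω)}
    (hrel : ∀ x y : Ω → Fin a, x ∈ MulAction.orbit K y → x ∈ MulAction.orbit H y)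
    (x y : Ω → Fin b) (hxy : x ∈ MulAction.orbit K y) : x ∈ MulAction.orbit H y := by
  set ι : (Ω → Fin b) → (Ω → Fin a) := fun f => Fin.castLE hba ∘ f with hι
  have hinj : Function.Injective ι := fun f1 f2 hf =>
    funext fun z => Fin.castLE_injective hba (congrFun hf z)
  obtain ⟨k, hk⟩ := hxy
  have h1 : ι x ∈ MulAction.orbit K (ι y) := ⟨k, by rw [← hk]; rfl⟩
  obtain ⟨n, hn⟩ := hrel _ _ h1
  refine ⟨n, hinj ?_⟩
  rw [← hn]; rfl

/-- The key statement: `F_G(-a) = 0` iff every `G`-orbit on `a`-colourings is an orbit of the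
even subgroup. -/
lemma eval_zero_iff_orbit (G : Subgroup (Equiv.Perm Ω)) (h : ∃ g ∈ G, Equiv.Perm.sign g = -1)
    (a : ℕ) : (cyclePoly G).eval (-(a : ℤ)) = 0 ↔
      (∀ x y : Ω → Fin a, x ∈ MulAction.orbit G y
        → x ∈ MulAction.orbit (alternatingGroup Ω ⊓ G : Subgroup (Equiv.Perm Ω)) y) := by
  rw [eval_zero_iff G h a]
  constructor
  · intro hc x y hxy
    exact CPaux.orbit_of_card_eq inf_le_right hc hxy
  · intro hrel
    exact CPaux.card_eq_of_orbit inf_le_right hrel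

lemma cyclePoly_ne_zero (G : Subgroup (Equiv.Perm Ω)) : cyclePoly G ≠ 0 := by
  intro h0
  have h1 : (cyclePoly G).eval 1 = 0 := by rw [h0]; simp
  rw [eval_cyclePoly] at h1
  simp only [one_pow, Finset.sum_const, Finset.card_univ, nsmul_eq_mul, mul_one] at h1
  have : 0 < Fintype.card G := Fintype.card_pos
  omega

end CPaux

theorem cyclePoly_negative_roots_interval {Ω : Type*} [Fintype Ω] [DecidableEq Ω]
    (G : Subgroup (Equiv.Perm Ω))
    (h : ∃ g ∈ G, Equiv.Perm.sign g = -1) :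
    (∀ a : ℕ, 2 ≤ a → (cyclePoly G).eval (-(a : ℤ)) = 0 →
      (cyclePoly G).eval (-((a : ℤ) - 1)) = 0) ∧
    ∃ a : ℕ, 1 ≤ a ∧ ∀ b : ℕ, 1 ≤ b →
      ((cyclePoly G).eval (-(b : ℤ)) = 0 ↔ b ≤ a) := by
  -- transport the hypothesis to the classical `DecidableEq` instance
  have hde : (‹DecidableEq Ω› : DecidableEq Ω) = Classical.decEq Ω := by
    funext x y
    exact Subsingleton.elim _ _
  have h' : ∃ g ∈ G, @Equiv.Perm.sign Ω (Classical.decEq Ω) _ g = -1 := by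
    rw [← hde]; exact h
  -- the monotone step
  have step : ∀ b a : ℕ, b ≤ a → (cyclePoly G).eval (-(a : ℤ)) = 0 →
      (cyclePoly G).eval (-(b : ℤ)) = 0 := by
    intro b a hba h0
    exact (CPaux.eval_zero_iff_orbit G h' b).mpr
      (CPaux.orbit_step hba ((CPaux.eval_zero_iff_orbit G h' a).mp h0))
  have h1 : (cyclePoly G).eval (-((1:ℕ) : ℤ)) = 0 := by
    refine (CPaux.eval_zero_iff_orbit G h' 1).mpr ?_
    intro x y _
    have : x = y := Subsingleton.elim x y
    rw [this]
    exact MulAction.mem_orbit_self y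
  constructor
  · intro a ha2 h0
    have hcast : -((a : ℤ) - 1) = -(((a - 1 : ℕ) : ℤ)) := by
      have : (1:ℕ) ≤ a := le_trans (by norm_num) ha2
      push_cast [this]
      ring
    rw [hcast]
    exact step (a - 1) a (Nat.sub_le a 1) h0
  · -- the set of negative integer roots
    set S : Set ℕ := {b : ℕ | 1 ≤ b ∧ (cyclePoly G).eval (-(b : ℤ)) = 0} with hS
    have hsub : S ⊆ Int.natAbs '' ((cyclePoly G).roots.toFinset : Set ℤ) := by
      intro b hb
      refine ⟨-(b : ℤ), ?_, by simp⟩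
      simp only [Finset.coe_sort_coe, Multiset.mem_toFinset, Finset.mem_coe]
      exact (Polynomial.mem_roots (CPaux.cyclePoly_ne_zero G)).mpr hb.2
    have hfin : S.Finite :=
      Set.Finite.subset (Set.Finite.image _ (Finset.finite_toSet _)) hsub
    have h1S : (1:ℕ) ∈ S := ⟨le_refl 1, by exact_mod_cast h1⟩
    have hne : hfin.toFinset.Nonempty := ⟨1, hfin.mem_toFinset.mpr h1S⟩
    set a := hfin.toFinset.max' hne with ha
    have haS : a ∈ S := hfin.mem_toFinset.mp (hfin.toFinset.max'_mem hne)
    refine ⟨a, haS.1, fun b hb => ⟨fun h0 => ?_, fun hba => ?_⟩⟩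
    · exact hfin.toFinset.le_max' b (hfin.mem_toFinset.mpr ⟨hb, h0⟩)
    · exact step b a hba haS.2
end
end

section
/- If G₁ ≤ G₂ are finite permutation groups on the same finite set and F_{G₁}(-a) = 0 for some positive integer a, then F_{G₂}(-a) = 0. -/
open Polynomial

open scoped Classical

noncomputable section

section Aux

open Equiv Equiv.Perm MulAction
set_option linter.unusedSectionVars false

variable {Ω : Type*} [Fintype Ω]

lemma orbitRel_iff_sameCycle (g : Perm Ω) (x y : Ω) :
    (MulAction.orbitRel (Subgroup.zpowers g) Ω).r x y ↔ g.SameCycle y x := by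
  show x ∈ MulAction.orbit (Subgroup.zpowers g) y ↔ _
  rw [MulAction.mem_orbit_iff]
  constructor
  · rintro ⟨⟨u, hu⟩, h⟩
    obtain ⟨k, rfl⟩ := Subgroup.mem_zpowers_iff.mp hu
    exact ⟨k, h⟩
  · rintro ⟨k, h⟩
    exact ⟨⟨g ^ k, Subgroup.mem_zpowers_iff.mpr ⟨k, rfl⟩⟩, h⟩

lemma cycleCount_eq (g : Perm Ω) :
    cycleCount g = Fintype.card (Function.fixedPoints g) + g.cycleFactorsFinset.card := by
  have e : MulAction.orbitRel.Quotient (Subgroup.zpowers g) Ω ≃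
      (Function.fixedPoints g) ⊕ g.cycleFactorsFinset := by
    refine Equiv.ofBijective (fun q => Quotient.liftOn' q
      (fun x => if hx : g x = x then Sum.inl ⟨x, hx⟩ else Sum.inr ⟨g.cycleOf x,
        (Equiv.Perm.cycleOf_mem_cycleFactorsFinset_iff).mpr (Equiv.Perm.mem_support.mpr hx)⟩)
      ?_) ⟨?_, ?_⟩
    · intro x y hxy
      have hsc : g.SameCycle y x := (orbitRel_iff_sameCycle g x y).mp hxy
      by_cases hx : g x = x
      · have hy : g y = y := (hsc.apply_eq_self_iff).mpr hx
        have : y = x := hsc.eq_of_left hy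
        simp [hx, hy, this]
      · have hy : g y ≠ y := fun hy => hx ((hsc.apply_eq_self_iff).mp hy)
        simp only [hx, hy, dif_neg, not_false_iff]
        congr 1
        exact Subtype.ext (hsc.cycleOf_eq).symm
    · intro q₁ q₂
      induction q₁ using Quotient.inductionOn'
      induction q₂ using Quotient.inductionOn'
      rename_i x y
      intro h
      simp only [Quotient.liftOn'_mk''] at h
      by_cases hx : g x = x <;> by_cases hy : g y = y <;>
        simp only [hx, hy, dif_pos, dif_neg, not_false_iff] at h
      · apply Quotient.sound'
        rw [orbitRel_iff_sameCycle]
        cases h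
        exact Equiv.Perm.SameCycle.refl _ _
      · exact absurd h (by simp)
      · exact absurd h (by simp)
      · have hco : g.cycleOf x = g.cycleOf y := congrArg Subtype.val (Sum.inr_injective h)
        apply Quotient.sound'
        rw [orbitRel_iff_sameCycle]
        have : y ∈ (g.cycleOf x).support := by
          rw [hco, Equiv.Perm.mem_support_cycleOf_iff]
          exact ⟨Equiv.Perm.SameCycle.refl _ _, Equiv.Perm.mem_support.mpr hy⟩
        exact ((Equiv.Perm.mem_support_cycleOf_iff.mp this).1).symm
    · rintro (⟨x, hx⟩ | ⟨c, hc⟩)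
      · exact ⟨Quotient.mk'' x, by simp only [Quotient.liftOn'_mk'', dif_pos (show g x = x from hx)]⟩
      · obtain ⟨x, hx⟩ := (Equiv.Perm.mem_cycleFactorsFinset_iff.mp hc).1.nonempty_support
        have hgx : g x ≠ x := by
          have := Equiv.Perm.mem_support.mp hx
          have happ := (Equiv.Perm.mem_cycleFactorsFinset_iff.mp hc).2 x hx
          rw [← happ]; exact this
        refine ⟨Quotient.mk'' x, ?_⟩
        simp only [Quotient.liftOn'_mk'', hgx, dif_neg, not_false_iff]
        congr 1
        exact Subtype.ext ((Equiv.Perm.cycle_is_cycleOf hx hc).symm)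
  rw [cycleCount, Nat.card_congr e, Nat.card_eq_fintype_card, Fintype.card_sum,
    Fintype.card_coe]

lemma sign_eq_pow_cycleCount (g : Perm Ω) :
    ((Equiv.Perm.sign g : ℤˣ) : ℤ) = (-1) ^ (Fintype.card Ω + cycleCount g) := by
  have hcard : Multiset.card g.cycleType = g.cycleFactorsFinset.card := by
    simp [Equiv.Perm.cycleType]
  have hs : g.cycleType.sum ≤ Fintype.card Ω := by
    rw [Equiv.Perm.sum_cycleType]; exact Finset.card_le_univ _
  obtain ⟨t, ht⟩ : ∃ t, g.cycleType.sum + t = Fintype.card Ω :=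
    ⟨Fintype.card Ω - g.cycleType.sum, Nat.add_sub_cancel' hs⟩
  rw [cycleCount_eq, Equiv.Perm.card_fixedPoints, ← hcard, ← ht]
  rw [Equiv.Perm.sign_of_cycleType]
  push_cast
  rw [Nat.add_sub_cancel_left]
  ring_nf
  rw [pow_mul]
  norm_num
  exact neg_one_pow_eq_or ℤ t

lemma card_fixed_colorings (g : Perm Ω) (a : ℕ) :
    Fintype.card {f : Ω → Fin a // ∀ x, f (g x) = f x} = a ^ cycleCount g := by
  have hinv : ∀ (f : {f : Ω → Fin a // ∀ x, f (g x) = f x}) (k : ℤ) (x : Ω),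
      f.1 ((g ^ k) x) = f.1 x := by
    rintro ⟨f, hf⟩ k x
    have hnat : ∀ (m : ℕ) (x : Ω), f ((g ^ m) x) = f x := by
      intro m
      induction m with
      | zero => intro x; simp
      | succ m ih => intro x; rw [pow_succ, Equiv.Perm.mul_apply, ih (g x), hf]
    obtain ⟨m, rfl | rfl⟩ := k.eq_nat_or_neg
    · rw [zpow_natCast]; exact hnat m x
    · rw [zpow_neg, zpow_natCast]
      have := hnat m ((g ^ m)⁻¹ x)
      rw [Equiv.Perm.coe_inv, Equiv.apply_symm_apply] at this
      exact this.symm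
  have e : {f : Ω → Fin a // ∀ x, f (g x) = f x} ≃
      (MulAction.orbitRel.Quotient (Subgroup.zpowers g) Ω → Fin a) := by
    refine
      { toFun := fun f => fun q => Quotient.liftOn' q f.1 ?_
        invFun := fun F => ⟨fun x => F (Quotient.mk'' x), fun x => congrArg F ?_⟩
        left_inv := fun f => rfl
        right_inv := fun F => ?_ }
    · intro x y hxy
      obtain ⟨k, hk⟩ := (orbitRel_iff_sameCycle g x y).mp hxy
      rw [← hk, hinv f k y]
    · apply Quotient.sound'
      rw [orbitRel_iff_sameCycle]
      exact ⟨1, by simp⟩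
    · funext q
      induction q using Quotient.inductionOn'
      rfl
  rw [Fintype.card_congr e, Fintype.card_fun, Fintype.card_fin, cycleCount,
    Nat.card_eq_fintype_card]

/-- The signed stabilizer sum of a coloring. -/
def stabSum (G : Subgroup (Perm Ω)) {a : ℕ} (f : Ω → Fin a) : ℤ :=
  ∑ g ∈ (Finset.univ : Finset G).filter (fun g : G => ∀ x, f ((g : Perm Ω) x) = f x),
    ((Equiv.Perm.sign (g : Perm Ω) : ℤˣ) : ℤ)

lemma stabSum_eq_zero (G : Subgroup (Perm Ω)) {a : ℕ} (f : Ω → Fin a)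
    (h : ∃ g₀ : G, (∀ x, f ((g₀ : Perm Ω) x) = f x) ∧
      Equiv.Perm.sign (g₀ : Perm Ω) = -1) : stabSum G f = 0 := by
  obtain ⟨g₀, hfix₀, hsgn₀⟩ := h
  have key : stabSum G f = - stabSum G f := by
    nth_rewrite 2 [stabSum]
    rw [← Finset.sum_neg_distrib]
    refine Finset.sum_nbij' (fun g => g₀ * g) (fun g => g₀⁻¹ * g) ?_ ?_ ?_ ?_ ?_
    · intro g hg
      simp only [Finset.mem_filter, Finset.mem_univ, true_and] at hg ⊢
      intro x
      rw [Subgroup.coe_mul, Equiv.Perm.mul_apply, hfix₀ ((g : Perm Ω) x), hg x]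
    · intro g hg
      simp only [Finset.mem_filter, Finset.mem_univ, true_and] at hg ⊢
      intro x
      have hfixinv : ∀ y, f (((g₀ : Perm Ω))⁻¹ y) = f y := by
        intro y
        have := hfix₀ ((g₀ : Perm Ω)⁻¹ y)
        rw [Equiv.Perm.coe_inv, Equiv.apply_symm_apply] at this
        exact this.symm
      rw [Subgroup.coe_mul, Equiv.Perm.mul_apply, InvMemClass.coe_inv,
        hfixinv ((g : Perm Ω) x), hg x]
    · intro g _; exact inv_mul_cancel_left g₀ g
    · intro g _; exact mul_inv_cancel_left g₀ g
    · intro g _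
      rw [Subgroup.coe_mul, map_mul, hsgn₀]
      push_cast
      ring
  linarith

lemma stabSum_pos (G : Subgroup (Perm Ω)) {a : ℕ} (f : Ω → Fin a)
    (h : ¬ ∃ g₀ : G, (∀ x, f ((g₀ : Perm Ω) x) = f x) ∧
      Equiv.Perm.sign (g₀ : Perm Ω) = -1) : 0 < stabSum G f := by
  push_neg at h
  have hterm : ∀ g ∈ (Finset.univ : Finset G).filter
      (fun g : G => ∀ x, f ((g : Perm Ω) x) = f x),
      ((Equiv.Perm.sign (g : Perm Ω) : ℤˣ) : ℤ) = 1 := by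
    intro g hg
    simp only [Finset.mem_filter, Finset.mem_univ, true_and] at hg
    rcases Int.units_eq_one_or (Equiv.Perm.sign (g : Perm Ω)) with hs | hs
    · rw [hs]; rfl
    · exact absurd hs (h g hg)
  rw [stabSum, Finset.sum_congr rfl hterm, Finset.sum_const, nsmul_eq_mul, mul_one]
  have hmem : (1 : G) ∈ (Finset.univ : Finset G).filter
      (fun g : G => ∀ x, f ((g : Perm Ω) x) = f x) := by
    simp
  have := Finset.card_pos.mpr ⟨1, hmem⟩
  exact_mod_cast this

lemma stabSum_nonneg (G : Subgroup (Perm Ω)) {a : ℕ} (f : Ω → Fin a) :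
    0 ≤ stabSum G f := by
  by_cases h : ∃ g₀ : G, (∀ x, f ((g₀ : Perm Ω) x) = f x) ∧
      Equiv.Perm.sign (g₀ : Perm Ω) = -1
  · rw [stabSum_eq_zero G f h]
  · exact le_of_lt (stabSum_pos G f h)

lemma eval_cyclePoly (G : Subgroup (Perm Ω)) (a : ℕ) :
    (cyclePoly G).eval (-(a : ℤ)) =
      (-1) ^ (Fintype.card Ω) * ∑ f : Ω → Fin a, stabSum G f := by
  have step1 : (cyclePoly G).eval (-(a : ℤ)) =
      (-1) ^ (Fintype.card Ω) * ∑ g : G,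
        ((Equiv.Perm.sign (g : Perm Ω) : ℤˣ) : ℤ) * (a : ℤ) ^ cycleCount (g : Perm Ω) := by
    rw [cyclePoly, eval_finset_sum, Finset.mul_sum]
    refine Finset.sum_congr rfl fun g _ => ?_
    rw [eval_pow, eval_X, sign_eq_pow_cycleCount, neg_pow (a : ℤ), pow_add]
    have h2 : (-1 : ℤ) ^ Fintype.card Ω * (-1) ^ Fintype.card Ω = 1 := by
      rw [← pow_add]; exact Even.neg_one_pow ⟨Fintype.card Ω, rfl⟩
    ring_nf
    ring_nf at h2
    rw [h2]; ring
  rw [step1]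
  congr 1
  -- double counting
  have hcard : ∀ g : G, (a : ℤ) ^ cycleCount (g : Perm Ω) =
      (((Finset.univ : Finset (Ω → Fin a)).filter
        (fun f : Ω → Fin a => ∀ x, f ((g : Perm Ω) x) = f x)).card : ℤ) := by
    intro g
    have hc := card_fixed_colorings (g : Perm Ω) a
    rw [Fintype.card_subtype] at hc
    exact_mod_cast hc.symm
  calc ∑ g : G, ((Equiv.Perm.sign (g : Perm Ω) : ℤˣ) : ℤ) * (a : ℤ) ^ cycleCount (g : Perm Ω)
      = ∑ g : G, ∑ f ∈ (Finset.univ : Finset (Ω → Fin a)).filter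
          (fun f : Ω → Fin a => ∀ x, f ((g : Perm Ω) x) = f x),
          ((Equiv.Perm.sign (g : Perm Ω) : ℤˣ) : ℤ) := by
        refine Finset.sum_congr rfl fun g _ => ?_
        rw [hcard g, Finset.sum_const, nsmul_eq_mul, mul_comm]
    _ = ∑ g : G, ∑ f : Ω → Fin a,
          if (∀ x, f ((g : Perm Ω) x) = f x) then
            ((Equiv.Perm.sign (g : Perm Ω) : ℤˣ) : ℤ) else 0 := by
        refine Finset.sum_congr rfl fun g _ => ?_
        rw [Finset.sum_filter]
    _ = ∑ f : Ω → Fin a, ∑ g : G,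
          if (∀ x, f ((g : Perm Ω) x) = f x) then
            ((Equiv.Perm.sign (g : Perm Ω) : ℤˣ) : ℤ) else 0 := Finset.sum_comm
    _ = ∑ f : Ω → Fin a, stabSum G f := by
        refine Finset.sum_congr rfl fun f _ => ?_
        rw [stabSum, Finset.sum_filter]

end Aux

theorem cyclePoly_neg_root_of_le {Ω : Type*} [Fintype Ω]
    (G₁ G₂ : Subgroup (Equiv.Perm Ω)) (hle : G₁ ≤ G₂)
    (a : ℕ) (ha : 0 < a) (h : (cyclePoly G₁).eval (-(a : ℤ)) = 0) :
    (cyclePoly G₂).eval (-(a : ℤ)) = 0 := by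
  rw [eval_cyclePoly] at h ⊢
  have hn1 : ((-1 : ℤ)) ^ (Fintype.card Ω) ≠ 0 := pow_ne_zero _ (by norm_num)
  have hsum : ∑ f : Ω → Fin a, stabSum G₁ f = 0 := by
    rcases mul_eq_zero.mp h with h' | h'
    · exact absurd h' hn1
    · exact h'
  have hzero : ∀ f : Ω → Fin a, stabSum G₁ f = 0 := fun f =>
    (Finset.sum_eq_zero_iff_of_nonneg (fun f _ => stabSum_nonneg G₁ f)).mp hsum f
      (Finset.mem_univ f)
  have h2 : ∀ f : Ω → Fin a, stabSum G₂ f = 0 := by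
    intro f
    have hex : ∃ g₀ : G₁, (∀ x, f ((g₀ : Equiv.Perm Ω) x) = f x) ∧
        Equiv.Perm.sign (g₀ : Equiv.Perm Ω) = -1 := by
      by_contra hno
      exact absurd (hzero f) (ne_of_gt (stabSum_pos G₁ f hno))
    obtain ⟨g₀, hfix, hsgn⟩ := hex
    exact stabSum_eq_zero G₂ f ⟨⟨(g₀ : Equiv.Perm Ω), hle g₀.2⟩, hfix, hsgn⟩
  rw [Finset.sum_eq_zero (fun f _ => h2 f), mul_zero]
end
end

section
/- For n odd and m > 1, the cycle polynomial of G = S_n ≀ S_m (in its imprimitive action on nm points) satisfies F_G(-a) = 0 for all integers a with 1 ≤ a ≤ n. -/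
open Polynomial

open scoped Classical

noncomputable section

/-- The wreath product `G ≀ H` in its imprimitive action on `Ω × Δ`: the subgroup of
permutations of the form `(ω, d) ↦ (f d ω, h d)` with each `f d ∈ G` and `h ∈ H`.
(This set is already closed under the group operations, so it equals its closure.) -/
def wreath {Ω Δ : Type*} [Fintype Ω] [Fintype Δ]
    (G : Subgroup (Equiv.Perm Ω)) (H : Subgroup (Equiv.Perm Δ)) :
    Subgroup (Equiv.Perm (Ω × Δ)) :=
  Subgroup.closure {π : Equiv.Perm (Ω × Δ) | ∃ (f : Δ → Equiv.Perm Ω) (h : Equiv.Perm Δ),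
    (∀ d, f d ∈ G) ∧ h ∈ H ∧ ∀ p : Ω × Δ, π p = (f p.2 p.1, h p.2)}

namespace CPAux

open Equiv Equiv.Perm MulAction

variable {Ω : Type*} [Fintype Ω]

lemma orbitRel_iff_sameCycle (g : Equiv.Perm Ω) (x y : Ω) :
    (MulAction.orbitRel (Subgroup.zpowers g) Ω) x y ↔ g.SameCycle y x := by
  rw [MulAction.orbitRel_apply, MulAction.mem_orbit_iff]
  constructor
  · rintro ⟨⟨u, k, rfl⟩, h⟩
    exact ⟨k, h⟩
  · rintro ⟨k, h⟩
    exact ⟨⟨g ^ k, k, rfl⟩, h⟩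

/-- A chosen point on a cycle factor. -/
lemma cycle_support_nonempty (g : Equiv.Perm Ω)
    (c : {c : Equiv.Perm Ω // c ∈ g.cycleFactorsFinset}) :
    (c : Equiv.Perm Ω).support.Nonempty :=
  Finset.card_pos.1 (lt_of_lt_of_le (by norm_num)
    ((Equiv.Perm.mem_cycleFactorsFinset_iff.1 c.2).1.two_le_card_support))

def cpt (g : Equiv.Perm Ω) (c : {c : Equiv.Perm Ω // c ∈ g.cycleFactorsFinset}) : Ω :=
  (cycle_support_nonempty g c).choose

lemma cpt_mem (g : Equiv.Perm Ω) (c : {c : Equiv.Perm Ω // c ∈ g.cycleFactorsFinset}) :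
    cpt g c ∈ (c : Equiv.Perm Ω).support :=
  (cycle_support_nonempty g c).choose_spec

/-- Orbits of `⟨g⟩` are fixed points together with cycle factors. -/
def quotEquivSum (g : Equiv.Perm Ω) :
    MulAction.orbitRel.Quotient (Subgroup.zpowers g) Ω ≃
      ({x : Ω // g x = x} ⊕ {c : Equiv.Perm Ω // c ∈ g.cycleFactorsFinset}) where
  toFun := Quotient.lift (fun x => if h : g x = x then Sum.inl ⟨x, h⟩ else
      Sum.inr ⟨g.cycleOf x, cycleOf_mem_cycleFactorsFinset_iff.2 (mem_support.2 h)⟩)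
    (by
      intro x y hxy
      have hs : g.SameCycle y x := (orbitRel_iff_sameCycle g x y).1 hxy
      by_cases hy : g y = y
      · obtain ⟨k, hk⟩ := hs
        have : x = y := by
          rw [← hk, zpow_apply_eq_self_of_apply_eq_self hy k]
        subst this
        rfl
      · by_cases hx : g x = x
        · obtain ⟨k, hk⟩ := hs.symm
          exact absurd (by rw [← hk, zpow_apply_eq_self_of_apply_eq_self hx k]; exact hx) hy
        · simp only [dif_neg hx, dif_neg hy]
          exact congrArg Sum.inr (Subtype.ext hs.cycleOf_eq.symm))
  invFun := Sum.elim (fun x => Quotient.mk'' x.1) (fun c => Quotient.mk'' (cpt g c))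
  left_inv := by
    intro q
    induction q using Quotient.inductionOn' with
    | h x =>
      show Sum.elim _ _ (Quotient.lift _ _ (Quotient.mk'' x)) = _
      by_cases h : g x = x
      · simp [h]
      · simp only [Quotient.lift_mk, dif_neg h, Sum.elim_inr]
        apply Quotient.sound'
        rw [orbitRel_iff_sameCycle]
        have := cpt_mem g ⟨g.cycleOf x,
          cycleOf_mem_cycleFactorsFinset_iff.2 (mem_support.2 h)⟩
        exact (mem_support_cycleOf_iff.1 this).1
  right_inv := by
    rintro (⟨x, hx⟩ | ⟨c, hc⟩)
    · simp [hx]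
    · have hy := cpt_mem g ⟨c, hc⟩
      have hceq : c = g.cycleOf (cpt g ⟨c, hc⟩) := cycle_is_cycleOf hy hc
      have hgy : g (cpt g ⟨c, hc⟩) ≠ cpt g ⟨c, hc⟩ := by
        have h1 := (mem_cycleFactorsFinset_iff.1 hc).2 _ hy
        have h2 := mem_support.1 hy
        rw [h1] at h2
        exact h2
      show Quotient.lift _ _ (Quotient.mk'' (cpt g ⟨c, hc⟩)) = _
      simp only [Quotient.lift_mk, dif_neg hgy]
      exact congrArg Sum.inr (Subtype.ext hceq.symm)

lemma cycleCount_eq (g : Equiv.Perm Ω) :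
    cycleCount g + g.support.card = Fintype.card Ω + Multiset.card g.cycleType := by
  have h1 : cycleCount g =
      Fintype.card {x : Ω // g x = x} + g.cycleFactorsFinset.card := by
    rw [cycleCount, Nat.card_congr (quotEquivSum g), Nat.card_sum,
      Nat.card_eq_fintype_card, Nat.card_eq_fintype_card, Fintype.card_coe]
  have h2 : Fintype.card {x : Ω // g x = x} + g.support.card = Fintype.card Ω := by
    have hfilter : (Finset.univ.filter fun x => ¬ g x = x) = g.support := by
      ext x
      simp [Equiv.Perm.mem_support]
    have := Finset.card_filter_add_card_filter_not
      (s := (Finset.univ : Finset Ω)) (p := fun x => g x = x)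
    rw [Finset.card_univ, hfilter] at this
    rw [Fintype.card_subtype, this]
  have h3 : Multiset.card g.cycleType = g.cycleFactorsFinset.card := by
    rw [cycleType_def, Multiset.card_map]
    rfl
  omega

lemma neg_one_pow_cycleCount (g : Equiv.Perm Ω) :
    ((-1 : ℤ)) ^ cycleCount g = (-1) ^ Fintype.card Ω * (Equiv.Perm.sign g : ℤ) := by
  have h1 : (Equiv.Perm.sign g : ℤ) =
      (-1) ^ (g.support.card + Multiset.card g.cycleType) := by
    rw [sign_of_cycleType g, ← g.sum_cycleType]
    push_cast
    ring
  rw [h1, ← pow_add]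
  have h2 := cycleCount_eq g
  have key : ∀ a b : ℕ, a % 2 = b % 2 → ((-1 : ℤ)) ^ a = (-1) ^ b := by
    intro a b hab
    rw [← Nat.div_add_mod a 2, ← Nat.div_add_mod b 2, hab, pow_add, pow_add,
      pow_mul, pow_mul]
    norm_num
  exact key _ _ (by omega)

lemma card_invariant_colorings (g : Equiv.Perm Ω) (a : ℕ) :
    Nat.card {f : Ω → Fin a // ∀ x, f (g x) = f x} = a ^ cycleCount g := by
  have E : (MulAction.orbitRel.Quotient (Subgroup.zpowers g) Ω → Fin a) ≃
      {f : Ω → Fin a // ∀ x, f (g x) = f x} := by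
    refine
      { toFun := fun F => ⟨fun x => F (Quotient.mk'' x), fun x => congrArg F ?_⟩
        invFun := fun f => Quotient.lift (f : Ω → Fin a) ?_
        left_inv := ?_
        right_inv := ?_ }
    · apply Quotient.sound'
      rw [orbitRel_iff_sameCycle]
      exact ⟨1, by simp⟩
    · intro x y hxy
      have hf : ∀ x, (f : Ω → Fin a) (g x) = (f : Ω → Fin a) x := f.2
      have hs : g.SameCycle y x := (orbitRel_iff_sameCycle g x y).1 hxy
      obtain ⟨k, hk⟩ := hs
      have key : ∀ k : ℤ, ∀ z : Ω, (f : Ω → Fin a) ((g ^ k) z) = (f : Ω → Fin a) z := by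
        intro k
        induction k using Int.induction_on with
        | zero => simp
        | succ i ih =>
          intro z
          rw [zpow_add_one, Equiv.Perm.mul_apply, ih (g z), hf z]
        | pred i ih =>
          intro z
          rw [zpow_sub_one, Equiv.Perm.mul_apply, ih (g⁻¹ z)]
          conv_rhs => rw [← (show g (g⁻¹ z) = z from Equiv.apply_symm_apply g z)]
          exact (hf (g⁻¹ z)).symm
      rw [← hk, key k y]
    · intro F
      funext q
      induction q using Quotient.inductionOn' with
      | h x => rfl
    · intro f
      apply Subtype.ext
      funext x
      rfl
  rw [← Nat.card_congr E, Nat.card_fun, Nat.card_eq_fintype_card (α := Fin a),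
    Fintype.card_fin, cycleCount]

lemma stab_sum_zero (W : Subgroup (Equiv.Perm Ω)) {a : ℕ} (f : Ω → Fin a)
    (τ : Equiv.Perm Ω) (hτW : τ ∈ W) (hsign : Equiv.Perm.sign τ = -1)
    (hτf : ∀ x, f (τ x) = f x) :
    ∑ g : W, (if ∀ x, f ((g : Equiv.Perm Ω) x) = f x
      then ((Equiv.Perm.sign (g : Equiv.Perm Ω) : ℤˣ) : ℤ) else 0) = 0 := by
  set F : W → ℤ := fun g => if ∀ x, f ((g : Equiv.Perm Ω) x) = f x
      then ((Equiv.Perm.sign (g : Equiv.Perm Ω) : ℤˣ) : ℤ) else 0 with hF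
  have hpt : ∀ g : W, F ((Equiv.mulLeft (⟨τ, hτW⟩ : W)) g) = -(F g) := by
    intro g
    show F ((⟨τ, hτW⟩ : W) * g) = -(F g)
    have hco : (((⟨τ, hτW⟩ : W) * g : W) : Equiv.Perm Ω) = τ * (g : Equiv.Perm Ω) := rfl
    simp only [hF, hco]
    have hcond : (∀ x, f ((τ * (g : Equiv.Perm Ω)) x) = f x) ↔
        (∀ x, f ((g : Equiv.Perm Ω) x) = f x) := by
      constructor
      · intro h x
        have := h x
        rwa [Equiv.Perm.mul_apply, hτf] at this
      · intro h x
        rw [Equiv.Perm.mul_apply, hτf, h]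
    by_cases h : ∀ x, f ((g : Equiv.Perm Ω) x) = f x
    · rw [if_pos (hcond.2 h), if_pos h, map_mul, hsign]
      push_cast
      ring
    · rw [if_neg (fun hc => h (hcond.1 hc)), if_neg h, neg_zero]
  have key : ∑ g : W, F g = - ∑ g : W, F g := by
    calc ∑ g : W, F g
        = ∑ g : W, F ((Equiv.mulLeft (⟨τ, hτW⟩ : W)) g) :=
          (Fintype.sum_equiv (Equiv.mulLeft (⟨τ, hτW⟩ : W)) _ F (fun g => rfl)).symm
      _ = ∑ g : W, -(F g) := Finset.sum_congr rfl fun g _ => hpt g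
      _ = - ∑ g : W, F g := Finset.sum_neg_distrib _
  linarith [key]

lemma eval_eq_zero (W : Subgroup (Equiv.Perm Ω)) (a : ℕ)
    (h : ∀ f : Ω → Fin a, ∃ τ : Equiv.Perm Ω, τ ∈ W ∧ Equiv.Perm.sign τ = -1 ∧
      ∀ x, f (τ x) = f x) :
    (cyclePoly W).eval (-(a : ℤ)) = 0 := by
  have heval : (cyclePoly W).eval (-(a : ℤ)) =
      ∑ g : W, (-(a : ℤ)) ^ cycleCount (g : Equiv.Perm Ω) := by
    simp [cyclePoly, eval_finset_sum]
  rw [heval]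
  have hterm : ∀ g : Equiv.Perm Ω, (-(a : ℤ)) ^ cycleCount g =
      (-1) ^ Fintype.card Ω * (((Equiv.Perm.sign g : ℤˣ) : ℤ) *
        ∑ f : Ω → Fin a, (if ∀ x, f (g x) = f x then 1 else 0)) := by
    intro g
    have h1 : (-(a : ℤ)) ^ cycleCount g = (-1) ^ cycleCount g * (a : ℤ) ^ cycleCount g := by
      rw [← neg_one_mul, mul_pow]
    have h2 : ((a : ℤ)) ^ cycleCount g =
        ∑ f : Ω → Fin a, (if ∀ x, f (g x) = f x then 1 else 0) := by
      have hcard : (Finset.univ.filter fun f : Ω → Fin a => ∀ x, f (g x) = f x).card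
          = a ^ cycleCount g := by
        rw [← card_invariant_colorings g a, Nat.card_eq_fintype_card, Fintype.card_subtype]
      rw [Finset.sum_boole, hcard]
      push_cast
      ring
    rw [h1, h2, neg_one_pow_cycleCount g]
    ring
  calc ∑ g : W, (-(a : ℤ)) ^ cycleCount (g : Equiv.Perm Ω)
      = (-1) ^ Fintype.card Ω * ∑ g : W, ∑ f : Ω → Fin a,
          (if ∀ x, f ((g : Equiv.Perm Ω) x) = f x
            then ((Equiv.Perm.sign (g : Equiv.Perm Ω) : ℤˣ) : ℤ) else 0) := by
        rw [Finset.mul_sum]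
        refine Finset.sum_congr rfl fun g _ => ?_
        rw [hterm (g : Equiv.Perm Ω)]
        congr 1
        rw [Finset.mul_sum]
        refine Finset.sum_congr rfl fun f _ => ?_
        by_cases hc : ∀ x, f ((g : Equiv.Perm Ω) x) = f x <;> simp [hc]
    _ = (-1) ^ Fintype.card Ω * ∑ f : Ω → Fin a, ∑ g : W,
          (if ∀ x, f ((g : Equiv.Perm Ω) x) = f x
            then ((Equiv.Perm.sign (g : Equiv.Perm Ω) : ℤˣ) : ℤ) else 0) := by
        rw [Finset.sum_comm]
    _ = 0 := by
        rw [Finset.sum_congr rfl fun f _ => ?_, Finset.sum_const_zero, mul_zero]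
        obtain ⟨τ, hτW, hsign, hτf⟩ := h f
        exact stab_sum_zero W f τ hτW hsign hτf

end CPAux

namespace CPAux

lemma exists_tau (n m a : ℕ) (hn : Odd n) (hm : 1 < m) (ha : a ≤ n)
    (f : Fin n × Fin m → Fin a) :
    ∃ τ : Equiv.Perm (Fin n × Fin m),
      τ ∈ wreath (⊤ : Subgroup (Equiv.Perm (Fin n))) (⊤ : Subgroup (Equiv.Perm (Fin m))) ∧
      Equiv.Perm.sign τ = -1 ∧ ∀ p, f (τ p) = f p := by
  by_cases hinj : ∀ d : Fin m, Function.Injective fun x => f (x, d)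
  · -- every column is injective, hence a bijection onto `Fin a` with `a = n`
    have hn1 : 0 < n := hn.pos
    set d1 : Fin m := ⟨0, by omega⟩ with hd1
    set d2 : Fin m := ⟨1, hm⟩ with hd2
    have hd : d1 ≠ d2 := by
      simp [hd1, hd2, Fin.ext_iff]
    have han : n ≤ a := by
      have := Fintype.card_le_of_injective _ (hinj d1)
      simpa using this
    have haa : a = n := le_antisymm ha han
    have hbij : ∀ d : Fin m, Function.Bijective fun x => f (x, d) := fun d =>
      (Fintype.bijective_iff_injective_and_card _).2 ⟨hinj d, by simp [haa]⟩
    set e1 := Equiv.ofBijective _ (hbij d1) with he1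
    set e2 := Equiv.ofBijective _ (hbij d2) with he2
    set σ : Equiv.Perm (Fin n) := e1.trans e2.symm with hσdef
    have hσ : ∀ x, f (σ x, d2) = f (x, d1) := by
      intro x
      have h1 : e2 (σ x) = e1 x := by
        simp [hσdef]
      simpa [he1, he2, Equiv.ofBijective] using h1
    set v : Fin m → Equiv.Perm (Fin n) :=
      fun d => if d = d1 then σ⁻¹ else if d = d2 then σ else 1 with hv
    set s : Equiv.Perm (Fin m) := Equiv.swap d1 d2 with hs
    set B : Equiv.Perm (Fin n × Fin m) :=
      Equiv.prodCongrRight (fun _ : Fin n => s) with hB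
    set A : Equiv.Perm (Fin n × Fin m) := Equiv.prodCongrLeft v with hA
    have happly : ∀ p : Fin n × Fin m, (A * B) p = (v (s p.2) p.1, s p.2) := by
      intro p
      rfl
    refine ⟨A * B, ?_, ?_, ?_⟩
    · apply Subgroup.subset_closure
      exact ⟨fun d => v (s d), s, fun d => trivial, trivial, happly⟩
    · have hsA : Equiv.Perm.sign A = 1 := by
        rw [hA, Equiv.Perm.sign_prodCongrLeft]
        have hsub : ({d1, d2} : Finset (Fin m)) ⊆ Finset.univ := Finset.subset_univ _
        rw [← Finset.prod_sdiff hsub]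
        have hout : ∀ d ∈ (Finset.univ \ {d1, d2} : Finset (Fin m)),
            Equiv.Perm.sign (v d) = 1 := by
          intro d hdmem
          simp only [Finset.mem_sdiff, Finset.mem_insert, Finset.mem_singleton] at hdmem
          push_neg at hdmem
          rw [hv]
          simp [hdmem.2.1, hdmem.2.2]
        rw [Finset.prod_eq_one hout, one_mul, Finset.prod_pair hd]
        rw [hv]
        simp [hd, hd.symm, Ne.symm hd]
      have hsB : Equiv.Perm.sign B = -1 := by
        rw [hB, Equiv.Perm.sign_prodCongrRight]
        rw [Finset.prod_const, Finset.card_univ, Fintype.card_fin,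
          hs, Equiv.Perm.sign_swap hd]
        exact Odd.neg_one_pow hn
      rw [map_mul, hsA, hsB, one_mul]
    · intro p
      rw [happly]
      rcases p with ⟨x, d⟩
      by_cases h1 : d = d1
      · subst h1
        have hsd : s d1 = d2 := Equiv.swap_apply_left d1 d2
        rw [hsd]
        have hvd2 : v d2 = σ := by
          rw [hv]
          simp [Ne.symm hd]
        rw [hvd2]
        exact hσ x
      · by_cases h2 : d = d2
        · subst h2
          have hsd : s d2 = d1 := Equiv.swap_apply_right d1 d2
          rw [hsd]
          have hvd1 : v d1 = σ⁻¹ := by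
            rw [hv]
            simp
          rw [hvd1]
          have := hσ (σ⁻¹ x)
          rw [(show σ (σ⁻¹ x) = x from Equiv.apply_symm_apply σ x)] at this
          exact this.symm
        · have hsd : s d = d := Equiv.swap_apply_of_ne_of_ne h1 h2
          rw [hsd]
          have hvd : v d = 1 := by
            rw [hv]
            simp [h1, h2]
          rw [hvd]
          rfl
  · -- some column has a repeated color: use a transposition in that column
    obtain ⟨d, hdni⟩ := not_forall.1 hinj
    obtain ⟨x, y, hfxy, hxy⟩ := Function.not_injective_iff.1 hdni
    have hne : (x, d) ≠ (y, d) := fun h => hxy (congrArg Prod.fst h)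
    refine ⟨Equiv.swap (x, d) (y, d), ?_, Equiv.Perm.sign_swap hne, ?_⟩
    · apply Subgroup.subset_closure
      refine ⟨fun e => if e = d then Equiv.swap x y else 1, 1,
        fun e => trivial, trivial, ?_⟩
      rintro ⟨z, e⟩
      by_cases he : e = d
      · subst he
        simp only [eq_self_iff_true, if_true]
        by_cases hz1 : z = x
        · subst hz1
          simp [Equiv.swap_apply_left]
        · by_cases hz2 : z = y
          · subst hz2
            simp [Equiv.swap_apply_right]
          · rw [Equiv.swap_apply_of_ne_of_ne hz1 hz2,
              Equiv.swap_apply_of_ne_of_ne (fun h => hz1 (congrArg Prod.fst h))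
                (fun h => hz2 (congrArg Prod.fst h))]
            rfl
      · rw [Equiv.swap_apply_of_ne_of_ne (fun h => he (congrArg Prod.snd h))
          (fun h => he (congrArg Prod.snd h))]
        simp [he]
    · rintro ⟨z, e⟩
      by_cases hp1 : (z, e) = (x, d)
      · rw [hp1, Equiv.swap_apply_left]
        exact hfxy.symm
      · by_cases hp2 : (z, e) = (y, d)
        · rw [hp2, Equiv.swap_apply_right]
          exact hfxy
        · rw [Equiv.swap_apply_of_ne_of_ne hp1 hp2]

end CPAux

theorem cyclePoly_wreath_symm_roots (n m : ℕ) (hn : Odd n) (hm : 1 < m) :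
    ∀ a : ℕ, 1 ≤ a → a ≤ n →
      (cyclePoly (wreath (⊤ : Subgroup (Equiv.Perm (Fin n)))
          (⊤ : Subgroup (Equiv.Perm (Fin m))))).eval (-(a : ℤ)) = 0 := by
  intro a _ ha
  exact CPAux.eval_eq_zero _ a fun f => by
    obtain ⟨τ, h1, h2, h3⟩ := CPAux.exists_tau n m a hn hm ha f
    refine ⟨τ, h1, ?_, h3⟩
    convert h2 using 2
    congr!
end
end

section
/- (K_n, G) is a reciprocal pair (i.e., P_{K_n,G}(x) = (-1)^n F_G(-x)) if and only if G = S_n. -/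
open Polynomial

open scoped Classical

noncomputable section

/-- The number of proper `a`-colourings of the graph `Γ` fixed by the permutation `g`;
this is the evaluation at `a` of the chromatic polynomial of the contracted graph `Γ/g`. -/
def fixedProperColorings {Ω : Type*} [Fintype Ω] (Γ : SimpleGraph Ω)
    (g : Equiv.Perm Ω) (a : ℕ) : ℕ :=
  Nat.card {f : Ω → Fin a // (∀ v w, Γ.Adj v w → f v ≠ f w) ∧ ∀ v, f (g v) = f v}

/-- `p` is the orbital chromatic polynomial of the pair `(Γ, G)`: its value at every
natural number `a` is `∑_{g ∈ G} P_{Γ/g}(a)`, the number of proper `a`-colourings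
fixed by `g`, summed over `g ∈ G`. -/
def IsOrbitalChromaticPoly {Ω : Type*} [Fintype Ω] (Γ : SimpleGraph Ω)
    (G : Subgroup (Equiv.Perm Ω)) (p : Polynomial ℤ) : Prop :=
  ∀ a : ℕ, p.eval (a : ℤ) = ∑ g : G, (fixedProperColorings Γ (g : Equiv.Perm Ω) a : ℤ)

namespace RecAux

attribute [local instance] arrowAction

set_option linter.unusedSectionVars false

variable {Ω : Type*} [Fintype Ω]

lemma pow_fix {β : Type*} (g : Equiv.Perm Ω) (f : Ω → β) (hf : ∀ v, f (g v) = f v) :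
    ∀ (k : ℤ) (v : Ω), f ((g ^ k) v) = f v := by
  intro k
  induction k using Int.induction_on with
  | zero => simp
  | succ n ih =>
    intro v
    have h : (g ^ ((n : ℤ) + 1)) v = (g ^ (n : ℤ)) (g v) := by
      rw [zpow_add_one]; rfl
    rw [h, ih, hf]
  | pred n ih =>
    intro v
    have h : (g ^ (-(n : ℤ) - 1)) v = (g ^ (-(n : ℤ))) (g⁻¹ v) := by
      rw [zpow_sub_one]; rfl
    have h2 : f (g⁻¹ v) = f v := by
      have := hf (g⁻¹ v); rw [show g (g⁻¹ v) = v from g.apply_symm_apply v] at this; exact this.symm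
    rw [h, ih, h2]

/-- Functions fixed by `g` are exactly the functions on the orbit space of `⟨g⟩`. -/
def fixedEquiv {β : Type*} (g : Equiv.Perm Ω) :
    {f : Ω → β // ∀ v, f (g v) = f v} ≃
      (MulAction.orbitRel.Quotient (Subgroup.zpowers g) Ω → β) where
  toFun f := Quotient.lift f.1 (by
    rintro a b ⟨⟨h, hh⟩, rfl⟩
    obtain ⟨k, rfl⟩ := Subgroup.mem_zpowers_iff.mp hh
    exact pow_fix g f.1 f.2 k b)
  invFun h := ⟨fun v => h ⟦v⟧,
    fun v => congrArg h (Quotient.sound ⟨⟨g, Subgroup.mem_zpowers g⟩, rfl⟩)⟩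
  left_inv f := rfl
  right_inv h := funext fun q => Quotient.inductionOn q fun v => rfl

lemma card_fixed (g : Equiv.Perm Ω) (m : ℕ) :
    Nat.card {f : Ω → Fin m // ∀ v, f (g v) = f v} = m ^ cycleCount g := by
  rw [Nat.card_congr (fixedEquiv g), Nat.card_fun]
  simp [cycleCount]

lemma cycleCount_inv (g : Equiv.Perm Ω) : cycleCount g⁻¹ = cycleCount g := by
  unfold cycleCount
  rw [Subgroup.zpowers_inv]

/-- The multiset of values of `f`. -/
def valMS (m : ℕ) (f : Ω → Fin m) : Sym (Fin m) (Fintype.card Ω) :=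
  ⟨Finset.univ.val.map f, by simp⟩

lemma valMS_smul (m : ℕ) (σ : Equiv.Perm Ω) (f : Ω → Fin m) :
    valMS m (σ • f) = valMS m f := by
  apply Subtype.ext
  show Multiset.map (fun a => f (σ⁻¹ • a)) Finset.univ.val = Multiset.map f Finset.univ.val
  have : (fun a => f (σ⁻¹ • a)) = f ∘ (σ⁻¹ : Equiv.Perm Ω) := rfl
  rw [this, ← Multiset.map_map, Multiset.map_univ_val_equiv (σ⁻¹ : Equiv.Perm Ω)]

lemma card_fiber_eq_count (m : ℕ) (f : Ω → Fin m) (j : Fin m) :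
    Fintype.card {x // f x = j} = Multiset.count j (Multiset.map f Finset.univ.val) := by
  rw [Multiset.count_map, Fintype.card_subtype]
  rw [Finset.card, Finset.filter_val]
  exact congrArg _ (Multiset.filter_congr (fun x _ => by simp [eq_comm]))

/-- The map from orbits of `Perm Ω` acting on functions `Ω → Fin m` to multisets. -/
def toSym (m : ℕ) :
    Quotient (MulAction.orbitRel (Equiv.Perm Ω) (Ω → Fin m)) → Sym (Fin m) (Fintype.card Ω) :=
  Quotient.lift (valMS m) (by
    rintro f₁ f₂ ⟨σ, rfl⟩
    exact valMS_smul m σ f₂)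

lemma toSym_bij (m : ℕ) : Function.Bijective (toSym (Ω := Ω) m) := by
  constructor
  · rintro ⟨f₁⟩ ⟨f₂⟩ h
    have hms : Multiset.map f₁ Finset.univ.val = Multiset.map f₂ Finset.univ.val :=
      congrArg Subtype.val h
    have key : ∀ j, Fintype.card {x // f₁ x = j} = Fintype.card {x // f₂ x = j} := by
      intro j
      rw [card_fiber_eq_count, card_fiber_eq_count, hms]
    set e : ∀ j, {x // f₁ x = j} ≃ {x // f₂ x = j} := fun j => Fintype.equivOfCardEq (key j)
    set τ : Ω ≃ Ω := Equiv.ofFiberEquiv e with hτdef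
    have hτ : ∀ x, f₂ (τ x) = f₁ x := fun x => Equiv.ofFiberEquiv_map e x
    apply Quotient.sound
    refine ⟨τ⁻¹, ?_⟩
    funext x
    show f₂ ((τ⁻¹)⁻¹ • x) = f₁ x
    rw [inv_inv]
    exact hτ x
  · intro s
    obtain ⟨l, hl⟩ := Quotient.exists_rep s.1
    have hlen : Fintype.card Ω = l.length := by
      have := s.2
      rw [← hl] at this
      simpa using this.symm
    set e : Ω ≃ Fin l.length := (Fintype.equivFin Ω).trans (finCongr hlen) with hedef
    refine ⟨Quotient.mk _ (fun x => l.get (e x)), ?_⟩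
    apply Subtype.ext
    show Multiset.map (fun x => l.get (e x)) Finset.univ.val = s.1
    have h1 : (fun x => l.get (e x)) = l.get ∘ e := rfl
    rw [h1, ← Multiset.map_map, Multiset.map_univ_val_equiv e, Fin.univ_val_map, List.ofFn_get]
    exact hl

/-- Burnside count: `∑_{g ∈ S_Ω} m^{c(g)} = m(m+1)⋯(m+n-1)`. -/
lemma sum_pow_cycleCount (m : ℕ) :
    ∑ g : Equiv.Perm Ω, m ^ cycleCount g = m.ascFactorial (Fintype.card Ω) := by
  classical
  have burnside := MulAction.sum_card_fixedBy_eq_card_orbits_mul_card_group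
    (Equiv.Perm Ω) (Ω → Fin m)
  have h1 : ∀ g : Equiv.Perm Ω,
      Fintype.card (MulAction.fixedBy (Ω → Fin m) g) = m ^ cycleCount g⁻¹ := by
    intro g
    rw [← card_fixed (g⁻¹) m, Nat.card_eq_fintype_card]
    apply Fintype.card_congr
    apply Equiv.subtypeEquivRight
    intro f
    show (g • f = f) ↔ _
    constructor
    · intro h v
      conv_rhs => rw [← h]
      rfl
    · intro h
      funext a
      show f (g⁻¹ • a) = f a
      exact h a
  have h2 : Fintype.card (Quotient (MulAction.orbitRel (Equiv.Perm Ω) (Ω → Fin m)))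
      = Nat.multichoose m (Fintype.card Ω) := by
    rw [Fintype.card_congr (Equiv.ofBijective _ (toSym_bij (Ω := Ω) m)),
      Sym.card_sym_eq_multichoose, Fintype.card_fin]
  calc ∑ g : Equiv.Perm Ω, m ^ cycleCount g
      = ∑ g : Equiv.Perm Ω, m ^ cycleCount g⁻¹ := by
        apply Fintype.sum_equiv (Equiv.inv (Equiv.Perm Ω))
        intro g
        simp [Equiv.inv_apply, cycleCount_inv]
    _ = Fintype.card (Quotient (MulAction.orbitRel (Equiv.Perm Ω) (Ω → Fin m)))
          * Fintype.card (Equiv.Perm Ω) := by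
        rw [← burnside]
        exact Finset.sum_congr rfl fun g _ => (h1 g).symm
    _ = Nat.multichoose m (Fintype.card Ω) * (Fintype.card Ω).factorial := by
        rw [h2, Fintype.card_perm]
    _ = m.ascFactorial (Fintype.card Ω) := by
        rw [Nat.ascFactorial_eq_factorial_mul_choose', Nat.multichoose_eq, Nat.mul_comm]

lemma cyclePoly_eval_one (G : Subgroup (Equiv.Perm Ω)) :
    (cyclePoly G).eval 1 = (Nat.card G : ℤ) := by
  rw [cyclePoly, eval_finset_sum]
  simp [Nat.card_eq_fintype_card]

lemma fpc_one (a : ℕ) :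
    fixedProperColorings (⊤ : SimpleGraph Ω) 1 a = a.descFactorial (Fintype.card Ω) := by
  have he : {f : Ω → Fin a // (∀ v w, (⊤ : SimpleGraph Ω).Adj v w → f v ≠ f w) ∧
      ∀ v, f ((1 : Equiv.Perm Ω) v) = f v} ≃ (Ω ↪ Fin a) :=
    { toFun := fun f => ⟨f.1, fun v w h => by
        by_contra hne
        exact f.2.1 v w ((SimpleGraph.top_adj _ _).mpr hne) h⟩
      invFun := fun e => ⟨e, ⟨fun v w h hfe => ((SimpleGraph.top_adj _ _).mp h) (e.injective hfe),
        fun v => rfl⟩⟩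
      left_inv := fun f => rfl
      right_inv := fun e => rfl }
  rw [fixedProperColorings, Nat.card_congr he, Nat.card_eq_fintype_card,
    Fintype.card_embedding_eq, Fintype.card_fin]

lemma fpc_ne (g : Equiv.Perm Ω) (hg : g ≠ 1) (a : ℕ) :
    fixedProperColorings (⊤ : SimpleGraph Ω) g a = 0 := by
  rw [fixedProperColorings]
  rw [Nat.card_eq_zero]
  left
  constructor
  intro f
  obtain ⟨v, hv⟩ : ∃ v, g v ≠ v := by
    by_contra hc
    push_neg at hc
    exact hg (Equiv.ext hc)
  exact f.2.1 (g v) v ((SimpleGraph.top_adj _ _).mpr hv) (f.2.2 v)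

lemma p_eq_desc (G : Subgroup (Equiv.Perm Ω)) (p : Polynomial ℤ)
    (hp : IsOrbitalChromaticPoly (⊤ : SimpleGraph Ω) G p) :
    p = descPochhammer ℤ (Fintype.card Ω) := by
  have key : ∀ a : ℕ, p.eval (a : ℤ) = (descPochhammer ℤ (Fintype.card Ω)).eval (a : ℤ) := by
    intro a
    rw [hp a, descPochhammer_eval_eq_descFactorial]
    rw [Finset.sum_eq_single (1 : G)]
    · rw [Subgroup.coe_one, fpc_one]
    · intro g _ hgne
      have : (g : Equiv.Perm Ω) ≠ 1 :=
        fun hc => hgne (Subtype.ext (hc.trans (Subgroup.coe_one G).symm))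
      rw [fpc_ne _ this, Nat.cast_zero]
    · intro h
      exact absurd (Finset.mem_univ _) h
  have hz : p - descPochhammer ℤ (Fintype.card Ω) = 0 := by
    apply Polynomial.eq_zero_of_infinite_isRoot
    apply Set.Infinite.mono (s := Set.range ((↑) : ℕ → ℤ))
    · rintro _ ⟨a, rfl⟩
      simp [IsRoot, key a]
    · exact Set.infinite_range_of_injective Nat.cast_injective
  linear_combination hz

lemma desc_eq_neg_comp (n : ℕ) :
    descPochhammer ℤ n = (-1) ^ n * (ascPochhammer ℤ n).comp (-X) := by
  apply Polynomial.funext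
  intro r
  rw [eval_mul, eval_comp, eval_neg, eval_X, ascPochhammer_eval_neg_eq_descPochhammer]
  simp [← mul_assoc, ← mul_pow]

lemma desc_eval_neg_one (n : ℕ) :
    (descPochhammer ℤ n).eval (-1) = (-1) ^ n * n.factorial := by
  induction n with
  | zero => simp
  | succ k ih =>
    rw [descPochhammer_succ_right, eval_mul, ih, eval_sub, eval_X, eval_natCast,
      Nat.factorial_succ, pow_succ]
    push_cast
    ring

lemma cyclePoly_top :
    cyclePoly (⊤ : Subgroup (Equiv.Perm Ω)) = ascPochhammer ℤ (Fintype.card Ω) := by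
  have key : ∀ m : ℕ, (cyclePoly (⊤ : Subgroup (Equiv.Perm Ω))).eval (m : ℤ)
      = (ascPochhammer ℤ (Fintype.card Ω)).eval (m : ℤ) := by
    intro m
    have h1 : (cyclePoly (⊤ : Subgroup (Equiv.Perm Ω))).eval (m:ℤ)
        = ∑ g : (⊤ : Subgroup (Equiv.Perm Ω)), (m:ℤ) ^ cycleCount (g : Equiv.Perm Ω) := by
      rw [cyclePoly, eval_finset_sum]
      simp
    rw [h1]
    have h2 : ∑ g : (⊤ : Subgroup (Equiv.Perm Ω)), (m:ℤ) ^ cycleCount (g : Equiv.Perm Ω)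
        = ∑ g : Equiv.Perm Ω, (m:ℤ) ^ cycleCount g := by
      apply Fintype.sum_equiv (Equiv.subtypeUnivEquiv (fun g => Subgroup.mem_top g))
      intro g; rfl
    rw [h2, ← ascPochhammer_eval_cast, ascPochhammer_nat_eq_ascFactorial,
      ← sum_pow_cycleCount m]
    push_cast
    rfl
  have hz : cyclePoly (⊤ : Subgroup (Equiv.Perm Ω)) - ascPochhammer ℤ (Fintype.card Ω) = 0 := by
    apply Polynomial.eq_zero_of_infinite_isRoot
    apply Set.Infinite.mono (s := Set.range ((↑) : ℕ → ℤ))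
    · rintro _ ⟨a, rfl⟩
      simp [IsRoot, key a]
    · exact Set.infinite_range_of_injective Nat.cast_injective
  linear_combination hz

end RecAux

theorem reciprocal_completeGraph_iff {Ω : Type*} [Fintype Ω] [DecidableEq Ω]
    (G : Subgroup (Equiv.Perm Ω)) (p : Polynomial ℤ)
    (hp : IsOrbitalChromaticPoly (⊤ : SimpleGraph Ω) G p) :
    (p = (-1) ^ (Fintype.card Ω) * (cyclePoly G).comp (-X)) ↔ G = ⊤ := by
  have hpdesc := RecAux.p_eq_desc G p hp
  constructor
  · intro h
    rw [hpdesc] at h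
    have he := congrArg (Polynomial.eval (-1 : ℤ)) h
    rw [RecAux.desc_eval_neg_one] at he
    have hr : (((-1 : Polynomial ℤ)) ^ (Fintype.card Ω) * (cyclePoly G).comp (-X)).eval (-1)
        = (-1 : ℤ) ^ (Fintype.card Ω) * (Nat.card G : ℤ) := by
      have hX : eval (-1 : ℤ) (-X : Polynomial ℤ) = 1 := by simp
      rw [eval_mul, eval_comp, hX, eval_pow, eval_neg, eval_one]
      congr 1
      exact RecAux.cyclePoly_eval_one G
    rw [hr] at he
    have hcard : ((Fintype.card Ω).factorial : ℤ) = (Nat.card G : ℤ) :=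
      mul_left_cancel₀ (pow_ne_zero _ (by norm_num : (-1 : ℤ) ≠ 0)) he
    have hcard' : (Fintype.card Ω).factorial = Nat.card G := by exact_mod_cast hcard
    apply Subgroup.eq_top_of_card_eq
    rw [← hcard', Nat.card_eq_fintype_card, Fintype.card_perm]
  · intro h
    subst h
    rw [hpdesc, RecAux.cyclePoly_top, RecAux.desc_eq_neg_comp]
end
end

section
/- Suppose (Γ,G) is a reciprocal pair where Γ is a graph on n vertices and G ≤ Aut(Γ). Then the number of edges of Γ equals t(G) + t⁰(G), where t(G) is the number of transpositions in G and t⁰(G) is the number of transpositions (i,j) in G such that {i,j} is a non-edge of Γ. -/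
open Polynomial

open scoped Classical

noncomputable section

set_option linter.unusedSectionVars false
set_option linter.unusedVariables false
set_option maxHeartbeats 1000000

namespace RecipAux

variable {Ω : Type*} [Fintype Ω]

/-- the relation identifying exactly `i` and `j` -/
def clRel (i j : Ω) (v w : Ω) : Prop := v = w ∨ (v = i ∧ w = j) ∨ (v = j ∧ w = i)

lemma clRel_equivalence (i j : Ω) : Equivalence (clRel i j) := by
  constructor
  · intro x; exact Or.inl rfl
  · rintro x y (rfl | ⟨rfl, rfl⟩ | ⟨rfl, rfl⟩) <;> simp [clRel]
  · intro x y z h1 h2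
    rcases h1 with h1 | ⟨h1a, h1b⟩ | ⟨h1a, h1b⟩ <;>
      rcases h2 with h2 | ⟨h2a, h2b⟩ | ⟨h2a, h2b⟩ <;>
      subst_vars <;> simp_all [clRel] <;> tauto

lemma card_quot_eq (s : Setoid Ω) (h : ∀ v w, s.r v w → v = w) :
    Nat.card (Quotient s) = Fintype.card Ω := by
  rw [← Nat.card_eq_fintype_card]
  refine Nat.card_congr (Equiv.symm ⟨Quotient.mk s, fun q => q.out, fun v => ?_, fun q => ?_⟩)
  · exact h _ _ (Quotient.mk_out v)
  · exact Quotient.out_eq q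

lemma card_quot_pair (s : Setoid Ω) (i j : Ω) (hij : i ≠ j) (hr : s.r i j)
    (hle : ∀ v w, s.r v w → clRel i j v w) :
    Nat.card (Quotient s) = Fintype.card Ω - 1 := by
  have e : Quotient s ≃ {x : Ω // x ≠ j} := by
    refine ⟨Quotient.lift (fun v => if hv : v = j then ⟨i, hij⟩ else ⟨v, hv⟩) ?_,
      fun x => Quotient.mk s x.1, ?_, ?_⟩
    · intro v w hvw
      rcases hle v w hvw with rfl | ⟨rfl, rfl⟩ | ⟨rfl, rfl⟩
      · rfl
      · simp [hij]
      · simp [hij]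
    · intro q
      refine Quotient.inductionOn q (fun v => ?_)
      by_cases hv : v = j
      · simp only [Quotient.lift_mk, dif_pos hv]
        exact Quotient.sound (show s.r i v by rw [hv]; exact hr)
      · simp only [Quotient.lift_mk, dif_neg hv]
    · rintro ⟨x, hx⟩
      simp [hx]
  rw [Nat.card_congr e, Nat.card_eq_fintype_card]
  simp [Fintype.card_subtype_compl]

lemma card_quot_pair' (s : Setoid Ω) (hn : 2 ≤ Fintype.card Ω)
    (h : Nat.card (Quotient s) = Fintype.card Ω - 1) :
    ∃ i j : Ω, i ≠ j ∧ s.r i j ∧ ∀ v w, s.r v w → clRel i j v w := by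
  classical
  haveI : Fintype (Quotient s) := Fintype.ofFinite _
  rw [Nat.card_eq_fintype_card] at h
  -- the quotient map is not injective
  have hnotinj : ¬ Function.Injective (Quotient.mk s) := by
    intro hinj
    have := Fintype.card_of_bijective ⟨hinj, Quotient.mk_surjective⟩
    omega
  simp only [Function.Injective, not_forall] at hnotinj
  obtain ⟨i, j, hmk, hij⟩ := hnotinj
  refine ⟨i, j, hij, Quotient.exact hmk, ?_⟩
  by_contra hcon
  push_neg at hcon
  obtain ⟨v, w, hvw, hncl⟩ := hcon
  have hrij : s.r i j := Quotient.exact hmk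
  simp only [clRel, not_or, not_and] at hncl
  obtain ⟨hvne, hn1, hn2⟩ := hncl
  -- produce a, c with a ≠ i, a ≠ j, c ≠ a, c ≠ j, s.r a c
  have key : ∃ a c : Ω, a ≠ i ∧ a ≠ j ∧ c ≠ a ∧ c ≠ j ∧ s.r a c := by
    by_cases hwj : w = j
    · subst hwj
      have hvi : v ≠ i := fun hvi => hn1 hvi rfl
      exact ⟨v, i, hvi, hvne, fun hc => hvi hc.symm, hij,
        s.trans hvw (s.symm hrij)⟩
    · by_cases hvj : v = j
      · subst hvj
        have hwi : w ≠ i := fun hwi => hn2 rfl hwi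
        exact ⟨w, i, hwi, hwj, fun hc => hwi hc.symm, hij,
          s.trans (s.symm hvw) (s.symm hrij)⟩
      · by_cases hvi : v = i
        · subst hvi
          have hwi : w ≠ v := fun hc => hvne hc.symm
          exact ⟨w, v, hwi, hwj, fun hc => hvne hc, hvj, s.symm hvw⟩
        · exact ⟨v, w, hvi, hvj, fun hc => hvne hc.symm, hwj, hvw⟩
  obtain ⟨a, c, hai, haj, hca, hcj, hrac⟩ := key
  -- the quotient has at most n - 2 elements
  have hsurj : Function.Surjective
      (fun x : {x : Ω // x ≠ a ∧ x ≠ j} => Quotient.mk s x.1) := by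
    intro q
    refine Quotient.inductionOn q (fun x => ?_)
    by_cases hxa : x = a
    · exact ⟨⟨c, hca, hcj⟩, by subst hxa; exact (Quotient.sound (s.symm hrac))⟩
    · by_cases hxj : x = j
      · exact ⟨⟨i, fun hc => hai hc.symm, hij⟩, by
          subst hxj; exact (Quotient.sound hrij)⟩
      · exact ⟨⟨x, hxa, hxj⟩, rfl⟩
  have hle2 := Fintype.card_le_of_surjective _ hsurj
  have hcards : Fintype.card {x : Ω // x ≠ a ∧ x ≠ j} = Fintype.card Ω - 2 := by
    rw [Fintype.card_subtype]
    have : Finset.filter (fun x => x ≠ a ∧ x ≠ j) Finset.univ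
        = (Finset.univ : Finset Ω) \ {a, j} := by
      ext x; simp [and_comm]
    rw [this, Finset.card_sdiff_of_subset (by simp)]
    have haj' : a ≠ j := haj
    simp [Finset.card_insert_of_notMem, haj']
  omega


def gsRel (g : Equiv.Perm Ω) (S : Finset (Sym2 Ω)) (v w : Ω) : Prop :=
  g v = w ∨ s(v, w) ∈ S

def gsSetoid (g : Equiv.Perm Ω) (S : Finset (Sym2 Ω)) : Setoid Ω :=
  Relation.EqvGen.setoid (gsRel g S)

/-- the number of classes -/
def kc (g : Equiv.Perm Ω) (S : Finset (Sym2 Ω)) : ℕ :=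
  Nat.card (Quotient (gsSetoid g S))

lemma eqvGen_le {r : Ω → Ω → Prop} {t : Ω → Ω → Prop} (ht : Equivalence t)
    (h : ∀ v w, r v w → t v w) {v w : Ω} (hvw : Relation.EqvGen r v w) : t v w :=
  ht.eqvGen_iff.mp (Relation.EqvGen.mono h _ _ hvw)

lemma count_inv_mono (g : Equiv.Perm Ω) (S : Finset (Sym2 Ω)) (a : ℕ) :
    Nat.card {f : Ω → Fin a // (∀ v, f (g v) = f v) ∧ ∀ e ∈ S, (e.map f).IsDiag}
      = a ^ kc g S := by
  have e : {f : Ω → Fin a // (∀ v, f (g v) = f v) ∧ ∀ e ∈ S, (e.map f).IsDiag}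
      ≃ (Quotient (gsSetoid g S) → Fin a) := by
    refine ⟨fun f => Quotient.lift f.1 ?_, fun h => ⟨h ∘ Quotient.mk _, ?_, ?_⟩, ?_, ?_⟩
    · intro v w hvw
      induction hvw with
      | rel v w hr =>
        rcases hr with rfl | hS
        · exact (f.2.1 v).symm
        · have := f.2.2 _ hS
          rwa [Sym2.map_pair_eq, Sym2.mk_isDiag_iff] at this
      | refl => rfl
      | symm _ _ _ ih => exact ih.symm
      | trans _ _ _ _ _ ih1 ih2 => exact ih1.trans ih2
    · intro v
      exact congrArg h (Quotient.sound (Relation.EqvGen.rel (r := gsRel g S) v (g v) (Or.inl rfl))).symm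
    · intro e he
      induction e with
      | _ v w =>
        rw [Sym2.map_pair_eq, Sym2.mk_isDiag_iff]
        exact congrArg h (Quotient.sound (Relation.EqvGen.rel (r := gsRel g S) v w (Or.inr he)))
    · intro f
      ext v
      rfl
    · intro h
      ext ⟨v⟩
      rfl
  rw [Nat.card_congr e, Nat.card_fun, Nat.card_eq_fintype_card (α := Fin a), Fintype.card_fin]
  rfl


variable [DecidableEq Ω]

lemma swap_zpow (i j : Ω) (k : ℤ) :
    (Equiv.swap i j) ^ k = 1 ∨ (Equiv.swap i j) ^ k = Equiv.swap i j := by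
  have h2 : (Equiv.swap i j) ^ (2 : ℤ) = 1 := by
    rw [show (2:ℤ) = ((2:ℕ):ℤ) from rfl, zpow_natCast, sq, Equiv.swap_mul_self]
  rcases Int.even_or_odd k with ⟨m, hm⟩ | ⟨m, hm⟩
  · left; rw [hm, ← two_mul, zpow_mul, h2, one_zpow]
  · right; rw [hm, zpow_add, zpow_mul, h2, one_zpow, one_mul, zpow_one]

lemma orbitRel_iff (g : Equiv.Perm Ω) (v w : Ω) :
    (MulAction.orbitRel (Subgroup.zpowers g) Ω).r v w ↔ ∃ k : ℤ, (g ^ k) w = v := by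
  have hdefeq : (MulAction.orbitRel (Subgroup.zpowers g) Ω).r v w
      ↔ v ∈ MulAction.orbit (Subgroup.zpowers g) w := Iff.rfl
  rw [hdefeq, MulAction.mem_orbit_iff]
  constructor
  · rintro ⟨⟨u, hu⟩, h⟩
    obtain ⟨k, rfl⟩ := hu
    exact ⟨k, h⟩
  · rintro ⟨k, hk⟩
    exact ⟨⟨g ^ k, k, rfl⟩, hk⟩

lemma cycleCount_def (g : Equiv.Perm Ω) :
    cycleCount g = Nat.card (Quotient (MulAction.orbitRel (Subgroup.zpowers g) Ω)) := rfl

lemma cycleCount_pred_iff (g : Equiv.Perm Ω) (hn : 2 ≤ Fintype.card Ω) :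
    cycleCount g = Fintype.card Ω - 1 ↔ g.IsSwap := by
  rw [cycleCount_def]
  constructor
  · intro h
    obtain ⟨i, j, hij, hrij, hle⟩ := card_quot_pair' _ hn h
    have hg : ∀ v : Ω, clRel i j (g v) v := by
      intro v
      exact hle (g v) v ((orbitRel_iff g (g v) v).mpr ⟨1, by simp⟩)
    have hki : ∃ k : ℤ, (g ^ k) i = j :=
      (orbitRel_iff g j i).mp ((MulAction.orbitRel (Subgroup.zpowers g) Ω).symm hrij)
    have hgi : g i = j := by
      rcases hg i with h1 | ⟨h1, h2⟩ | ⟨h1, _⟩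
      · obtain ⟨k, hk⟩ := hki
        rw [Equiv.Perm.zpow_apply_eq_self_of_apply_eq_self h1 k] at hk
        exact absurd hk hij
      · exact absurd h2 hij
      · exact h1
    have hgj : g j = i := by
      rcases hg j with h1 | ⟨h1, h2⟩ | ⟨h1, h2⟩
      · exact absurd (g.injective (hgi.trans h1.symm)) hij
      · exact h1
      · exact absurd h2 hij.symm
    refine ⟨i, j, hij, Equiv.ext fun v => ?_⟩
    by_cases hvi : v = i
    · simp [hvi, hgi]
    · by_cases hvj : v = j
      · simp [hvj, hgj]
      · rcases hg v with h1 | ⟨h1, h2⟩ | ⟨h1, h2⟩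
        · rw [h1, Equiv.swap_apply_of_ne_of_ne hvi hvj]
        · exact absurd h2 hvj
        · exact absurd h2 hvi
  · rintro ⟨i, j, hij, rfl⟩
    refine card_quot_pair _ i j hij ?_ ?_
    · exact (orbitRel_iff _ i j).mpr ⟨1, by simp⟩
    · intro v w hvw
      obtain ⟨k, hk⟩ := (orbitRel_iff _ v w).mp hvw
      rcases swap_zpow i j k with h | h <;> rw [h] at hk
      · exact Or.inl (by simpa using hk.symm)
      · by_cases hwi : w = i
        · subst hwi
          rw [Equiv.swap_apply_left] at hk
          exact Or.inr (Or.inr ⟨hk.symm, rfl⟩)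
        · by_cases hwj : w = j
          · subst hwj
            rw [Equiv.swap_apply_right] at hk
            exact Or.inr (Or.inl ⟨hk.symm, rfl⟩)
          · rw [Equiv.swap_apply_of_ne_of_ne hwi hwj] at hk
            exact Or.inl hk.symm

lemma kc_one_empty : kc (1 : Equiv.Perm Ω) ∅ = Fintype.card Ω := by
  refine card_quot_eq _ (fun v w h => ?_)
  refine eqvGen_le eq_equivalence (fun v w h => ?_) h
  rcases h with h | h
  · exact h
  · simp at h

lemma kc_pred_iff (g : Equiv.Perm Ω) (S : Finset (Sym2 Ω)) (hS : ∀ e ∈ S, ¬ e.IsDiag)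
    (hn : 2 ≤ Fintype.card Ω) :
    kc g S = Fintype.card Ω - 1 ↔
      ∃ i j : Ω, i ≠ j ∧ (g = 1 ∨ g = Equiv.swap i j) ∧ S ⊆ {s(i, j)} ∧ ¬(g = 1 ∧ S = ∅) := by
  constructor
  · intro h
    obtain ⟨i, j, hij, hrij, hle⟩ := card_quot_pair' _ hn h
    have hcl : ∀ v w, gsRel g S v w → clRel i j v w := by
      intro v w hvw
      exact hle v w (Relation.EqvGen.rel (r := gsRel g S) v w hvw)
    have hg : ∀ v : Ω, clRel i j v (g v) := fun v => hcl v (g v) (Or.inl rfl)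
    have hSsub : S ⊆ {s(i, j)} := by
      intro e he
      induction e with
      | _ v w =>
        have hvw : v ≠ w := by simpa [Sym2.mk_isDiag_iff] using hS _ he
        rcases hcl v w (Or.inr he) with h1 | ⟨rfl, rfl⟩ | ⟨rfl, rfl⟩
        · exact absurd h1 hvw
        · simp
        · simp [Sym2.eq_swap]
    have hgor : g = 1 ∨ g = Equiv.swap i j := by
      by_cases hgi : g i = i
      · left
        have hgj : g j = j := by
          rcases hg j with h1 | ⟨h1, h2⟩ | ⟨h1, h2⟩
          · exact h1.symm
          · exact absurd h1 hij.symm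
          · exact absurd (g.injective (h2.trans hgi.symm)) hij.symm
        refine Equiv.ext fun v => ?_
        by_cases hvi : v = i
        · simp [hvi, hgi]
        · by_cases hvj : v = j
          · simp [hvj, hgj]
          · rcases hg v with h1 | ⟨h1, h2⟩ | ⟨h1, h2⟩
            · simp [← h1]
            · exact absurd h1 hvi
            · exact absurd h1 hvj
      · right
        have hgi' : g i = j := by
          rcases hg i with h1 | ⟨h1, h2⟩ | ⟨h1, h2⟩
          · exact absurd h1.symm hgi
          · exact h2
          · exact absurd h1 hij
        have hgj : g j = i := by
          rcases hg j with h1 | ⟨h1, h2⟩ | ⟨h1, h2⟩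
          · exact absurd (g.injective (hgi'.trans h1)) hij
          · exact absurd h1 hij.symm
          · exact h2
        refine Equiv.ext fun v => ?_
        by_cases hvi : v = i
        · simp [hvi, hgi']
        · by_cases hvj : v = j
          · simp [hvj, hgj]
          · rw [Equiv.swap_apply_of_ne_of_ne hvi hvj]
            rcases hg v with h1 | ⟨h1, h2⟩ | ⟨h1, h2⟩
            · exact h1.symm
            · exact absurd h1 hvi
            · exact absurd h1 hvj
    refine ⟨i, j, hij, hgor, hSsub, ?_⟩
    rintro ⟨rfl, rfl⟩
    have : i = j := by
      refine eqvGen_le eq_equivalence (fun v w h => ?_) hrij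
      rcases h with h | h
      · exact h
      · simp at h
    exact hij this
  · rintro ⟨i, j, hij, hgor, hSsub, hnt⟩
    have hgs : ∀ v w, gsRel g S v w → clRel i j v w := by
      intro v w hvw
      rcases hvw with rfl | hmem
      · rcases hgor with rfl | rfl
        · exact Or.inl rfl
        · by_cases hvi : v = i
          · subst hvi
            rw [Equiv.swap_apply_left]
            exact Or.inr (Or.inl ⟨rfl, rfl⟩)
          · by_cases hvj : v = j
            · subst hvj
              rw [Equiv.swap_apply_right]
              exact Or.inr (Or.inr ⟨rfl, rfl⟩)
            · rw [Equiv.swap_apply_of_ne_of_ne hvi hvj]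
              exact Or.inl rfl
      · have := hSsub hmem
        rw [Finset.mem_singleton, Sym2.eq_iff] at this
        rcases this with ⟨rfl, rfl⟩ | ⟨rfl, rfl⟩
        · exact Or.inr (Or.inl ⟨rfl, rfl⟩)
        · exact Or.inr (Or.inr ⟨rfl, rfl⟩)
    refine card_quot_pair _ i j hij ?_ (fun v w h => eqvGen_le (clRel_equivalence i j) hgs h)
    · rcases hgor with rfl | rfl
      · have hSne : S ≠ ∅ := fun hS0 => hnt ⟨rfl, hS0⟩
        have : S = {s(i, j)} := (Finset.subset_singleton_iff.mp hSsub).resolve_left hSne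
        exact Relation.EqvGen.rel (r := gsRel 1 S) i j (Or.inr (by simp [this]))
      · exact Relation.EqvGen.rel (r := gsRel _ S) i j (Or.inl (Equiv.swap_apply_left i j))

lemma pair_of_swap_eq {i j i' j' : Ω} (hij : i ≠ j) (h : Equiv.swap i j = Equiv.swap i' j') :
    s(i, j) = s(i', j') := by
  have h1 : Equiv.swap i' j' i = j := by rw [← h, Equiv.swap_apply_left]
  by_cases hii' : i = i'
  · subst hii'
    rw [Equiv.swap_apply_left] at h1
    rw [h1]
  · by_cases hij' : i = j'
    · subst hij'
      rw [Equiv.swap_apply_right] at h1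
      rw [← h1, Sym2.eq_swap]
    · rw [Equiv.swap_apply_of_ne_of_ne hii' hij'] at h1
      exact absurd h1 hij


end RecipAux

namespace RecipAux

variable {Ω : Type*} [Fintype Ω]

lemma fixedProperColorings_eq (Γ : SimpleGraph Ω) [DecidableRel Γ.Adj]
    (g : Equiv.Perm Ω) (a : ℕ) :
    (fixedProperColorings Γ g a : ℤ) =
      ∑ S ∈ Γ.edgeFinset.powerset, (-1) ^ S.card * (a : ℤ) ^ kc g S := by
  classical
  set E := Γ.edgeFinset with hE
  -- rewrite properness as a condition on edges
  have hproper : ∀ f : Ω → Fin a,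
      (∀ v w, Γ.Adj v w → f v ≠ f w) ↔ ∀ e ∈ E, ¬ (e.map f).IsDiag := by
    intro f
    constructor
    · intro h e he
      induction e with
      | _ v w =>
        rw [Sym2.map_pair_eq, Sym2.mk_isDiag_iff]
        exact h v w (by rwa [hE, SimpleGraph.mem_edgeFinset, SimpleGraph.mem_edgeSet] at he)
    · intro h v w hadj
      have := h s(v, w) (by rwa [hE, SimpleGraph.mem_edgeFinset, SimpleGraph.mem_edgeSet])
      rwa [Sym2.map_pair_eq, Sym2.mk_isDiag_iff] at this
  -- the subtype of invariant colourings
  have key : ∀ (C : (Ω → Fin a) → Prop),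
      Nat.card {f : Ω → Fin a // C f ∧ ∀ v, f (g v) = f v}
        = Nat.card {f : {f : Ω → Fin a // ∀ v, f (g v) = f v} // C f.1} := by
    intro C
    refine Nat.card_congr ⟨fun f => ⟨⟨f.1, f.2.2⟩, f.2.1⟩, fun f => ⟨f.1.1, f.2, f.1.2⟩,
      fun f => rfl, fun f => rfl⟩
  have h1 : (fixedProperColorings Γ g a : ℤ)
      = ∑ f : {f : Ω → Fin a // ∀ v, f (g v) = f v},
          ∏ e ∈ E, (if (e.map f.1).IsDiag then 0 else (1 : ℤ)) := by
    have hpt : ∀ f : {f : Ω → Fin a // ∀ v, f (g v) = f v},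
        (∏ e ∈ E, (if (e.map f.1).IsDiag then 0 else (1 : ℤ)))
          = if ∀ e ∈ E, ¬ (e.map f.1).IsDiag then 1 else 0 := by
      intro f
      rw [Finset.prod_congr rfl (fun e (_ : e ∈ E) => show (if (e.map f.1).IsDiag then 0 else (1:ℤ)) = if ¬ (e.map f.1).IsDiag then 1 else 0 by
        by_cases h : (e.map f.1).IsDiag <;> simp [h]), Finset.prod_boole]
      congr
    rw [Finset.sum_congr rfl fun f _ => hpt f, Finset.sum_boole,
      fixedProperColorings, key (fun f => ∀ v w, Γ.Adj v w → f v ≠ f w),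
      Nat.card_eq_fintype_card, Fintype.card_subtype]
    congr 2
    exact Finset.filter_congr (fun f _ => hproper f.1)
  have h2 : ∀ f : {f : Ω → Fin a // ∀ v, f (g v) = f v},
      (∏ e ∈ E, (if (e.map f.1).IsDiag then 0 else (1 : ℤ)))
        = ∑ S ∈ E.powerset, (-1) ^ S.card *
            ∏ e ∈ S, (if (e.map f.1).IsDiag then (1 : ℤ) else 0) := by
    intro f
    have hpt : ∀ e ∈ E, (if (e.map f.1).IsDiag then (0:ℤ) else 1)
        = (-(if (e.map f.1).IsDiag then (1:ℤ) else 0)) + 1 := by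
      intro e _
      by_cases h : (e.map f.1).IsDiag <;> simp [h]
    rw [Finset.prod_congr rfl hpt, Finset.prod_add]
    refine Finset.sum_congr rfl fun S hS => ?_
    rw [Finset.prod_const_one, mul_one]
    have : ∀ e ∈ S, (-(if (e.map f.1).IsDiag then (1:ℤ) else 0))
        = (-1) * (if (e.map f.1).IsDiag then (1:ℤ) else 0) := fun e _ => by ring
    rw [Finset.prod_congr rfl this, Finset.prod_mul_distrib, Finset.prod_const]
  have h3 : ∀ S ∈ E.powerset,
      (∑ f : {f : Ω → Fin a // ∀ v, f (g v) = f v},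
        ∏ e ∈ S, (if (e.map f.1).IsDiag then (1 : ℤ) else 0)) = (a : ℤ) ^ kc g S := by
    intro S _
    have hpt : ∀ f : {f : Ω → Fin a // ∀ v, f (g v) = f v},
        (∏ e ∈ S, (if (e.map f.1).IsDiag then (1 : ℤ) else 0))
          = if ∀ e ∈ S, (e.map f.1).IsDiag then 1 else 0 := by
      intro f
      rw [Finset.prod_boole]
      congr
    rw [Finset.sum_congr rfl fun f _ => hpt f, Finset.sum_boole]
    have : (Finset.filter (fun f : {f : Ω → Fin a // ∀ v, f (g v) = f v} =>
        ∀ e ∈ S, (e.map f.1).IsDiag) Finset.univ).card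
        = Nat.card {f : Ω → Fin a // (∀ v, f (g v) = f v) ∧ ∀ e ∈ S, (e.map f).IsDiag} := by
      rw [← Fintype.card_subtype, ← Nat.card_eq_fintype_card]
      refine Nat.card_congr ?_
      exact ⟨fun f => ⟨f.1.1, f.1.2, f.2⟩, fun f => ⟨⟨f.1, f.2.1⟩, f.2.2⟩,
        fun f => rfl, fun f => rfl⟩
    rw [this, count_inv_mono]
    push_cast
    rfl
  calc (fixedProperColorings Γ g a : ℤ)
      = ∑ f : {f : Ω → Fin a // ∀ v, f (g v) = f v},
          ∏ e ∈ E, (if (e.map f.1).IsDiag then 0 else (1 : ℤ)) := h1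
    _ = ∑ f : {f : Ω → Fin a // ∀ v, f (g v) = f v}, ∑ S ∈ E.powerset, (-1) ^ S.card *
          ∏ e ∈ S, (if (e.map f.1).IsDiag then (1 : ℤ) else 0) :=
        Finset.sum_congr rfl fun f _ => h2 f
    _ = ∑ S ∈ E.powerset, ∑ f : {f : Ω → Fin a // ∀ v, f (g v) = f v}, (-1) ^ S.card *
          ∏ e ∈ S, (if (e.map f.1).IsDiag then (1 : ℤ) else 0) := Finset.sum_comm
    _ = ∑ S ∈ E.powerset, (-1) ^ S.card * (a : ℤ) ^ kc g S := by
        refine Finset.sum_congr rfl fun S hS => ?_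
        rw [← Finset.mul_sum, h3 S hS]


end RecipAux

open RecipAux

lemma sum_univ_inst {β M : Type*} [AddCommMonoid M] (F1 F2 : Fintype β) (f : β → M) :
    @Finset.sum β M _ (@Finset.univ β F1) f = @Finset.sum β M _ (@Finset.univ β F2) f := by
  rw [Subsingleton.elim F1 F2]

theorem edges_eq_transpositions_of_reciprocal {Ω : Type*} [Fintype Ω] [DecidableEq Ω]
    (Γ : SimpleGraph Ω) [DecidableRel Γ.Adj] (G : Subgroup (Equiv.Perm Ω))
    (hGaut : ∀ g ∈ G, ∀ v w : Ω, Γ.Adj v w → Γ.Adj (g v) (g w))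
    (p : Polynomial ℤ) (hp : IsOrbitalChromaticPoly Γ G p)
    (hrec : p = (-1) ^ (Fintype.card Ω) * (cyclePoly G).comp (-X)) :
    Γ.edgeFinset.card =
      Nat.card {g : G // (g : Equiv.Perm Ω).IsSwap} +
      Nat.card {g : G // ∃ i j : Ω, i ≠ j ∧
        (g : Equiv.Perm Ω) = Equiv.swap i j ∧ ¬ Γ.Adj i j} := by
  by_cases hn : 2 ≤ Fintype.card Ω
  swap
  · -- degenerate case: at most one vertex
    have h2 : ∀ (i j : Ω), i ≠ j → False := fun i j hij => by
      have : 1 < Fintype.card Ω := Fintype.one_lt_card_iff_nontrivial.mpr ⟨⟨i, j, hij⟩⟩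
      omega
    have hE : Γ.edgeFinset.card = 0 := by
      rw [Finset.card_eq_zero, Finset.eq_empty_iff_forall_notMem]
      intro e he
      induction e with
      | _ v w =>
        rw [SimpleGraph.mem_edgeFinset, SimpleGraph.mem_edgeSet] at he
        exact h2 v w he.ne
    haveI e1 : IsEmpty {g : G // (g : Equiv.Perm Ω).IsSwap} :=
      ⟨fun ⟨g, i, j, hij, _⟩ => h2 i j hij⟩
    haveI e2 : IsEmpty {g : G // ∃ i j : Ω, i ≠ j ∧
        (g : Equiv.Perm Ω) = Equiv.swap i j ∧ ¬ Γ.Adj i j} :=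
      ⟨fun ⟨g, i, j, hij, _⟩ => h2 i j hij⟩
    rw [hE, Nat.card_of_isEmpty, Nat.card_of_isEmpty]
  -- main case
  set n := Fintype.card Ω with hncard
  set E := Γ.edgeFinset with hEdef
  have hSdiag : ∀ S ∈ E.powerset, ∀ e ∈ S, ¬ e.IsDiag := by
    intro S hS e he
    have heE : e ∈ E := Finset.mem_powerset.mp hS he
    rw [hEdef, SimpleGraph.mem_edgeFinset] at heE
    exact Γ.not_isDiag_of_mem_edgeSet heE
  -- the explicit polynomial q
  set q : Polynomial ℤ :=
    ∑ g : G, ∑ S ∈ E.powerset, C ((-1 : ℤ) ^ S.card) * X ^ (kc (g : Equiv.Perm Ω) S)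
    with hqdef
  have hpq : p = q := by
    have hroot : ∀ a : ℕ, (p - q).eval (a : ℤ) = 0 := by
      intro a
      rw [eval_sub, sub_eq_zero, hp a]
      rw [hqdef, eval_finset_sum]
      refine (sum_univ_inst _ _ _).trans (Finset.sum_congr rfl fun g _ => ?_)
      rw [fixedProperColorings_eq Γ (g : Equiv.Perm Ω) a, eval_finset_sum]
      exact Finset.sum_congr rfl fun S _ => by simp
    have hz : p - q = 0 := by
      apply Polynomial.eq_zero_of_infinite_isRoot
      apply Set.infinite_of_injective_forall_mem (f := fun a : ℕ => (a : ℤ))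
      · exact fun x y hxy => Nat.cast_injective hxy
      · exact fun a => hroot a
    exact sub_eq_zero.mp hz
  -- coefficient of X^(n-1) in q
  have hq_coeff : q.coeff (n - 1)
      = ∑ g : G, ∑ S ∈ E.powerset,
          (if n - 1 = kc (g : Equiv.Perm Ω) S then (-1 : ℤ) ^ S.card else 0) := by
    rw [hqdef, finset_sum_coeff]
    refine Finset.sum_congr rfl fun g _ => ?_
    rw [finset_sum_coeff]
    refine Finset.sum_congr rfl fun S _ => ?_
    rw [coeff_C_mul, coeff_X_pow]
    by_cases h : n - 1 = kc (g : Equiv.Perm Ω) S <;> simp [h]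
  have hinner : ∀ g : G,
      (∑ S ∈ E.powerset,
        (if n - 1 = kc (g : Equiv.Perm Ω) S then (-1 : ℤ) ^ S.card else 0))
      = (if (g : Equiv.Perm Ω) = 1 then -(E.card : ℤ) else 0)
        + (if (∃ i j : Ω, i ≠ j ∧ (g : Equiv.Perm Ω) = Equiv.swap i j ∧ ¬ Γ.Adj i j)
            then 1 else 0) := by
    intro g
    by_cases hg1 : (g : Equiv.Perm Ω) = 1
    · -- identity
      have hcond : ∀ S ∈ E.powerset, (n - 1 = kc ((g : Equiv.Perm Ω)) S) ↔ S.card = 1 := by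
        intro S hS
        rw [hg1]
        constructor
        · intro h
          obtain ⟨i, j, hij, hgor, hSsub, hnt⟩ :=
            (kc_pred_iff 1 S (hSdiag S hS) hn).mp h.symm
          have hSne : S ≠ ∅ := fun h0 => hnt ⟨rfl, h0⟩
          rcases Finset.subset_singleton_iff.mp hSsub with h0 | h1
          · exact absurd h0 hSne
          · rw [h1]; exact Finset.card_singleton _
        · intro h
          obtain ⟨e, rfl⟩ := Finset.card_eq_one.mp h
          have heE : e ∈ E := Finset.mem_powerset.mp hS (Finset.mem_singleton_self e)
          have hediag : ¬ e.IsDiag := hSdiag _ hS e (Finset.mem_singleton_self e)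
          revert heE hediag
          induction e with
          | _ i j =>
            intro heE hediag
            have hij : i ≠ j := by simpa [Sym2.mk_isDiag_iff] using hediag
            refine ((kc_pred_iff 1 {s(i,j)} ?_ hn).mpr
              ⟨i, j, hij, Or.inl rfl, subset_rfl, ?_⟩).symm
            · intro e' he'
              rw [Finset.mem_singleton] at he'
              subst he'
              simpa [Sym2.mk_isDiag_iff] using hij
            · rintro ⟨-, hc⟩
              exact (Finset.singleton_ne_empty _) hc
      have hsum : (∑ S ∈ E.powerset,
          (if n - 1 = kc (g : Equiv.Perm Ω) S then (-1 : ℤ) ^ S.card else 0))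
          = -(E.card : ℤ) := by
        have hpt : ∀ S ∈ E.powerset,
            (if n - 1 = kc (g : Equiv.Perm Ω) S then (-1 : ℤ) ^ S.card else 0)
            = (if S.card = 1 then (-1 : ℤ) else 0) := by
          intro S hS
          by_cases h : S.card = 1
          · rw [if_pos ((hcond S hS).mpr h), if_pos h, h, pow_one]
          · rw [if_neg (fun hc => h ((hcond S hS).mp hc)), if_neg h]
        rw [Finset.sum_congr rfl hpt, Finset.sum_ite, Finset.sum_const,
          Finset.sum_const_zero, add_zero, ← Finset.powersetCard_eq_filter,
          Finset.card_powersetCard, Nat.choose_one_right, nsmul_eq_mul]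
        ring
      rw [hsum, if_pos hg1, if_neg, add_zero]
      rintro ⟨i, j, hij, hsw, -⟩
      rw [hg1] at hsw
      exact hij (Equiv.swap_eq_one_iff.mp hsw.symm)
    · by_cases hsw : (g : Equiv.Perm Ω).IsSwap
      · obtain ⟨i, j, hij, hgs⟩ := hsw
        have hcond : ∀ S ∈ E.powerset,
            (n - 1 = kc (g : Equiv.Perm Ω) S) ↔ (S = ∅ ∨ S = {s(i, j)}) := by
          intro S hS
          constructor
          · intro h
            obtain ⟨i', j', hij', hgor, hSsub, hnt⟩ :=
              (kc_pred_iff _ S (hSdiag S hS) hn).mp h.symm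
            have hswap : Equiv.swap i j = Equiv.swap i' j' := by
              rcases hgor with h1 | h1
              · exact absurd h1 hg1
              · rw [hgs] at h1; exact h1
            have hpair := pair_of_swap_eq hij hswap
            rw [← hpair] at hSsub
            exact Finset.subset_singleton_iff.mp hSsub
          · rintro (rfl | rfl)
            · refine ((kc_pred_iff _ _ (fun e he => absurd he (Finset.notMem_empty e)) hn).mpr
                ⟨i, j, hij, Or.inr hgs, Finset.empty_subset _, ?_⟩).symm
              rintro ⟨h1, -⟩; exact hg1 h1
            · refine ((kc_pred_iff _ _ (hSdiag _ hS) hn).mpr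
                ⟨i, j, hij, Or.inr hgs, subset_rfl, ?_⟩).symm
              rintro ⟨h1, -⟩; exact hg1 h1
        have hsum : (∑ S ∈ E.powerset,
            (if n - 1 = kc (g : Equiv.Perm Ω) S then (-1 : ℤ) ^ S.card else 0))
            = 1 + (if Γ.Adj i j then (-1 : ℤ) else 0) := by
          have hpt : ∀ S ∈ E.powerset,
              (if n - 1 = kc (g : Equiv.Perm Ω) S then (-1 : ℤ) ^ S.card else 0)
              = (if S = ∅ then 1 else 0) + (if S = {s(i, j)} then -1 else 0) := by
            intro S hS
            by_cases h0 : S = ∅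
            · subst h0
              rw [if_pos ((hcond ∅ hS).mpr (Or.inl rfl)), if_pos rfl,
                if_neg (Finset.singleton_ne_empty _).symm]
              simp
            · by_cases h1 : S = {s(i, j)}
              · subst h1
                rw [if_pos ((hcond _ hS).mpr (Or.inr rfl)), if_neg h0, if_pos rfl]
                simp
              · rw [if_neg, if_neg h0, if_neg h1, add_zero]
                intro hc
                rcases (hcond S hS).mp hc with h | h
                exacts [h0 h, h1 h]
          rw [Finset.sum_congr rfl hpt, Finset.sum_add_distrib]
          congr 1
          · rw [Finset.sum_ite_eq' E.powerset ∅ (fun _ => (1 : ℤ)),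
              if_pos (Finset.empty_mem_powerset E)]
          · rw [Finset.sum_ite_eq' E.powerset {s(i, j)} (fun _ => (-1 : ℤ))]
            have hmem : ({s(i, j)} : Finset (Sym2 Ω)) ∈ E.powerset ↔ Γ.Adj i j := by
              rw [Finset.mem_powerset, Finset.singleton_subset_iff, hEdef,
                SimpleGraph.mem_edgeFinset, SimpleGraph.mem_edgeSet]
            by_cases hadj : Γ.Adj i j
            · rw [if_pos (hmem.mpr hadj), if_pos hadj]
            · rw [if_neg (fun hc => hadj (hmem.mp hc)), if_neg hadj]
        have hiff : (∃ i' j' : Ω, i' ≠ j' ∧ (g : Equiv.Perm Ω) = Equiv.swap i' j'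
            ∧ ¬ Γ.Adj i' j') ↔ ¬ Γ.Adj i j := by
          constructor
          · rintro ⟨i', j', hij', hsw', hnadj⟩
            have hpair : s(i, j) = s(i', j') :=
              pair_of_swap_eq hij (by rw [← hgs, hsw'])
            rw [Sym2.eq_iff] at hpair
            rcases hpair with ⟨rfl, rfl⟩ | ⟨rfl, rfl⟩
            · exact hnadj
            · exact fun h => hnadj h.symm
          · intro h
            exact ⟨i, j, hij, hgs, h⟩
        rw [hsum, if_neg hg1, zero_add]
        by_cases hadj : Γ.Adj i j
        · rw [if_pos hadj, if_neg (fun hc => (hiff.mp hc) hadj)]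
          ring
        · rw [if_neg hadj, if_pos (hiff.mpr hadj)]
          ring
      · -- neither identity nor a transposition
        have hz : ∀ S ∈ E.powerset, ¬ (n - 1 = kc (g : Equiv.Perm Ω) S) := by
          intro S hS hc
          obtain ⟨i, j, hij, hgor, -, -⟩ := (kc_pred_iff _ S (hSdiag S hS) hn).mp hc.symm
          rcases hgor with h | h
          · exact hg1 h
          · exact hsw ⟨i, j, hij, h⟩
        rw [Finset.sum_congr rfl (fun S hS => if_neg (hz S hS)), Finset.sum_const_zero,
          if_neg hg1, if_neg, add_zero]
        rintro ⟨i, j, hij, hswp, -⟩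
        exact hsw ⟨i, j, hij, hswp⟩
  have hq_coeff' : q.coeff (n - 1)
      = -(E.card : ℤ) + (Nat.card {g : G // ∃ i j : Ω, i ≠ j ∧
          (g : Equiv.Perm Ω) = Equiv.swap i j ∧ ¬ Γ.Adj i j} : ℤ) := by
    rw [hq_coeff, Finset.sum_congr rfl (fun g _ => hinner g), Finset.sum_add_distrib]
    congr 1
    · have hpt : ∀ g : G, (if (g : Equiv.Perm Ω) = 1 then -(E.card : ℤ) else 0)
          = (if g = (1 : G) then -(E.card : ℤ) else 0) := by
        intro g
        by_cases h : g = (1 : G)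
        · rw [if_pos h, if_pos (show (g : Equiv.Perm Ω) = 1 from OneMemClass.coe_eq_one.mpr h)]
        · rw [if_neg h, if_neg
            (show ¬ (g : Equiv.Perm Ω) = 1 from fun hc => h (OneMemClass.coe_eq_one.mp hc))]
      rw [Finset.sum_congr rfl (fun g _ => hpt g),
        Finset.sum_ite_eq' Finset.univ (1 : G) (fun _ => -(E.card : ℤ)),
        if_pos (Finset.mem_univ _)]
    · rw [Finset.sum_boole, Nat.card_eq_fintype_card, Fintype.card_subtype]
  -- coefficient of X^(n-1) in p, using reciprocity
  have hcomp : (cyclePoly G).comp (-X)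
      = ∑ g : G, C ((-1 : ℤ) ^ cycleCount (g : Equiv.Perm Ω))
          * X ^ cycleCount (g : Equiv.Perm Ω) := by
    rw [cyclePoly, Polynomial.sum_comp]
    refine (sum_univ_inst _ _ _).trans (Finset.sum_congr rfl fun g _ => ?_)
    rw [pow_comp, X_comp, neg_pow]
    congr 1
    rw [← C_1, ← C_neg, ← C_pow]
  have hp_coeff : p.coeff (n - 1)
      = -(Nat.card {g : G // (g : Equiv.Perm Ω).IsSwap} : ℤ) := by
    have hconst : ((-1 : Polynomial ℤ) ^ n) = C ((-1 : ℤ) ^ n) := by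
      rw [← C_1, ← C_neg, ← C_pow]
    rw [hrec, hconst, coeff_C_mul, hcomp, finset_sum_coeff]
    have hpt : ∀ g : G,
        (C ((-1 : ℤ) ^ cycleCount (g : Equiv.Perm Ω))
          * X ^ cycleCount (g : Equiv.Perm Ω)).coeff (n - 1)
        = (if (g : Equiv.Perm Ω).IsSwap then (-1 : ℤ) ^ (n - 1) else 0) := by
      intro g
      rw [coeff_C_mul, coeff_X_pow]
      by_cases h : cycleCount (g : Equiv.Perm Ω) = n - 1
      · rw [if_pos h.symm, if_pos ((cycleCount_pred_iff _ hn).mp h), h, mul_one]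
      · rw [if_neg (fun hc => h hc.symm),
          if_neg (fun hs => h ((cycleCount_pred_iff _ hn).mpr hs)), mul_zero]
    rw [Finset.sum_congr rfl (fun g _ => hpt g), Finset.sum_ite, Finset.sum_const,
      Finset.sum_const_zero, add_zero, nsmul_eq_mul]
    rw [← Fintype.card_subtype, ← Nat.card_eq_fintype_card]
    have hsign : (-1 : ℤ) ^ n * (-1 : ℤ) ^ (n - 1) = -1 := by
      rw [← pow_add]
      exact Odd.neg_one_pow ⟨n - 1, by omega⟩
    set t := (Nat.card {g : G // (g : Equiv.Perm Ω).IsSwap} : ℤ)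
    calc (-1 : ℤ) ^ n * ((t : ℤ) * (-1 : ℤ) ^ (n - 1))
        = ((-1 : ℤ) ^ n * (-1 : ℤ) ^ (n - 1)) * t := by ring
      _ = -t := by rw [hsign]; ring
  -- conclude
  have hfinal : p.coeff (n - 1) = q.coeff (n - 1) := by rw [hpq]
  rw [hp_coeff, hq_coeff'] at hfinal
  have : (E.card : ℤ) = (Nat.card {g : G // (g : Equiv.Perm Ω).IsSwap} : ℤ)
      + (Nat.card {g : G // ∃ i j : Ω, i ≠ j ∧
          (g : Equiv.Perm Ω) = Equiv.swap i j ∧ ¬ Γ.Adj i j} : ℤ) := by linarith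
  exact_mod_cast this
end
end

section
/- Let Γ be the star K_{1,2k} on n = 2k+1 vertices and let G satisfy (C_2)^k ≤ G ≤ C_2 ≀ S_k, where the transpositions generating (C_2)^k swap the two leaves in each of the k pairs. Then (Γ,G) is a reciprocal pair: P_{Γ,G}(x) = (-1)^n F_G(-x). Moreover P_{Γ,G}(x) = (x/(x-1)) F_G(x-1), so the reciprocity is equivalent to the identity x(F_G(x-1) + F_G(-x)) = F_G(-x). -/
open Polynomial

open Equiv

open scoped Classical

noncomputable section

/-- The star `K_{1,2k}`: centre `none`, and `2k` leaves `some (i, b)` grouped in `k` pairs;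
edges join the centre to each leaf. -/
def starGraph (k : ℕ) : SimpleGraph (Option (Fin k × Bool)) where
  Adj v w := ¬ (v = none ↔ w = none)
  symm := ⟨fun v w h h' => h h'.symm⟩
  loopless := ⟨fun v h => h Iff.rfl⟩

/-- `(C_2)^k`: the subgroup generated by the `k` transpositions swapping the two leaves
in each pair. -/
def basePairSwaps (k : ℕ) : Subgroup (Equiv.Perm (Option (Fin k × Bool))) :=
  Subgroup.closure
    {π | ∃ i : Fin k, π = Equiv.swap (some (i, false)) (some (i, true))}

/-- `C_2 ≀ S_k`: the subgroup of permutations fixing the centre and permuting the `k`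
pairs of leaves, possibly swapping the leaves within pairs.  (This set is already a
subgroup, so it equals its closure.) -/
def wreathC2Sk (k : ℕ) : Subgroup (Equiv.Perm (Option (Fin k × Bool))) :=
  Subgroup.closure
    {π | ∃ (σ : Equiv.Perm (Fin k)) (f : Fin k → Equiv.Perm Bool),
      π none = none ∧ ∀ (i : Fin k) (b : Bool), π (some (i, b)) = some (σ i, f i b)}


variable {k : ℕ}

def lpermAux (σ : Equiv.Perm (Fin k)) (ε : Fin k → Bool) : Equiv.Perm (Fin k × Bool) :=
  σ.prodShear (fun i => Function.Involutive.toPerm (xor (ε i))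
    (by intro c; cases ε i <;> cases c <;> rfl))

@[simp] lemma lpermAux_apply (σ : Equiv.Perm (Fin k)) (ε : Fin k → Bool) (i : Fin k) (b : Bool) :
    lpermAux σ ε (i, b) = (σ i, xor (ε i) b) := rfl

def mkw (σ : Equiv.Perm (Fin k)) (ε : Fin k → Bool) : Equiv.Perm (Option (Fin k × Bool)) :=
  (lpermAux σ ε).optionCongr

@[simp] lemma mkw_none (σ : Equiv.Perm (Fin k)) (ε : Fin k → Bool) : mkw σ ε none = none := rfl

@[simp] lemma mkw_some (σ : Equiv.Perm (Fin k)) (ε : Fin k → Bool) (i : Fin k) (b : Bool) :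
    mkw σ ε (some (i, b)) = some (σ i, xor (ε i) b) := rfl

lemma mkw_mul (σ σ' : Equiv.Perm (Fin k)) (ε ε' : Fin k → Bool) :
    mkw σ ε * mkw σ' ε' = mkw (σ * σ') (fun i => xor (ε (σ' i)) (ε' i)) := by
  apply Equiv.ext; rintro (_ | ⟨i, b⟩)
  · rfl
  · simp [Equiv.Perm.mul_apply, Bool.xor_assoc]

lemma mkw_one : (mkw 1 (fun _ => false) : Equiv.Perm (Option (Fin k × Bool))) = 1 := by
  apply Equiv.ext; rintro (_ | ⟨i, b⟩) <;> simp

lemma mkw_inj {σ σ' : Equiv.Perm (Fin k)} {ε ε' : Fin k → Bool}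
    (h : mkw σ ε = mkw σ' ε') : σ = σ' ∧ ε = ε' := by
  have key : ∀ i, σ i = σ' i ∧ ε i = ε' i := by
    intro i
    have := congrArg (fun g : Equiv.Perm (Option (Fin k × Bool)) => g (some (i, false))) h
    simpa using this
  exact ⟨Equiv.ext fun i => (key i).1, funext fun i => (key i).2⟩


lemma mkw_inv (σ : Equiv.Perm (Fin k)) (ε : Fin k → Bool) :
    (mkw σ ε)⁻¹ = mkw σ⁻¹ (fun i => ε (σ⁻¹ i)) := by
  symm
  rw [eq_inv_iff_mul_eq_one, mkw_mul]
  have h2 : (fun i : Fin k => xor (ε (σ⁻¹ (σ i))) (ε i)) = fun _ => false :=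
    funext fun i => by simp
  rw [h2, inv_mul_cancel, mkw_one]

/-- The structured permutations form a subgroup. -/
def mkwGroup (k : ℕ) : Subgroup (Equiv.Perm (Option (Fin k × Bool))) where
  carrier := {g | ∃ σ ε, g = mkw σ ε}
  one_mem' := ⟨1, fun _ => false, mkw_one.symm⟩
  mul_mem' := by
    rintro a b ⟨σ, ε, rfl⟩ ⟨σ', ε', rfl⟩
    exact ⟨σ * σ', _, mkw_mul σ σ' ε ε'⟩
  inv_mem' := by
    rintro a ⟨σ, ε, rfl⟩
    exact ⟨σ⁻¹, _, mkw_inv σ ε⟩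

lemma exists_mkw_of_mem_wreath {g : Equiv.Perm (Option (Fin k × Bool))}
    (hg : g ∈ wreathC2Sk k) : ∃ σ ε, g = mkw σ ε := by
  refine Subgroup.closure_le (K := mkwGroup k) |>.mpr ?_ hg
  rintro π ⟨σ, f, h1, h2⟩
  refine ⟨σ, fun i => f i false, ?_⟩
  apply Equiv.ext
  rintro (_ | ⟨i, b⟩)
  · simpa using h1
  · rw [h2 i b, mkw_some]
    congr 1
    have hne : f i true ≠ f i false := fun h => by simpa using (f i).injective h
    cases b
    · simp
    · simp only [Prod.mk.injEq, true_and]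
      cases hft : f i true <;> cases hff : f i false <;> simp_all

lemma twist_mem_aux (s : Finset (Fin k)) :
    ∀ ε : Fin k → Bool, (∀ i, ε i = true → i ∈ s) → mkw 1 ε ∈ basePairSwaps k := by
  induction s using Finset.induction_on with
  | empty =>
    intro ε hε
    have : ε = fun _ => false := funext fun i => by
      cases h : ε i
      · rfl
      · exact absurd (hε i h) (by simp)
    rw [this, mkw_one]; exact one_mem _
  | @insert a s ha ih =>
    intro ε hε
    cases hεa : ε a
    · exact ih ε fun i hi => by
        rcases Finset.mem_insert.mp (hε i hi) with h | h
        · subst h; rw [hεa] at hi; exact absurd hi (by simp)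
        · exact h
    · have key : mkw 1 ε =
          Equiv.swap (some (a, false)) (some (a, true)) * mkw 1 (Function.update ε a false) := by
        apply Equiv.ext
        rintro (_ | ⟨i, b⟩)
        · simp [Equiv.Perm.mul_apply, Equiv.swap_apply_of_ne_of_ne]
        · by_cases hia : i = a
          · subst hia
            cases b <;>
              simp [Equiv.Perm.mul_apply, hεa, Equiv.swap_apply_left, Equiv.swap_apply_right]
          · simp [Equiv.Perm.mul_apply, Function.update_of_ne hia,
              Equiv.swap_apply_of_ne_of_ne, hia]
      rw [key]
      exact mul_mem (Subgroup.subset_closure ⟨a, rfl⟩)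
        (ih _ fun i hi => by
          by_cases hia : i = a
          · subst hia; simp at hi
          · rw [Function.update_of_ne hia] at hi
            rcases Finset.mem_insert.mp (hε i hi) with h | h
            · exact absurd h hia
            · exact h)

lemma twist_mem (ε : Fin k → Bool) : mkw 1 ε ∈ basePairSwaps k :=
  twist_mem_aux Finset.univ ε fun i _ => Finset.mem_univ i

lemma mkw_mem_coset {G : Subgroup (Equiv.Perm (Option (Fin k × Bool)))}
    (hB : basePairSwaps k ≤ G) {σ : Equiv.Perm (Fin k)} {ε : Fin k → Bool}
    (h : mkw σ ε ∈ G) (ε' : Fin k → Bool) : mkw σ ε' ∈ G := by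
  have : mkw σ ε * mkw 1 (fun i => xor (ε i) (ε' i)) = mkw σ ε' := by
    rw [mkw_mul, mul_one]
    congr 1
    funext i
    simp [← Bool.xor_assoc]
  rw [← this]
  exact mul_mem h (hB (twist_mem _))

section OrbitMachinery

variable {α : Type*}

lemma orbitRel_iff_sameCycle_s19 (e : Equiv.Perm α) (x y : α) :
    (MulAction.orbitRel (Subgroup.zpowers e) α) x y ↔ e.SameCycle y x := by
  rw [MulAction.orbitRel_apply, MulAction.mem_orbit_iff]
  constructor
  · rintro ⟨⟨g, hg⟩, h⟩
    obtain ⟨z, rfl⟩ := Subgroup.mem_zpowers_iff.mp hg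
    exact ⟨z, h⟩
  · rintro ⟨z, hz⟩
    exact ⟨⟨e ^ z, Subgroup.mem_zpowers_iff.mpr ⟨z, rfl⟩⟩, hz⟩

lemma quotient_mk_eq_iff (e : Equiv.Perm α) (x y : α) :
    (Quotient.mk'' x : MulAction.orbitRel.Quotient (Subgroup.zpowers e) α) = Quotient.mk'' y ↔
      e.SameCycle y x := by
  rw [Quotient.eq'']
  exact orbitRel_iff_sameCycle_s19 e x y

def optionCongrHom (α : Type*) : Equiv.Perm α →* Equiv.Perm (Option α) where
  toFun := Equiv.optionCongr
  map_one' := by apply Equiv.ext; rintro (_ | a) <;> simp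
  map_mul' := fun a b => by apply Equiv.ext; rintro (_ | x) <;> simp [Equiv.Perm.mul_apply]

lemma optionCongr_zpow (e : Equiv.Perm α) (z : ℤ) :
    e.optionCongr ^ z = (e ^ z).optionCongr := ((optionCongrHom α).map_zpow e z).symm

lemma optionCongr_zpow_none (e : Equiv.Perm α) (z : ℤ) :
    (e.optionCongr ^ z) none = none := by rw [optionCongr_zpow]; simp

lemma optionCongr_zpow_some (e : Equiv.Perm α) (z : ℤ) (a : α) :
    (e.optionCongr ^ z) (some a) = some ((e ^ z) a) := by rw [optionCongr_zpow]; simp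

lemma natCard_oq_optionCongr [Finite α] (e : Equiv.Perm α) :
    Nat.card (MulAction.orbitRel.Quotient (Subgroup.zpowers e.optionCongr) (Option α))
      = 1 + Nat.card (MulAction.orbitRel.Quotient (Subgroup.zpowers e) α) := by
  have wd : ∀ a b : Option α, (MulAction.orbitRel (Subgroup.zpowers e.optionCongr) (Option α)) a b →
      Option.map (Quotient.mk'' (s₁ := MulAction.orbitRel (Subgroup.zpowers e) α)) a =
        Option.map Quotient.mk'' b := by
    intro a b hab
    obtain ⟨z, hz⟩ := (orbitRel_iff_sameCycle_s19 _ a b).mp hab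
    rcases b with _ | y
    · rw [optionCongr_zpow_none] at hz; rw [← hz]
    · rw [optionCongr_zpow_some] at hz
      rw [← hz]
      simp only [Option.map_some]
      congr 1
      exact (quotient_mk_eq_iff e _ y).mpr ⟨z, rfl⟩
  let Φ : MulAction.orbitRel.Quotient (Subgroup.zpowers e.optionCongr) (Option α) →
      Option (MulAction.orbitRel.Quotient (Subgroup.zpowers e) α) :=
    Quotient.lift (fun a => Option.map Quotient.mk'' a) wd
  have hbij : Function.Bijective Φ := by
    constructor
    · intro x y
      refine Quotient.inductionOn₂' x y ?_
      rintro (_ | a) (_ | b) h <;> simp only [Φ, Quotient.lift_mk, Option.map_some,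
        Option.map_none] at h
      · rfl
      · exact absurd h (by simp)
      · exact absurd h (by simp)
      · have := Option.some.inj h
        obtain ⟨z, hz⟩ := (quotient_mk_eq_iff e a b).mp this
        apply Quotient.sound'
        refine (orbitRel_iff_sameCycle_s19 _ _ _).mpr ⟨z, ?_⟩
        rw [optionCongr_zpow_some, hz]
    · rintro (_ | q)
      · exact ⟨Quotient.mk'' none, rfl⟩
      · obtain ⟨a, rfl⟩ := Quotient.exists_rep q
        exact ⟨Quotient.mk'' (some a), rfl⟩
  have : Nat.card (MulAction.orbitRel.Quotient (Subgroup.zpowers e.optionCongr) (Option α))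
      = Nat.card (Option (MulAction.orbitRel.Quotient (Subgroup.zpowers e) α)) :=
    Nat.card_congr (Equiv.ofBijective Φ hbij)
  rw [this]
  haveI : Fintype (MulAction.orbitRel.Quotient (Subgroup.zpowers e) α) := Fintype.ofFinite _
  rw [Nat.card_eq_fintype_card, Nat.card_eq_fintype_card, Fintype.card_option]
  omega

end OrbitMachinery

section Fiber

def b2 : Bool → ZMod 2 := fun b => if b then 1 else 0

lemma b2_xor (a b : Bool) : b2 (xor a b) = b2 a + b2 b := by cases a <;> cases b <;> decide

lemma b2_eq_zero_iff (a : Bool) : b2 a = 0 ↔ a = false := by cases a <;> decide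

lemma zmod2_cases (x : ZMod 2) : x = 0 ∨ x = 1 := by revert x; decide

variable (σ : Equiv.Perm (Fin k)) (ε : Fin k → Bool)

def psum (i : Fin k) (n : ℕ) : ZMod 2 := ∑ j ∈ Finset.range n, b2 (ε ((σ ^ j) i))

lemma psum_succ' (i : Fin k) (n : ℕ) :
    psum σ ε i (n + 1) = b2 (ε i) + psum σ ε (σ i) n := by
  rw [psum, Finset.sum_range_succ', psum]
  have : ∀ j, (σ ^ (j + 1)) i = (σ ^ j) (σ i) := fun j => by
    rw [pow_succ, Equiv.Perm.mul_apply]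
  simp only [this, pow_zero, Equiv.Perm.one_apply]
  ring

lemma lp_fst (n : ℕ) : ∀ (i : Fin k) (b : Bool),
    ((lpermAux σ ε ^ n) (i, b)).1 = (σ ^ n) i := by
  induction n with
  | zero => intro i b; simp
  | succ n ih =>
    intro i b
    have h1 : lpermAux σ ε ^ (n + 1) = lpermAux σ ε ^ n * lpermAux σ ε := pow_succ _ _
    have h2 : σ ^ (n + 1) = σ ^ n * σ := pow_succ _ _
    rw [h1, h2, Equiv.Perm.mul_apply, Equiv.Perm.mul_apply, lpermAux_apply]
    exact ih (σ i) _

lemma lp_snd (n : ℕ) : ∀ (i : Fin k) (b : Bool),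
    b2 (((lpermAux σ ε ^ n) (i, b)).2) = psum σ ε i n + b2 b := by
  induction n with
  | zero => intro i b; simp [psum]
  | succ n ih =>
    intro i b
    have h1 : lpermAux σ ε ^ (n + 1) = lpermAux σ ε ^ n * lpermAux σ ε := pow_succ _ _
    rw [h1, Equiv.Perm.mul_apply, lpermAux_apply, ih (σ i) _, b2_xor, psum_succ']
    ring

lemma lp_flip (n : ℕ) : ∀ (i : Fin k) (b : Bool),
    (lpermAux σ ε ^ n) (i, !b) = (((lpermAux σ ε ^ n) (i, b)).1, !((lpermAux σ ε ^ n) (i, b)).2) := by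
  induction n with
  | zero => intro i b; simp
  | succ n ih =>
    intro i b
    have h1 : lpermAux σ ε ^ (n + 1) = lpermAux σ ε ^ n * lpermAux σ ε := pow_succ _ _
    rw [h1, Equiv.Perm.mul_apply, Equiv.Perm.mul_apply, lpermAux_apply, lpermAux_apply,
      Bool.xor_not]
    exact ih (σ i) _

end Fiber

section Fiber2

variable {k : ℕ} (σ : Equiv.Perm (Fin k)) (ε : Fin k → Bool)

abbrev QS (σ : Equiv.Perm (Fin k)) := MulAction.orbitRel.Quotient (Subgroup.zpowers σ) (Fin k)
abbrev PQ (σ : Equiv.Perm (Fin k)) (ε : Fin k → Bool) :=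
  MulAction.orbitRel.Quotient (Subgroup.zpowers (lpermAux σ ε)) (Fin k × Bool)

def par (q : QS σ) : ZMod 2 := ∑ i ∈ Finset.univ.filter (· ∈ q.orbit), b2 (ε i)

variable (q : QS σ)

lemma d_pos : 0 < Function.minimalPeriod (⇑σ) q.out := by
  refine Function.minimalPeriod_pos_iff_mem_periodicPts.mpr ⟨orderOf σ, orderOf_pos σ, ?_⟩
  show (⇑σ)^[orderOf σ] q.out = q.out
  rw [Equiv.Perm.iterate_eq_pow, pow_orderOf_eq_one]
  rfl

lemma d_fix : (σ ^ Function.minimalPeriod (⇑σ) q.out) q.out = q.out := by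
  rw [← Equiv.Perm.iterate_eq_pow]
  exact Function.iterate_minimalPeriod

lemma orbit_out_iff (x : Fin k) :
    x ∈ MulAction.orbit (Subgroup.zpowers σ) q.out ↔
      ∃ j < Function.minimalPeriod (⇑σ) q.out, (σ ^ j) q.out = x := by
  set i₀ := q.out
  set d := Function.minimalPeriod (⇑σ) i₀ with hd
  constructor
  · intro hx
    have hsc : σ.SameCycle i₀ x := (orbitRel_iff_sameCycle_s19 σ x i₀).mp
      (MulAction.orbitRel_apply.mpr hx)
    obtain ⟨n, -, -, hn⟩ := hsc.exists_pow_eq σ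
    refine ⟨n % d, Nat.mod_lt _ (d_pos σ q), ?_⟩
    have hper : Function.IsPeriodicPt (⇑σ) (d * (n / d)) i₀ :=
      Function.IsPeriodicPt.mul_const (Function.isPeriodicPt_minimalPeriod (⇑σ) i₀) _
    calc (σ ^ (n % d)) i₀ = (⇑σ)^[n % d] ((⇑σ)^[d * (n / d)] i₀) := by
            rw [hper.eq, Equiv.Perm.iterate_eq_pow]
      _ = (⇑σ)^[n % d + d * (n / d)] i₀ := (Function.iterate_add_apply _ _ _ _).symm
      _ = (σ ^ n) i₀ := by rw [Nat.mod_add_div, Equiv.Perm.iterate_eq_pow]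
      _ = x := hn
  · rintro ⟨j, -, rfl⟩
    exact MulAction.mem_orbit_iff.mpr
      ⟨⟨σ ^ j, Subgroup.mem_zpowers_iff.mpr ⟨(j : ℤ), zpow_natCast σ j⟩⟩, rfl⟩

lemma par_eq_psum : par σ ε q = psum σ ε q.out (Function.minimalPeriod (⇑σ) q.out) := by
  set i₀ := q.out
  set d := Function.minimalPeriod (⇑σ) i₀
  have horb : q.orbit = MulAction.orbit (Subgroup.zpowers σ) i₀ := by
    conv_lhs => rw [← Quotient.out_eq' q]
    exact MulAction.orbitRel.Quotient.orbit_mk i₀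
  rw [par, psum]
  refine (Finset.sum_bij (fun j _ => (σ ^ j) i₀) ?_ ?_ ?_ ?_).symm
  · intro j hj
    rw [Finset.mem_filter]
    exact ⟨Finset.mem_univ _, by
      rw [horb]
      exact (orbit_out_iff σ q _).mpr ⟨j, Finset.mem_range.mp hj, rfl⟩⟩
  · intro j hj j' hj' hjj'
    refine Function.iterate_injOn_Iio_minimalPeriod (f := ⇑σ) (x := i₀)
      (Set.mem_Iio.mpr (Finset.mem_range.mp hj)) (Set.mem_Iio.mpr (Finset.mem_range.mp hj')) ?_
    show (⇑σ)^[j] i₀ = (⇑σ)^[j'] i₀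
    rw [Equiv.Perm.iterate_eq_pow, Equiv.Perm.iterate_eq_pow]
    exact hjj'
  · intro x hx
    rw [Finset.mem_filter, horb] at hx
    obtain ⟨j, hj, hjx⟩ := (orbit_out_iff σ q x).mp hx.2
    exact ⟨j, Finset.mem_range.mpr hj, hjx⟩
  · intro j hj
    rfl

lemma class_eq_iff :
    (Quotient.mk'' (q.out, false) : PQ σ ε) = Quotient.mk'' (q.out, true) ↔ par σ ε q = 1 := by
  set i₀ := q.out
  set d := Function.minimalPeriod (⇑σ) i₀ with hd
  rw [quotient_mk_eq_iff]
  constructor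
  · intro hsc
    obtain ⟨n, -, -, hn⟩ := hsc.exists_pow_eq (lpermAux σ ε)
    have hfst : (σ ^ n) i₀ = i₀ := by
      have := congrArg Prod.fst hn
      rwa [lp_fst] at this
    have hdvd : d ∣ n := by
      refine Function.IsPeriodicPt.minimalPeriod_dvd ?_
      show (⇑σ)^[n] i₀ = i₀
      rwa [Equiv.Perm.iterate_eq_pow]
    obtain ⟨m, rfl⟩ := hdvd
    have hsnd : psum σ ε i₀ (d * m) + b2 true = 0 := by
      rw [← lp_snd, hn]
      rfl
    have hfix : ∀ m', (σ ^ (d * m')) i₀ = i₀ := by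
      intro m'
      have : Function.IsPeriodicPt (⇑σ) (d * m') i₀ :=
        Function.IsPeriodicPt.mul_const (Function.isPeriodicPt_minimalPeriod (⇑σ) i₀) _
      rw [← Equiv.Perm.iterate_eq_pow]
      exact this.eq
    have hadd : ∀ a b : ℕ, (σ ^ a) i₀ = i₀ → psum σ ε i₀ (a + b) = psum σ ε i₀ a + psum σ ε i₀ b := by
      intro a b hfa
      induction b with
      | zero => simp [psum]
      | succ b ih =>
        have h1 : psum σ ε i₀ (a + (b + 1)) = psum σ ε i₀ (a + b) + b2 (ε ((σ ^ (a + b)) i₀)) := by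
          rw [psum, psum, ← Nat.add_assoc, Finset.sum_range_succ]
        have h2 : psum σ ε i₀ (b + 1) = psum σ ε i₀ b + b2 (ε ((σ ^ b) i₀)) := by
          rw [psum, psum, Finset.sum_range_succ]
        have h3 : (σ ^ (a + b)) i₀ = (σ ^ b) i₀ := by
          rw [Nat.add_comm, pow_add, Equiv.Perm.mul_apply, hfa]
        rw [h1, ih, h2, h3]
        ring
    have hmul : ∀ m', psum σ ε i₀ (d * m') = (m' : ZMod 2) * psum σ ε i₀ d := by
      intro m'
      induction m' with
      | zero => simp [psum]
      | succ m' ih =>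
        rw [Nat.mul_succ, hadd _ _ (hfix m'), ih]
        push_cast
        ring
    rw [hmul] at hsnd
    rw [par_eq_psum]
    rcases zmod2_cases (psum σ ε i₀ d) with h0 | h1
    · rw [h0] at hsnd
      simp [b2] at hsnd
    · exact h1
  · intro hpar
    rw [par_eq_psum] at hpar
    refine ⟨(d : ℤ), ?_⟩
    rw [zpow_natCast]
    have hfst : ((lpermAux σ ε ^ d) (i₀, true)).1 = i₀ := by
      rw [lp_fst]
      exact d_fix σ q
    have hsnd : ((lpermAux σ ε ^ d) (i₀, true)).2 = false := by
      rw [← b2_eq_zero_iff, lp_snd, hpar]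
      decide
    exact Prod.ext hfst hsnd

def prQ : PQ σ ε → QS σ :=
  Quotient.lift (fun x : Fin k × Bool => (Quotient.mk'' x.1 : QS σ)) (by
    intro a b hab
    have hsc : (lpermAux σ ε).SameCycle b a := (orbitRel_iff_sameCycle_s19 _ a b).mp hab
    obtain ⟨n, -, -, hn⟩ := hsc.exists_pow_eq (lpermAux σ ε)
    refine (quotient_mk_eq_iff σ a.1 b.1).mpr ⟨(n : ℤ), ?_⟩
    rw [zpow_natCast]
    have := congrArg Prod.fst hn
    rw [lp_fst] at this
    exact this ▸ rfl)

@[simp] lemma prQ_mk (x : Fin k × Bool) :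
    prQ σ ε (Quotient.mk'' x) = Quotient.mk'' x.1 := rfl

lemma fiber_iff (x : PQ σ ε) :
    prQ σ ε x = q ↔
      x = Quotient.mk'' (q.out, false) ∨ x = Quotient.mk'' (q.out, true) := by
  set i₀ := q.out with hi₀
  induction x using Quotient.inductionOn' with
  | h y =>
    obtain ⟨i, b⟩ := y
    rw [prQ_mk]
    constructor
    · intro hx
      have hsc : σ.SameCycle i₀ i := by
        rw [← quotient_mk_eq_iff]
        rw [show (Quotient.mk'' i₀ : QS σ) = q from Quotient.out_eq' q]
        exact hx
      obtain ⟨n, -, -, hn⟩ := hsc.exists_pow_eq σ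
      set c := ((lpermAux σ ε ^ n) (i₀, false)).2 with hc
      have h1 : (lpermAux σ ε ^ n) (i₀, false) = (i, c) := by
        refine Prod.ext ?_ hc.symm
        rw [lp_fst]
        exact hn
      clear_value c
      by_cases hbc : b = c
      · left
        rw [hbc]
        exact (quotient_mk_eq_iff (lpermAux σ ε) (i, c) (i₀, false)).mpr
          ⟨(n : ℤ), by rw [zpow_natCast, h1]⟩
      · right
        have hb : b = !c := by revert hbc; cases b <;> cases c <;> decide
        rw [hb]
        refine (quotient_mk_eq_iff (lpermAux σ ε) (i, !c) (i₀, true)).mpr ⟨(n : ℤ), ?_⟩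
        rw [zpow_natCast]
        have hf := lp_flip σ ε n i₀ false
        rw [h1] at hf
        simpa using hf
    · rintro (hx | hx) <;>
      · have h2 := congrArg (prQ σ ε) hx
        rw [prQ_mk, prQ_mk] at h2
        rw [h2]
        exact Quotient.out_eq' q
end Fiber2

section Fiber3

variable {k : ℕ} (σ : Equiv.Perm (Fin k)) (ε : Fin k → Bool)

lemma fiber_card (q : QS σ) :
    (Finset.univ.filter (fun x : PQ σ ε => prQ σ ε x = q)).card
      = if par σ ε q = 0 then 2 else 1 := by
  have hset : Finset.univ.filter (fun x : PQ σ ε => prQ σ ε x = q)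
      = {Quotient.mk'' (q.out, false), Quotient.mk'' (q.out, true)} := by
    ext x
    simp only [Finset.mem_filter, Finset.mem_univ, true_and, Finset.mem_insert,
      Finset.mem_singleton]
    exact fiber_iff σ ε q x
  rw [hset]
  rcases zmod2_cases (par σ ε q) with h0 | h1
  · rw [if_pos h0]
    refine Finset.card_pair ?_
    intro he
    rw [(class_eq_iff σ ε q).mp he] at h0
    exact absurd h0 (by decide)
  · rw [if_neg (by rw [h1]; decide), (class_eq_iff σ ε q).mpr h1]
    simp

lemma card_PQ :
    Nat.card (PQ σ ε) = ∑ q : QS σ, (if par σ ε q = 0 then 2 else 1) := by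
  rw [Nat.card_eq_fintype_card, ← Finset.card_univ,
    Finset.card_eq_sum_card_fiberwise (f := prQ σ ε) (t := Finset.univ)
      (fun x _ => Finset.mem_univ _)]
  exact Finset.sum_congr rfl fun q _ => fiber_card σ ε q

lemma card_PQ' :
    Nat.card (PQ σ ε) =
      Fintype.card (QS σ) + (Finset.univ.filter (fun q : QS σ => par σ ε q = 0)).card := by
  rw [card_PQ]
  have h1 : ∀ q : QS σ, (if par σ ε q = 0 then 2 else 1)
      = 1 + (if par σ ε q = 0 then 1 else 0) := by
    intro q; split_ifs <;> rfl
  rw [Finset.sum_congr rfl fun q _ => h1 q, Finset.sum_add_distrib, Finset.sum_boole]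
  simp [Finset.card_univ]

lemma par_add (ε' : Fin k → Bool) (q : QS σ) :
    par σ (fun i => xor (ε i) (ε' i)) q = par σ ε q + par σ ε' q := by
  rw [par, par, par, ← Finset.sum_add_distrib]
  exact Finset.sum_congr rfl fun i _ => b2_xor _ _

lemma par_surj (p : QS σ → ZMod 2) : ∃ ε : Fin k → Bool, (fun q => par σ ε q) = p := by
  refine ⟨fun i => if p (Quotient.mk'' i) = 1 ∧ i = (Quotient.mk'' i : QS σ).out
    then true else false, funext fun q => ?_⟩
  have hmem : ∀ i : Fin k, i ∈ q.orbit → (Quotient.mk'' i : QS σ) = q := fun i hi =>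
    MulAction.orbitRel.Quotient.mem_orbit.mp hi
  have houtmem : q.out ∈ Finset.univ.filter (· ∈ q.orbit) := by
    rw [Finset.mem_filter]
    exact ⟨Finset.mem_univ _, MulAction.orbitRel.Quotient.mem_orbit.mpr (Quotient.out_eq' q)⟩
  rcases zmod2_cases (p q) with h0 | h1
  · rw [par, h0]
    refine Finset.sum_eq_zero fun i hi => ?_
    rw [Finset.mem_filter] at hi
    rw [if_neg, b2]
    · rfl
    · rintro ⟨hp1, -⟩
      rw [hmem i hi.2, h0] at hp1
      exact absurd hp1 (by decide)
  · rw [par, h1]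
    have : ∀ i ∈ Finset.univ.filter (· ∈ q.orbit),
        b2 (if p (Quotient.mk'' i) = 1 ∧ i = (Quotient.mk'' i : QS σ).out then true else false)
          = if i = q.out then 1 else 0 := by
      intro i hi
      rw [Finset.mem_filter] at hi
      rw [hmem i hi.2]
      by_cases hout : i = q.out
      · rw [if_pos ⟨h1, hout⟩, if_pos hout]; rfl
      · rw [if_neg (fun h => hout h.2), if_neg hout]; rfl
    rw [Finset.sum_congr rfl this, Finset.sum_ite_eq' _ q.out, if_pos houtmem]

lemma fibers_card_eq (p p' : QS σ → ZMod 2) :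
    (Finset.univ.filter (fun ε : Fin k → Bool => (fun q => par σ ε q) = p)).card
      = (Finset.univ.filter (fun ε : Fin k → Bool => (fun q => par σ ε q) = p')).card := by
  obtain ⟨ε₀, hε₀⟩ := par_surj σ (p + p')
  have h2 : ∀ x : ZMod 2, x + x = 0 := by decide
  have key : ∀ (r r' : QS σ → ZMod 2) (ε₁ : Fin k → Bool), (fun q => par σ ε₁ q) = r →
      (fun q => par σ (fun i => xor (ε₁ i) (ε₀ i)) q) = r + (p + p') := by
    intro r r' ε₁ h
    funext q
    rw [par_add]
    show par σ ε₁ q + par σ ε₀ q = r q + (p + p') q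
    exact congrArg₂ (· + ·) (congrFun h q) (congrFun hε₀ q)
  refine Finset.card_bij' (fun ε₁ _ => fun i => xor (ε₁ i) (ε₀ i))
    (fun ε₁ _ => fun i => xor (ε₁ i) (ε₀ i)) ?_ ?_ ?_ ?_
  · intro ε₁ h
    rw [Finset.mem_filter] at h ⊢
    refine ⟨Finset.mem_univ _, ?_⟩
    rw [key p p ε₁ h.2]
    funext q
    show p q + (p q + p' q) = p' q
    rw [← add_assoc, h2, zero_add]
  · intro ε₁ h
    rw [Finset.mem_filter] at h ⊢
    refine ⟨Finset.mem_univ _, ?_⟩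
    rw [key p' p' ε₁ h.2]
    funext q
    show p' q + (p q + p' q) = p q
    rw [add_comm (p q) (p' q), ← add_assoc, h2, zero_add]
  · intro ε₁ _
    funext i
    simp [← Bool.xor_assoc]
  · intro ε₁ _
    funext i
    simp [← Bool.xor_assoc]

lemma sum_comp_par (f : (QS σ → ZMod 2) → ℤ) :
    ∑ ε : Fin k → Bool, f (fun q => par σ ε q)
      = ∑ p : QS σ → ZMod 2,
          (Finset.univ.filter (fun ε : Fin k → Bool => (fun q => par σ ε q) = 0)).card • f p := by
  rw [Finset.sum_comp (f := f) (g := fun ε : Fin k → Bool => (fun q => par σ ε q))]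
  have himg : Finset.image (fun ε : Fin k → Bool => (fun q => par σ ε q)) Finset.univ
      = Finset.univ := by
    refine Finset.eq_univ_of_forall fun p => ?_
    obtain ⟨ε, hε⟩ := par_surj σ p
    exact Finset.mem_image.mpr ⟨ε, Finset.mem_univ _, hε⟩
  rw [himg]
  exact Finset.sum_congr rfl fun p _ => by rw [fibers_card_eq σ p 0]

lemma sum_over_p (u : ℤ) :
    ∑ p : QS σ → ZMod 2, u ^ (Finset.univ.filter (fun q => p q = 0)).card
      = (u + 1) ^ Fintype.card (QS σ) := by
  have := Finset.prod_add (fun _ : QS σ => u) (fun _ => (1 : ℤ)) Finset.univ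
  rw [Finset.prod_const, Finset.card_univ] at this
  rw [this]
  refine Finset.sum_nbij' (fun p => Finset.univ.filter (fun q => p q = 0))
    (fun S => fun q => if q ∈ S then 0 else 1) ?_ ?_ ?_ ?_ ?_
  · intro p _
    exact Finset.mem_powerset.mpr (Finset.filter_subset _ _)
  · intro S _
    exact Finset.mem_univ _
  · intro p _
    funext q
    show (if q ∈ Finset.univ.filter (fun q => p q = 0) then (0 : ZMod 2) else 1) = p q
    by_cases h : p q = 0
    · rw [if_pos, h]
      exact Finset.mem_filter.mpr ⟨Finset.mem_univ _, h⟩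
    · rw [if_neg]
      · rcases zmod2_cases (p q) with h0 | h1
        · exact absurd h0 h
        · exact h1.symm
      · intro hm
        exact h (Finset.mem_filter.mp hm).2
  · intro S _
    ext q
    rw [Finset.mem_filter]
    constructor
    · rintro ⟨-, hq⟩
      have hq2 : (if q ∈ S then (0 : ZMod 2) else 1) = 0 := hq
      by_contra hq'
      rw [if_neg hq'] at hq2
      exact absurd hq2 (by decide)
    · intro hq
      refine ⟨Finset.mem_univ _, ?_⟩
      show (if q ∈ S then (0 : ZMod 2) else 1) = 0
      exact if_pos hq
  · intro p _
    congr 1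
    rw [Finset.prod_const_one, mul_one, Finset.prod_const]

end Fiber3

section GenSum

variable {k : ℕ} (σ : Equiv.Perm (Fin k))

lemma sum_pow_card (w : ℤ) :
    ∑ ε : Fin k → Bool, w ^ Nat.card (PQ σ ε)
      = (Finset.univ.filter (fun ε : Fin k → Bool => (fun q => par σ ε q) = 0)).card
        • ((w * (w + 1)) ^ Fintype.card (QS σ)) := by
  have h1 : ∀ ε : Fin k → Bool, w ^ Nat.card (PQ σ ε)
      = (fun p : QS σ → ZMod 2 => w ^ (Fintype.card (QS σ)
          + (Finset.univ.filter (fun q => p q = 0)).card)) (fun q => par σ ε q) := by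
    intro ε
    rw [card_PQ']
  rw [Finset.sum_congr rfl fun ε _ => h1 ε,
    sum_comp_par σ (fun p => w ^ (Fintype.card (QS σ)
      + (Finset.univ.filter (fun q => p q = 0)).card)), ← Finset.smul_sum]
  congr 1
  have : ∀ p : QS σ → ZMod 2, w ^ (Fintype.card (QS σ)
      + (Finset.univ.filter (fun q => p q = 0)).card)
      = w ^ Fintype.card (QS σ) * w ^ (Finset.univ.filter (fun q => p q = 0)).card :=
    fun p => pow_add w _ _
  rw [Finset.sum_congr rfl fun p _ => this p, ← Finset.mul_sum, sum_over_p, mul_pow]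

lemma gen_sum (u v : ℤ) (h : u * (u + 1) = v * (v + 1)) :
    ∑ ε : Fin k → Bool, u ^ Nat.card (PQ σ ε)
      = ∑ ε : Fin k → Bool, v ^ Nat.card (PQ σ ε) := by
  rw [sum_pow_card, sum_pow_card, h]

end GenSum

lemma sum_univ_eq_sum_univ {β M : Type*} [AddCommMonoid M] {i1 i2 : Fintype β} (f : β → M) :
    @Finset.sum β M _ (@Finset.univ β i1) f = @Finset.sum β M _ (@Finset.univ β i2) f :=
  congrArg (fun i : Fintype β => @Finset.sum β M _ (@Finset.univ β i) f)
    (Subsingleton.elim i1 i2)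

section Reindex

variable {k : ℕ} {G : Subgroup (Equiv.Perm (Option (Fin k × Bool)))}

def Kset (G : Subgroup (Equiv.Perm (Option (Fin k × Bool)))) : Set (Equiv.Perm (Fin k)) :=
  {σ | mkw σ (fun _ => false) ∈ G}

variable (hB : basePairSwaps k ≤ G) (hW : G ≤ wreathC2Sk k)

noncomputable def sigOf (g : G) : Equiv.Perm (Fin k) :=
  (exists_mkw_of_mem_wreath (hW g.2)).choose

noncomputable def epsOf (g : G) : Fin k → Bool :=
  (exists_mkw_of_mem_wreath (hW g.2)).choose_spec.choose

lemma mkw_sig_eps (g : G) : (g : Equiv.Perm (Option (Fin k × Bool))) = mkw (sigOf hW g) (epsOf hW g) :=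
  (exists_mkw_of_mem_wreath (hW g.2)).choose_spec.choose_spec

noncomputable def gEquiv : G ≃ (Kset G) × (Fin k → Bool) where
  toFun g := (⟨sigOf hW g, by
      have h1 := mkw_sig_eps hW g
      have h2 : mkw (sigOf hW g) (epsOf hW g) ∈ G := h1 ▸ g.2
      exact mkw_mem_coset hB h2 _⟩, epsOf hW g)
  invFun x := ⟨mkw x.1.1 x.2, mkw_mem_coset hB x.1.2 x.2⟩
  left_inv g := Subtype.ext (mkw_sig_eps hW g).symm
  right_inv x := by
    obtain ⟨⟨σ, hσ⟩, ε⟩ := x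
    have h1 := mkw_sig_eps hW ⟨mkw σ ε, mkw_mem_coset hB hσ ε⟩
    obtain ⟨h2, h3⟩ := mkw_inj h1.symm
    exact Prod.ext (Subtype.ext h2) h3

lemma reindex (hB : basePairSwaps k ≤ G) (hW : G ≤ wreathC2Sk k)
    {M : Type*} [AddCommMonoid M] (T : Equiv.Perm (Option (Fin k × Bool)) → M) :
    ∑ g : G, T g = ∑ x : (Kset G) × (Fin k → Bool), T (mkw x.1.1 x.2) := by
  rw [← Equiv.sum_comp (gEquiv hB hW).symm (fun g : G => T g)]
  rfl

lemma reindex' (hB : basePairSwaps k ≤ G) (hW : G ≤ wreathC2Sk k)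
    {M : Type*} [AddCommMonoid M] {i : Fintype ↥G} (T : Equiv.Perm (Option (Fin k × Bool)) → M) :
    @Finset.sum ↥G M _ (@Finset.univ ↥G i) (fun g => T ↑g)
      = ∑ x : (Kset G) × (Fin k → Bool), T (mkw x.1.1 x.2) :=
  (sum_univ_eq_sum_univ (fun g : ↥G => T (g : Equiv.Perm (Option (Fin k × Bool))))).trans
    (reindex hB hW T)

end Reindex


section Count

variable {k : ℕ} (σ : Equiv.Perm (Fin k)) (ε : Fin k → Bool)

lemma cycleCount_mkw : cycleCount (mkw σ ε) = 1 + Nat.card (PQ σ ε) :=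
  natCard_oq_optionCongr (lpermAux σ ε)

lemma const_pow {α β : Type*} [Fintype α] (e : Equiv.Perm α) (h : α → β)
    (hinv : ∀ x, h (e x) = h x) : ∀ (n : ℕ) (x : α), h ((e ^ n) x) = h x := by
  intro n
  induction n with
  | zero => intro x; simp
  | succ n ih =>
    intro x
    rw [pow_succ, Equiv.Perm.mul_apply, ih (e x), hinv]

lemma const_on_cycle {α β : Type*} [Fintype α] (e : Equiv.Perm α) (h : α → β)
    (hinv : ∀ x, h (e x) = h x) (x y : α) (hsc : e.SameCycle x y) : h y = h x := by
  classical
  obtain ⟨n, -, -, hn⟩ := hsc.exists_pow_eq e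
  rw [← hn, const_pow e h hinv]

lemma fixed_count (a : ℕ) :
    fixedProperColorings (starGraph k) (mkw σ ε) a = a * (a - 1) ^ Nat.card (PQ σ ε) := by
  have hwd : ∀ f : {f : Option (Fin k × Bool) → Fin a //
      (∀ v w, (starGraph k).Adj v w → f v ≠ f w) ∧ ∀ v, f (mkw σ ε v) = f v},
      ∀ x y : Fin k × Bool,
        (MulAction.orbitRel (Subgroup.zpowers (lpermAux σ ε)) (Fin k × Bool)) x y →
        f.1 (some x) = f.1 (some y) := by
    intro f x y hxy
    have hsc : (lpermAux σ ε).SameCycle y x := (orbitRel_iff_sameCycle_s19 _ x y).mp hxy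
    have hinv : ∀ x : Fin k × Bool, f.1 (some (lpermAux σ ε x)) = f.1 (some x) :=
      fun x => f.2.2 (some x)
    exact const_on_cycle (lpermAux σ ε) (fun x => f.1 (some x)) hinv y x hsc
  have hne : ∀ f : {f : Option (Fin k × Bool) → Fin a //
      (∀ v w, (starGraph k).Adj v w → f v ≠ f w) ∧ ∀ v, f (mkw σ ε v) = f v},
      ∀ x : Fin k × Bool, f.1 (some x) ≠ f.1 none := by
    intro f x
    refine f.2.1 (some x) none ?_
    show ¬ (_ ↔ _)
    intro hiff
    exact Option.some_ne_none x (hiff.mpr rfl)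
  let E : {f : Option (Fin k × Bool) → Fin a //
      (∀ v w, (starGraph k).Adj v w → f v ≠ f w) ∧ ∀ v, f (mkw σ ε v) = f v} ≃
      ((_c : Fin a) × (PQ σ ε → {y : Fin a // y ≠ _c})) :=
    { toFun := fun f =>
        ⟨f.1 none, fun qq => ⟨Quotient.lift (fun x : Fin k × Bool => f.1 (some x))
            (hwd f) qq, by
          induction qq using Quotient.inductionOn' with
          | h x => exact hne f x⟩⟩
      invFun := fun cf =>
        ⟨fun v => match v with
          | none => cf.1
          | some x => (cf.2 (Quotient.mk'' x)).1,
         by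
          intro v w hadj
          match v, w with
          | none, none => exact absurd (Iff.rfl) (show ¬ ((none : Option (Fin k × Bool)) = none ↔ (none : Option (Fin k × Bool)) = none) from hadj)
          | some x, none => exact (cf.2 (Quotient.mk'' x)).2
          | none, some x => exact Ne.symm (cf.2 (Quotient.mk'' x)).2
          | some x, some y =>
            exact absurd (iff_of_false (Option.some_ne_none x) (Option.some_ne_none y)) (show ¬ (some x = none ↔ some y = none) from hadj),
         by
          rintro (_ | x)
          · rfl
          · show (cf.2 (Quotient.mk'' (lpermAux σ ε x))).1 = (cf.2 (Quotient.mk'' x)).1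
            have hq : (Quotient.mk'' ((lpermAux σ ε) x) : PQ σ ε) = Quotient.mk'' x :=
              (quotient_mk_eq_iff (lpermAux σ ε) _ _).mpr ⟨1, by rw [zpow_one]⟩
            rw [hq]⟩
      left_inv := by
        intro f
        refine Subtype.ext ?_
        funext v
        match v with
        | none => rfl
        | some x => rfl
      right_inv := by
        rintro ⟨c, F⟩
        refine Sigma.ext rfl (heq_of_eq ?_)
        funext qq
        induction qq using Quotient.inductionOn' with
        | h x => exact Subtype.ext rfl }
  rw [fixedProperColorings, Nat.card_congr E]
  haveI : Fintype (PQ σ ε) := Fintype.ofFinite _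
  rw [Nat.card_eq_fintype_card, Fintype.card_sigma]
  have hc : ∀ c : Fin a, Fintype.card (PQ σ ε → {y : Fin a // y ≠ c}) = (a - 1) ^ Fintype.card (PQ σ ε) := by
    intro c
    rw [Fintype.card_fun]
    congr 1
    have h1 : Fintype.card {y : Fin a // y ≠ c} = Fintype.card {y : Fin a // ¬ y = c} := rfl
    rw [h1, Fintype.card_subtype_compl, Fintype.card_subtype_eq, Fintype.card_fin]
  rw [Finset.sum_congr rfl fun c _ => hc c, Finset.sum_const, Finset.card_univ,
    Fintype.card_fin, smul_eq_mul, Nat.card_eq_fintype_card]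

end Count


lemma cyclePoly_eval {Ω : Type*} [Fintype Ω] (G : Subgroup (Equiv.Perm Ω)) (y : ℤ) :
    (cyclePoly G).eval y = ∑ g : G, y ^ cycleCount (g : Equiv.Perm Ω) := by
  rw [cyclePoly, Polynomial.eval_finset_sum]
  simp


lemma cast_fix (a l : ℕ) : ((a * (a - 1) ^ l : ℕ) : ℤ) = a * ((a : ℤ) - 1) ^ l := by
  cases a with
  | zero => simp
  | succ a =>
    push_cast [Nat.succ_sub_one]
    ring


set_option maxHeartbeats 1000000 in
theorem star_reciprocal (k : ℕ)
    (G : Subgroup (Equiv.Perm (Option (Fin k × Bool))))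
    (hB : basePairSwaps k ≤ G) (hW : G ≤ wreathC2Sk k)
    (p : Polynomial ℤ) (hp : IsOrbitalChromaticPoly (starGraph k) G p) :
    p = (-1) ^ (2 * k + 1) * (cyclePoly G).comp (-X) ∧
    (X - 1) * p = X * (cyclePoly G).comp (X - 1) ∧
    X * ((cyclePoly G).comp (X - 1) + (cyclePoly G).comp (-X)) =
      (cyclePoly G).comp (-X) := by
  classical
  have hFe : ∀ y : ℤ, (cyclePoly G).eval y
      = ∑ x : (Kset G) × (Fin k → Bool), y ^ (1 + Nat.card (PQ x.1.1 x.2)) := by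
    intro y
    refine (cyclePoly_eval G y).trans ?_
    refine (reindex' hB hW (fun h => y ^ cycleCount h)).trans ?_
    exact Finset.sum_congr rfl fun x _ => by rw [cycleCount_mkw]
  have hpe : ∀ a : ℕ, p.eval (a : ℤ)
      = ∑ x : (Kset G) × (Fin k → Bool), (a : ℤ) * ((a : ℤ) - 1) ^ Nat.card (PQ x.1.1 x.2) := by
    intro a
    refine (hp a).trans ?_
    refine (reindex' hB hW (fun h => (fixedProperColorings (starGraph k) h a : ℤ))).trans ?_
    exact Finset.sum_congr rfl fun x _ => by rw [fixed_count, cast_fix]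
  have crux : ∀ a : ℕ,
      (∑ x : (Kset G) × (Fin k → Bool), ((a : ℤ) - 1) ^ Nat.card (PQ x.1.1 x.2))
        = ∑ x : (Kset G) × (Fin k → Bool), (-(a : ℤ)) ^ Nat.card (PQ x.1.1 x.2) := by
    intro a
    rw [Fintype.sum_prod_type, Fintype.sum_prod_type]
    exact Finset.sum_congr rfl fun s _ => gen_sum s.1 _ _ (by ring)
  have hInf : ∀ f g : Polynomial ℤ, (∀ a : ℕ, f.eval (a : ℤ) = g.eval (a : ℤ)) → f = g := by
    intro f g h
    refine Polynomial.eq_of_infinite_eval_eq f g ?_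
    have hsub : Set.range ((↑) : ℕ → ℤ) ⊆ {x | f.eval x = g.eval x} := by
      rintro _ ⟨a, rfl⟩; exact h a
    exact Set.Infinite.mono hsub (Set.infinite_range_of_injective fun a b hab => by
      exact_mod_cast hab)
  have h2 : (X - 1) * p = X * (cyclePoly G).comp (X - 1) := by
    refine hInf _ _ fun a => ?_
    rw [eval_mul, eval_mul, eval_comp]
    simp only [eval_sub, eval_X, eval_one]
    rw [hpe a, hFe ((a : ℤ) - 1), Finset.mul_sum, Finset.mul_sum]
    exact Finset.sum_congr rfl fun x _ => by ring
  have h3 : X * ((cyclePoly G).comp (X - 1) + (cyclePoly G).comp (-X))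
      = (cyclePoly G).comp (-X) := by
    refine hInf _ _ fun a => ?_
    rw [eval_mul, eval_add, eval_comp, eval_comp]
    simp only [eval_sub, eval_X, eval_one, eval_neg]
    rw [hFe ((a : ℤ) - 1), hFe (-(a : ℤ))]
    have e1 : (∑ x : (Kset G) × (Fin k → Bool), ((a : ℤ) - 1) ^ (1 + Nat.card (PQ x.1.1 x.2)))
        = ((a : ℤ) - 1) * ∑ x : (Kset G) × (Fin k → Bool), ((a : ℤ) - 1) ^ Nat.card (PQ x.1.1 x.2) := by
      rw [Finset.mul_sum]
      exact Finset.sum_congr rfl fun x _ => by ring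
    have e2 : (∑ x : (Kset G) × (Fin k → Bool), (-(a : ℤ)) ^ (1 + Nat.card (PQ x.1.1 x.2)))
        = (-(a : ℤ)) * ∑ x : (Kset G) × (Fin k → Bool), (-(a : ℤ)) ^ Nat.card (PQ x.1.1 x.2) := by
      rw [Finset.mul_sum]
      exact Finset.sum_congr rfl fun x _ => by ring
    rw [e1, e2, crux a]
    ring
  refine ⟨?_, h2, h3⟩
  have hX1 : (X - 1 : Polynomial ℤ) ≠ 0 := by
    have := Polynomial.X_sub_C_ne_zero (R := ℤ) 1
    simpa using this
  have h4 : (X - 1) * p = (X - 1) * ((-1) ^ (2 * k + 1) * (cyclePoly G).comp (-X)) := by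
    rw [h2]
    have hodd : Odd (2 * k + 1) := ⟨k, by ring⟩
    rw [hodd.neg_one_pow]
    linear_combination h3
  exact mul_left_cancel₀ hX1 h4
end
end
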